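/- arXiv:1206.0319 — 8 statements merged into one kernel-verified Lean document; each statement's English description precedes it below -/
import Mathlib

section
/- (Putinar's Positivstellensatz.) Let h = (h_1,…,h_{m1}) and g = (g_1,…,g_{m2}) be real polynomials in x = (x_1,…,x_n), and let K = {x ∈ ℝⁿ : h_i(x) = 0 (i ≤ m1), g_j(x) ≥ 0 (j ≤ m2)}. Suppose ⟨h⟩ + Q(g) is archimedean. If p ∈ ℝ[x] satisfies p(x) > 0 for all x ∈ K, then p ∈ ⟨h⟩ + Q(g). -/
open MvPolynomial

noncomputable section

/-- A polynomial is a sum of squares (SOS). -/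
def IsSOS {n : ℕ} (p : MvPolynomial (Fin n) ℝ) : Prop :=
  ∃ (k : ℕ) (q : Fin k → MvPolynomial (Fin n) ℝ), p = ∑ i, q i ^ 2

/-- The quadratic module `Q(g)` generated by `g` (with `g₀ = 1`). -/
def QM {n m2 : ℕ} (g : Fin m2 → MvPolynomial (Fin n) ℝ) :
    Set (MvPolynomial (Fin n) ℝ) :=
  { p | ∃ (σ0 : MvPolynomial (Fin n) ℝ) (σ : Fin m2 → MvPolynomial (Fin n) ℝ),
      IsSOS σ0 ∧ (∀ j, IsSOS (σ j)) ∧ p = σ0 + ∑ j, σ j * g j }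

/-- The set `⟨h⟩ + Q(g)`. -/
def idealPlusQM {n m1 m2 : ℕ} (h : Fin m1 → MvPolynomial (Fin n) ℝ)
    (g : Fin m2 → MvPolynomial (Fin n) ℝ) : Set (MvPolynomial (Fin n) ℝ) :=
  { p | ∃ a ∈ Ideal.span (Set.range h), ∃ b ∈ QM g, p = a + b }

/-- `⟨h⟩ + Q(g)` is archimedean. -/
def ArchimedeanCond {n m1 m2 : ℕ} (h : Fin m1 → MvPolynomial (Fin n) ℝ)
    (g : Fin m2 → MvPolynomial (Fin n) ℝ) : Prop :=
  ∃ R : ℝ, 0 < R ∧ (C R - ∑ i : Fin n, X i ^ 2) ∈ idealPlusQM h g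

namespace PutinarAux

abbrev Poly (n : ℕ) := MvPolynomial (Fin n) ℝ

variable {n : ℕ}

/-! ### Basic SOS lemmas -/

theorem isSOS_zero : IsSOS (0 : Poly n) := ⟨0, ![], by simp⟩

theorem isSOS_sq (f : Poly n) : IsSOS (f ^ 2) := ⟨1, ![f], by simp⟩

theorem isSOS_one : IsSOS (1 : Poly n) := by simpa using isSOS_sq (1 : Poly n)

theorem isSOS_add {a b : Poly n} (ha : IsSOS a) (hb : IsSOS b) : IsSOS (a + b) := by
  obtain ⟨k, q, rfl⟩ := ha; obtain ⟨m, r, rfl⟩ := hb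
  refine ⟨k + m, Fin.append q r, ?_⟩
  rw [Fin.sum_univ_add]
  simp

theorem isSOS_sq_mul {a : Poly n} (ha : IsSOS a) (f : Poly n) : IsSOS (f ^ 2 * a) := by
  obtain ⟨k, q, rfl⟩ := ha
  refine ⟨k, fun i => f * q i, ?_⟩
  rw [Finset.mul_sum]
  exact Finset.sum_congr rfl fun i _ => by ring

theorem C_sqrt_sq {c : ℝ} (hc : 0 ≤ c) : (C (Real.sqrt c)) ^ 2 = (C c : Poly n) := by
  rw [← C_pow, Real.sq_sqrt hc]

theorem isSOS_const_mul {a : Poly n} (ha : IsSOS a) {c : ℝ} (hc : 0 ≤ c) :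
    IsSOS (C c * a) := by
  rw [← C_sqrt_sq hc]
  exact isSOS_sq_mul ha _

theorem isSOS_C {c : ℝ} (hc : 0 ≤ c) : IsSOS (C c : Poly n) := by
  simpa using isSOS_const_mul isSOS_one hc

/-! ### Quadratic modules -/

structure IsQM (S : Set (Poly n)) : Prop where
  add_mem : ∀ {a b}, a ∈ S → b ∈ S → a + b ∈ S
  sq_mul_mem : ∀ (f : Poly n) {a}, a ∈ S → f ^ 2 * a ∈ S
  one_mem : (1 : Poly n) ∈ S

namespace IsQM

variable {S : Set (Poly n)} (hS : IsQM S)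
include hS

theorem zero_mem : (0 : Poly n) ∈ S := by
  simpa using hS.sq_mul_mem 0 hS.one_mem

theorem sq_mem (f : Poly n) : f ^ 2 ∈ S := by
  simpa using hS.sq_mul_mem f hS.one_mem

theorem smul_mem {c : ℝ} (hc : 0 ≤ c) {a} (ha : a ∈ S) : C c * a ∈ S := by
  rw [← C_sqrt_sq hc]
  exact hS.sq_mul_mem _ ha

theorem C_mem {c : ℝ} (hc : 0 ≤ c) : (C c : Poly n) ∈ S := by
  simpa using hS.smul_mem hc hS.one_mem

theorem sum_mem {α : Type*} {t : Finset α} {f : α → Poly n} (hf : ∀ i ∈ t, f i ∈ S) :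
    ∑ i ∈ t, f i ∈ S :=
  Finset.sum_induction f (· ∈ S) (fun _ _ => hS.add_mem) hS.zero_mem hf

theorem sos_mul_mem {σ a : Poly n} (hσ : IsSOS σ) (ha : a ∈ S) : σ * a ∈ S := by
  obtain ⟨k, q, rfl⟩ := hσ
  rw [Finset.sum_mul]
  exact hS.sum_mem fun i _ => hS.sq_mul_mem (q i) ha

theorem sos_mem {σ : Poly n} (hσ : IsSOS σ) : σ ∈ S := by
  simpa using hS.sos_mul_mem hσ hS.one_mem

theorem neg_one_mem_of_negC {c : ℝ} (hc : c < 0) (h : (C c : Poly n) ∈ S) :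
    (-1 : Poly n) ∈ S := by
  have h2 := hS.smul_mem (c := -1 / c) (le_of_lt (div_pos_of_neg_of_neg (by norm_num) hc)) h
  rw [← C_mul] at h2
  have : -1 / c * c = -1 := div_mul_cancel₀ (-1 : ℝ) hc.ne
  rw [this] at h2
  simpa using h2

end IsQM

theorem C_cancel {c d : ℝ} (h : c * d = 1) : (C c : Poly n) * C d = 1 := by
  rw [← C_mul, h, C_1]

/-! ### The quadratic module `M = idealPlusQM h g` -/

variable {m1 m2 : ℕ} {h : Fin m1 → Poly n} {g : Fin m2 → Poly n}

theorem zero_mem_QM : (0 : Poly n) ∈ QM g :=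
  ⟨0, fun _ => 0, isSOS_zero, fun _ => isSOS_zero, by simp⟩

theorem isQM_M : IsQM (idealPlusQM h g) where
  add_mem := by
    rintro a b ⟨a1, ha1, b1, ⟨σ0, σ, hσ0, hσ, rfl⟩, rfl⟩ ⟨a2, ha2, b2, ⟨τ0, τ, hτ0, hτ, rfl⟩, rfl⟩
    refine ⟨a1 + a2, Ideal.add_mem _ ha1 ha2,
      (σ0 + τ0) + ∑ j, (σ j + τ j) * g j,
      ⟨σ0 + τ0, fun j => σ j + τ j, isSOS_add hσ0 hτ0, fun j => isSOS_add (hσ j) (hτ j), rfl⟩, ?_⟩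
    have hsum : ∑ j, (σ j + τ j) * g j = ∑ j, σ j * g j + ∑ j, τ j * g j := by
      rw [← Finset.sum_add_distrib]
      exact Finset.sum_congr rfl fun j _ => by ring
    rw [hsum]; ring
  sq_mul_mem := by
    rintro f a ⟨a1, ha1, b1, ⟨σ0, σ, hσ0, hσ, rfl⟩, rfl⟩
    refine ⟨f ^ 2 * a1, Ideal.mul_mem_left _ _ ha1,
      f ^ 2 * σ0 + ∑ j, (f ^ 2 * σ j) * g j,
      ⟨f ^ 2 * σ0, fun j => f ^ 2 * σ j, isSOS_sq_mul hσ0 f, fun j => isSOS_sq_mul (hσ j) f, rfl⟩, ?_⟩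
    have hsum : ∑ j, (f ^ 2 * σ j) * g j = f ^ 2 * ∑ j, σ j * g j := by
      rw [Finset.mul_sum]
      exact Finset.sum_congr rfl fun j _ => by ring
    rw [hsum]; ring
  one_mem :=
    ⟨0, Ideal.zero_mem _, 1, ⟨1, fun _ => 0, isSOS_one, fun _ => isSOS_zero, by simp⟩, by simp⟩

theorem ideal_subset_M {a : Poly n} (ha : a ∈ Ideal.span (Set.range h)) :
    a ∈ idealPlusQM h g :=
  ⟨a, ha, 0, zero_mem_QM, by simp⟩

theorem h_mem_M (i : Fin m1) : h i ∈ idealPlusQM h g :=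
  ideal_subset_M (Ideal.subset_span ⟨i, rfl⟩)

theorem neg_h_mem_M (i : Fin m1) : -h i ∈ idealPlusQM h g :=
  ideal_subset_M (Submodule.neg_mem _ (Ideal.subset_span ⟨i, rfl⟩))

theorem g_mem_M (j : Fin m2) : g j ∈ idealPlusQM h g := by
  classical
  refine ⟨0, Ideal.zero_mem _, g j,
    ⟨0, fun j' => if j' = j then 1 else 0, isSOS_zero,
     fun j' => by by_cases hjj : j' = j <;> simp [hjj, isSOS_one, isSOS_zero], ?_⟩, by simp⟩
  simp [ite_mul, Finset.sum_ite_eq']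

theorem eval_nonneg_of_mem {x : Fin n → ℝ} (hx1 : ∀ i, eval x (h i) = 0)
    (hx2 : ∀ j, 0 ≤ eval x (g j)) {f : Poly n} (hf : f ∈ idealPlusQM h g) :
    0 ≤ eval x f := by
  obtain ⟨a, ha, b, ⟨σ0, σ, hσ0, hσ, rfl⟩, rfl⟩ := hf
  have sos_nonneg : ∀ σ' : Poly n, IsSOS σ' → 0 ≤ eval x σ' := by
    rintro _ ⟨k, q, rfl⟩
    rw [map_sum]
    apply Finset.sum_nonneg
    intro i _
    rw [map_pow]
    positivity
  have hea : eval x a = 0 := by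
    induction ha using Submodule.span_induction with
    | mem y hy => obtain ⟨i, rfl⟩ := hy; exact hx1 i
    | zero => simp
    | add u v hu hv hu' hv' => rw [map_add, hu', hv', add_zero]
    | smul c u hu hu' => rw [smul_eq_mul, map_mul, hu', mul_zero]
  rw [map_add, map_add, hea, zero_add, map_sum]
  have : ∀ j : Fin m2, 0 ≤ eval x (σ j * g j) := by
    intro j
    rw [map_mul]
    exact mul_nonneg (sos_nonneg _ (hσ j)) (hx2 j)
  have hs : 0 ≤ ∑ j, eval x (σ j * g j) := Finset.sum_nonneg fun j _ => this j
  have h0 := sos_nonneg _ hσ0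
  linarith

/-! ### Archimedean bounds -/

section Bounds

variable {S : Set (Poly n)} (hS : IsQM S)
include hS

theorem sq_bound {N : ℝ} {f : Poly n} (hN : 0 < N) (h1 : C N - f ∈ S) (h2 : C N + f ∈ S) :
    C (N ^ 2) - f ^ 2 ∈ S := by
  have A := hS.sq_mul_mem (C N + f) h1
  have B := hS.sq_mul_mem (C N - f) h2
  have hsum := hS.add_mem A B
  have hmem := hS.smul_mem (c := 1 / (2 * N)) (by positivity) hsum
  have key : (C N + f) ^ 2 * (C N - f) + (C N - f) ^ 2 * (C N + f)
      = C (2 * N) * (C (N ^ 2) - f ^ 2) := by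
    rw [C_mul, C_pow]
    have : (C (2 : ℝ) : Poly n) = 2 := map_ofNat _ 2
    rw [this]; ring
  rw [key, ← mul_assoc, C_cancel (by field_simp), one_mul] at hmem
  exact hmem

theorem bound_X (harch : ∃ R : ℝ, 0 < R ∧ (C R - ∑ i : Fin n, X i ^ 2) ∈ S) (i : Fin n) :
    ∃ N : ℝ, 0 < N ∧ C N - X i ∈ S ∧ C N + X i ∈ S := by
  classical
  obtain ⟨R, hR, hRS⟩ := harch
  have hXi : C R - X i ^ 2 ∈ S := by
    have hrest : ∑ j ∈ Finset.univ.erase i, (X j : Poly n) ^ 2 ∈ S :=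
      hS.sum_mem fun j _ => hS.sq_mem _
    have hmem := hS.add_mem hRS hrest
    have hdec := Finset.add_sum_erase Finset.univ (fun j => (X j : Poly n) ^ 2)
      (Finset.mem_univ i)
    have : C R - ∑ j : Fin n, (X j : Poly n) ^ 2 + ∑ j ∈ Finset.univ.erase i, (X j : Poly n) ^ 2
        = C R - X i ^ 2 := by
      rw [← hdec]; ring
    rwa [this] at hmem
  have hc : (C (2:ℝ) : Poly n) * C ((R + 1) / 2) = C (R + 1) := by
    rw [← C_mul]; congr 1; ring
  refine ⟨(R + 1) / 2, by positivity, ?_, ?_⟩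
  · have hmem := hS.smul_mem (c := 1 / 2) (by norm_num) (hS.add_mem hXi (hS.sq_mem (X i - 1)))
    have key : C R - X i ^ 2 + (X i - 1) ^ 2 = C 2 * (C ((R + 1) / 2) - X i) := by
      have h2 : (C (2 : ℝ) : Poly n) = 2 := map_ofNat _ 2
      rw [mul_sub, hc, C_add, C_1, h2]; ring
    rw [key, ← mul_assoc, C_cancel (by norm_num), one_mul] at hmem
    exact hmem
  · have hmem := hS.smul_mem (c := 1 / 2) (by norm_num) (hS.add_mem hXi (hS.sq_mem (X i + 1)))
    have key : C R - X i ^ 2 + (X i + 1) ^ 2 = C 2 * (C ((R + 1) / 2) + X i) := by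
      have h2 : (C (2 : ℝ) : Poly n) = 2 := map_ofNat _ 2
      rw [mul_add, hc, C_add, C_1, h2]; ring
    rw [key, ← mul_assoc, C_cancel (by norm_num), one_mul] at hmem
    exact hmem

theorem bound_all (harch : ∃ R : ℝ, 0 < R ∧ (C R - ∑ i : Fin n, X i ^ 2) ∈ S)
    (f : Poly n) : ∃ N : ℝ, 0 < N ∧ C N - f ∈ S ∧ C N + f ∈ S := by
  induction f using MvPolynomial.induction_on with
  | C a =>
    refine ⟨|a| + 1, by positivity, ?_, ?_⟩
    · rw [← C_sub]
      exact hS.C_mem (by cases abs_cases a <;> linarith)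
    · rw [← C_add]
      exact hS.C_mem (by cases abs_cases a <;> linarith)
  | add p q hp hq =>
    obtain ⟨Np, hNp, hp1, hp2⟩ := hp
    obtain ⟨Nq, hNq, hq1, hq2⟩ := hq
    refine ⟨Np + Nq, by positivity, ?_, ?_⟩
    · have := hS.add_mem hp1 hq1
      have e : C Np - p + (C Nq - q) = C (Np + Nq) - (p + q) := by rw [C_add]; ring
      rwa [e] at this
    · have := hS.add_mem hp2 hq2
      have e : C Np + p + (C Nq + q) = C (Np + Nq) + (p + q) := by rw [C_add]; ring
      rwa [e] at this
  | mul_X p i hp =>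
    obtain ⟨Np, hNp, hp1, hp2⟩ := hp
    obtain ⟨Ni, hNi, hi1, hi2⟩ := bound_X hS harch i
    set N' := Np + Ni with hN'
    have hb1 : C N' - (p + X i) ∈ S := by
      have := hS.add_mem hp1 hi1
      have e : C Np - p + (C Ni - X i) = C N' - (p + X i) := by rw [hN', C_add]; ring
      rwa [e] at this
    have hb2 : C N' + (p + X i) ∈ S := by
      have := hS.add_mem hp2 hi2
      have e : C Np + p + (C Ni + X i) = C N' + (p + X i) := by rw [hN', C_add]; ring
      rwa [e] at this
    have hb3 : C N' - (p - X i) ∈ S := by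
      have := hS.add_mem hp1 hi2
      have e : C Np - p + (C Ni + X i) = C N' - (p - X i) := by rw [hN', C_add]; ring
      rwa [e] at this
    have hb4 : C N' + (p - X i) ∈ S := by
      have := hS.add_mem hp2 hi1
      have e : C Np + p + (C Ni - X i) = C N' + (p - X i) := by rw [hN', C_add]; ring
      rwa [e] at this
    have hN'pos : 0 < N' := by positivity
    have hsq1 : C (N' ^ 2) - (p + X i) ^ 2 ∈ S := sq_bound hS hN'pos hb1 hb2
    have hsq2 : C (N' ^ 2) - (p - X i) ^ 2 ∈ S := sq_bound hS hN'pos hb3 hb4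
    refine ⟨N' ^ 2 / 4, by positivity, ?_, ?_⟩
    · have hmem := hS.smul_mem (c := 1 / 4) (by norm_num)
        (hS.add_mem (hS.sq_mem (p - X i)) hsq1)
      have key : (p - X i) ^ 2 + (C (N' ^ 2) - (p + X i) ^ 2)
          = C 4 * (C (N' ^ 2 / 4) - p * X i) := by
        have h4 : (C (4 : ℝ) : Poly n) = 4 := map_ofNat _ 4
        have hc : (C (4 : ℝ) : Poly n) * C (N' ^ 2 / 4) = C (N' ^ 2) := by
          rw [← C_mul]; congr 1; ring
        rw [mul_sub, hc, h4]; ring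
      rw [key, ← mul_assoc, C_cancel (by norm_num), one_mul] at hmem
      exact hmem
    · have hmem := hS.smul_mem (c := 1 / 4) (by norm_num)
        (hS.add_mem (hS.sq_mem (p + X i)) hsq2)
      have key : (p + X i) ^ 2 + (C (N' ^ 2) - (p - X i) ^ 2)
          = C 4 * (C (N' ^ 2 / 4) + p * X i) := by
        have h4 : (C (4 : ℝ) : Poly n) = 4 := map_ofNat _ 4
        have hc : (C (4 : ℝ) : Poly n) * C (N' ^ 2 / 4) = C (N' ^ 2) := by
          rw [← C_mul]; congr 1; ring
        rw [mul_add, hc, h4]; ring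
      rw [key, ← mul_assoc, C_cancel (by norm_num), one_mul] at hmem
      exact hmem

end Bounds

/-! ### Adjoining an element to a quadratic module, Zorn, semiordering -/

def qmAdj (S : Set (Poly n)) (f : Poly n) : Set (Poly n) :=
  {x | ∃ a ∈ S, ∃ σ : Poly n, IsSOS σ ∧ x = a + σ * f}

theorem subset_qmAdj {S : Set (Poly n)} (f : Poly n) : S ⊆ qmAdj S f :=
  fun a ha => ⟨a, ha, 0, isSOS_zero, by ring⟩

theorem mem_qmAdj_self {S : Set (Poly n)} (hS : IsQM S) (f : Poly n) : f ∈ qmAdj S f :=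
  ⟨0, hS.zero_mem, 1, isSOS_one, by ring⟩

theorem isQM_qmAdj {S : Set (Poly n)} (hS : IsQM S) (f : Poly n) : IsQM (qmAdj S f) where
  add_mem := by
    rintro a b ⟨a1, ha1, σ1, hσ1, rfl⟩ ⟨a2, ha2, σ2, hσ2, rfl⟩
    exact ⟨a1 + a2, hS.add_mem ha1 ha2, σ1 + σ2, isSOS_add hσ1 hσ2, by ring⟩
  sq_mul_mem := by
    rintro q a ⟨a1, ha1, σ1, hσ1, rfl⟩
    exact ⟨q ^ 2 * a1, hS.sq_mul_mem q ha1, q ^ 2 * σ1, isSOS_sq_mul hσ1 q, by ring⟩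
  one_mem := ⟨1, hS.one_mem, 0, isSOS_zero, by ring⟩

theorem exists_maximal_qm {B : Set (Poly n)} (hB : IsQM B) (hproper : (-1 : Poly n) ∉ B) :
    ∃ Q : Set (Poly n), B ⊆ Q ∧ IsQM Q ∧ (-1 : Poly n) ∉ Q ∧
      ∀ T : Set (Poly n), IsQM T → (-1 : Poly n) ∉ T → Q ⊆ T → T = Q := by
  set F : Set (Set (Poly n)) := {T | IsQM T ∧ B ⊆ T ∧ (-1 : Poly n) ∉ T} with hF
  have hchain : ∀ c ⊆ F, IsChain (· ⊆ ·) c → c.Nonempty → ∃ ub ∈ F, ∀ s ∈ c, s ⊆ ub := by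
    intro c hcF hch hcne
    obtain ⟨s0, hs0⟩ := hcne
    refine ⟨⋃₀ c, ⟨?_, ?_, ?_⟩, fun s hs => Set.subset_sUnion_of_mem hs⟩
    · constructor
      · rintro a b ⟨s1, hs1, ha⟩ ⟨s2, hs2, hb⟩
        rcases hch.total hs1 hs2 with hsub | hsub
        · exact ⟨s2, hs2, (hcF hs2).1.add_mem (hsub ha) hb⟩
        · exact ⟨s1, hs1, (hcF hs1).1.add_mem ha (hsub hb)⟩
      · rintro q a ⟨s1, hs1, ha⟩
        exact ⟨s1, hs1, (hcF hs1).1.sq_mul_mem q ha⟩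
      · exact ⟨s0, hs0, (hcF hs0).1.one_mem⟩
    · exact fun a ha => ⟨s0, hs0, (hcF hs0).2.1 ha⟩
    · rintro ⟨s1, hs1, hmem⟩
      exact (hcF hs1).2.2 hmem
  obtain ⟨Q, hBQ, hmax⟩ := zorn_subset_nonempty F hchain B ⟨hB, subset_rfl, hproper⟩
  refine ⟨Q, hBQ, hmax.prop.1, hmax.prop.2.2, fun T hT hTp hQT => ?_⟩
  exact subset_antisymm (hmax.2 ⟨hT, hBQ.trans hQT, hTp⟩ hQT) hQT

theorem semi_of_maximal {Q : Set (Poly n)} (hQ : IsQM Q) (hproper : (-1 : Poly n) ∉ Q)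
    (hbnd : ∀ f : Poly n, ∃ N, 0 < N ∧ C N - f ∈ Q ∧ C N + f ∈ Q)
    (hmax : ∀ T : Set (Poly n), IsQM T → (-1 : Poly n) ∉ T → Q ⊆ T → T = Q) :
    ∀ f : Poly n, f ∈ Q ∨ -f ∈ Q := by
  intro f
  by_contra hcon
  push_neg at hcon
  obtain ⟨hf, hnf⟩ := hcon
  have key : ∀ f' : Poly n, f' ∉ Q → (-1 : Poly n) ∈ qmAdj Q f' := by
    intro f' hf'
    by_contra hne
    have := hmax (qmAdj Q f') (isQM_qmAdj hQ f') hne (subset_qmAdj f')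
    exact hf' (this ▸ mem_qmAdj_self hQ f')
  obtain ⟨a1, ha1, σ1, hσ1, heq1⟩ := key f hf
  obtain ⟨a2, ha2, σ2, hσ2, heq2⟩ := key (-f) hnf
  obtain ⟨N, hN, hNf, _⟩ := hbnd f
  have hkey : σ2 * a1 + σ1 * a2 = -(σ1 + σ2) := by
    linear_combination (-σ2) * heq1 + (-σ1) * heq2
  have hm : -(σ1 + σ2) ∈ Q := by
    rw [← hkey]
    exact hQ.add_mem (hQ.sos_mul_mem hσ2 ha1) (hQ.sos_mul_mem hσ1 ha2)
  set δ := 1 / (2 * N) with hδ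
  have hδpos : 0 < δ := by positivity
  have t1 : C δ - σ2 ∈ Q := by
    have hh := hQ.add_mem (hQ.add_mem (hQ.C_mem hδpos.le) hm) (hQ.sos_mem hσ1)
    have e : C δ + -(σ1 + σ2) + σ1 = C δ - σ2 := by ring
    rwa [e] at hh
  have t2 : σ2 * f - 1 ∈ Q := by
    have e : σ2 * f - 1 = a2 := by linear_combination heq2
    rw [e]; exact ha2
  have t3 : C N * σ2 - σ2 * f ∈ Q := by
    have hh := hQ.sos_mul_mem hσ2 hNf
    have e : σ2 * (C N - f) = C N * σ2 - σ2 * f := by ring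
    rwa [e] at hh
  have t4 : C (N * δ) - C N * σ2 ∈ Q := by
    have hh := hQ.smul_mem hN.le t1
    have e : C N * (C δ - σ2) = C (N * δ) - C N * σ2 := by rw [C_mul]; ring
    rwa [e] at hh
  have t5 : (C (N * δ - 1) : Poly n) ∈ Q := by
    have hh := hQ.add_mem (hQ.add_mem t2 t3) t4
    have e : σ2 * f - 1 + (C N * σ2 - σ2 * f) + (C (N * δ) - C N * σ2) = C (N * δ - 1) := by
      rw [C_sub, C_1]; ring
    rwa [e] at hh
  have hneg : N * δ - 1 < 0 := by
    have : N * δ = 1 / 2 := by rw [hδ]; field_simp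
    rw [this]; norm_num
  exact hproper (hQ.neg_one_mem_of_negC hneg t5)

/-! ### The character associated with a maximal proper archimedean quadratic module -/

theorem le_of_forall_eps {a b : ℝ} (key : ∀ ε : ℝ, 0 < ε → a ≤ b + ε) : a ≤ b := by
  by_contra hlt
  push_neg at hlt
  have := key ((a - b) / 2) (by linarith)
  linarith

structure GoodQM (n : ℕ) where
  Q : Set (Poly n)
  isQM : IsQM Q
  proper : (-1 : Poly n) ∉ Q
  semi : ∀ f : Poly n, f ∈ Q ∨ -f ∈ Q
  bnd : ∀ f : Poly n, ∃ N, 0 < N ∧ C N - f ∈ Q ∧ C N + f ∈ Q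

namespace GoodQM

variable (D : GoodQM n)

def SS (f : Poly n) : Set ℝ := {c | C c - f ∈ D.Q}

def al (f : Poly n) : ℝ := sInf (D.SS f)

theorem C_notmem {c : ℝ} (hc : c < 0) : (C c : Poly n) ∉ D.Q :=
  fun hmem => D.proper (D.isQM.neg_one_mem_of_negC hc hmem)

theorem SS_nonempty (f : Poly n) : (D.SS f).Nonempty := by
  obtain ⟨N, _, h1, _⟩ := D.bnd f
  exact ⟨N, h1⟩

theorem SS_upward {f : Poly n} {r r' : ℝ} (hr : r ∈ D.SS f) (hle : r ≤ r') : r' ∈ D.SS f := by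
  have hmem := D.isQM.add_mem (D.isQM.C_mem (c := r' - r) (by linarith)) hr
  have e : C (r' - r) + (C r - f) = C r' - f := by rw [C_sub]; ring
  rwa [e] at hmem

theorem SS_bddBelow (f : Poly n) : BddBelow (D.SS f) := by
  obtain ⟨N, hN, _, h2⟩ := D.bnd f
  refine ⟨-N, fun r hr => ?_⟩
  by_contra hlt
  push_neg at hlt
  have hmem := D.isQM.add_mem hr h2
  have e : C r - f + (C N + f) = (C (r + N) : Poly n) := by rw [C_add]; ring
  rw [e] at hmem
  exact D.C_notmem (by linarith) hmem

theorem al_le {f : Poly n} {c : ℝ} (hc : c ∈ D.SS f) : D.al f ≤ c :=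
  csInf_le (D.SS_bddBelow f) hc

theorem al_eps (f : Poly n) {ε : ℝ} (hε : 0 < ε) : C (D.al f + ε) - f ∈ D.Q := by
  obtain ⟨r, hr, hlt⟩ := exists_lt_of_csInf_lt (D.SS_nonempty f) (lt_add_of_pos_right _ hε)
  exact D.SS_upward hr hlt.le

theorem le_al {f : Poly n} {c : ℝ} (hc : ∀ r ∈ D.SS f, c ≤ r) : c ≤ D.al f :=
  le_csInf (D.SS_nonempty f) hc

theorem al_nonneg {f : Poly n} (hf : f ∈ D.Q) : 0 ≤ D.al f := by
  by_contra hlt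
  push_neg at hlt
  have hmem := D.isQM.add_mem (D.al_eps f (ε := -(D.al f) / 2) (by linarith)) hf
  have e : C (D.al f + -(D.al f) / 2) - f + f = (C (D.al f / 2) : Poly n) := by
    rw [show D.al f + -(D.al f) / 2 = D.al f / 2 by ring]; ring
  rw [e] at hmem
  exact D.C_notmem (by linarith) hmem

theorem al_C (c : ℝ) : D.al (C c) = c := by
  refine le_antisymm (D.al_le ?_) (D.le_al fun r hr => ?_)
  · show C c - C c ∈ D.Q
    rw [sub_self]
    exact D.isQM.zero_mem
  · by_contra hlt
    push_neg at hlt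
    have e : C r - C c = (C (r - c) : Poly n) := by rw [C_sub]
    have hmem : C r - C c ∈ D.Q := hr
    rw [e] at hmem
    exact D.C_notmem (by linarith) hmem

theorem al_add_le (f g : Poly n) : D.al (f + g) ≤ D.al f + D.al g := by
  refine le_of_forall_eps fun ε hε => ?_
  have h1 := D.al_eps f (ε := ε / 2) (by linarith)
  have h2 := D.al_eps g (ε := ε / 2) (by linarith)
  have hmem := D.isQM.add_mem h1 h2
  have hCC : (C (D.al f + D.al g + ε) : Poly n) = C (D.al f + ε / 2) + C (D.al g + ε / 2) := by
    rw [← C_add]; congr 1; ring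
  have e : C (D.al f + ε / 2) - f + (C (D.al g + ε / 2) - g)
      = C (D.al f + D.al g + ε) - (f + g) := by
    rw [hCC]; ring
  rw [e] at hmem
  exact D.al_le hmem

theorem al_neg (f : Poly n) : D.al (-f) = -D.al f := by
  have h1 : D.al (-f) ≤ -D.al f := by
    refine le_of_forall_eps fun ε hε => ?_
    have hr : D.al f - ε ∉ D.SS f := fun hmem => by
      have := D.al_le hmem; linarith
    have hQ1 : f - C (D.al f - ε) ∈ D.Q := by
      rcases D.semi (C (D.al f - ε) - f) with hin | hin
      · exact absurd hin hr
      · rwa [neg_sub] at hin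
    have e : C (-(D.al f - ε)) - (-f) = f - C (D.al f - ε) := by rw [map_neg]; ring
    have hmem : C (-(D.al f - ε)) - (-f) ∈ D.Q := by rw [e]; exact hQ1
    have := D.al_le hmem
    linarith
  have h2 : 0 ≤ D.al f + D.al (-f) := by
    have h0 : D.al (f + -f) = 0 := by
      rw [show f + -f = (C 0 : Poly n) by rw [map_zero]; ring, D.al_C]
    have := D.al_add_le f (-f)
    linarith
  linarith

theorem al_add (f g : Poly n) : D.al (f + g) = D.al f + D.al g := by
  refine le_antisymm (D.al_add_le f g) ?_
  have h1 : D.al f ≤ D.al (f + g) + D.al (-g) := by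
    have hh := D.al_add_le (f + g) (-g)
    have e : f + g + -g = f := by ring
    rwa [e] at hh
  have := D.al_neg g
  linarith

theorem al_smul_pos {c : ℝ} (hc : 0 < c) (f : Poly n) : D.al (C c * f) = c * D.al f := by
  refine le_antisymm (le_of_forall_eps fun ε hε => ?_) (le_of_forall_eps fun ε hε => ?_)
  · have hmem := D.isQM.smul_mem hc.le (D.al_eps f (ε := ε / c) (by positivity))
    have e : C c * (C (D.al f + ε / c) - f) = C (c * (D.al f + ε / c)) - C c * f := by
      rw [C_mul]; ring
    rw [e] at hmem
    have h1 := D.al_le hmem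
    have e2 : c * (D.al f + ε / c) = c * D.al f + ε := by field_simp
    linarith
  · have hmem := D.isQM.smul_mem (c := 1 / c) (by positivity) (D.al_eps (C c * f) hε)
    have e : C (1 / c) * (C (D.al (C c * f) + ε) - C c * f)
        = C ((D.al (C c * f) + ε) / c) - f := by
      rw [mul_sub, ← mul_assoc, C_cancel (one_div_mul_cancel hc.ne'), one_mul, ← C_mul,
        show 1 / c * (D.al (C c * f) + ε) = (D.al (C c * f) + ε) / c by ring]
    rw [e] at hmem
    have h1 := D.al_le hmem
    have h2 := mul_le_mul_of_nonneg_left h1 hc.le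
    have e2 : c * ((D.al (C c * f) + ε) / c) = D.al (C c * f) + ε := by field_simp
    linarith

theorem al_smul (c : ℝ) (f : Poly n) : D.al (C c * f) = c * D.al f := by
  rcases lt_trichotomy c 0 with hc | hc | hc
  · have e : C c * f = C (-c) * (-f) := by
      rw [map_neg]; ring
    rw [e, D.al_smul_pos (by linarith : (0:ℝ) < -c), D.al_neg]; ring
  · subst hc
    rw [map_zero, zero_mul, zero_mul, show (0 : Poly n) = C 0 from (map_zero C).symm, D.al_C]
  · exact D.al_smul_pos hc f

theorem al_sq_zero {f : Poly n} (hf : D.al f = 0) : D.al (f ^ 2) = 0 := by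
  have hub : ∀ δ : ℝ, 0 < δ → D.al (f ^ 2) ≤ δ := by
    intro δ hδ
    set ε := min 1 (δ / 6) with hεdef
    have hε0 : 0 < ε := lt_min one_pos (by linarith)
    have hε1 : ε ≤ 1 := min_le_left _ _
    have hεδ : ε ≤ δ / 6 := min_le_right _ _
    have hnegf : D.al (-f) = 0 := by rw [D.al_neg, hf, neg_zero]
    have he' : C ε + f ∈ D.Q := by
      have hh := D.al_eps (-f) hε0
      rw [hnegf] at hh
      have e : C ((0:ℝ) + ε) - (-f) = C ε + f := by rw [zero_add]; ring
      rwa [e] at hh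
    have h2e : C ε - f ∈ D.Q := by
      have hh := D.al_eps f hε0
      rw [hf] at hh
      have e : C ((0:ℝ) + ε) - f = C ε - f := by rw [zero_add]
      rwa [e] at hh
    set e := f + C ε with hedef
    have heQ : e ∈ D.Q := by
      have ee : C ε + f = e := by rw [hedef]; ring
      rwa [ee] at he'
    have h2eQ : C (2 * ε) - e ∈ D.Q := by
      have hC2 : (C (2 * ε) : Poly n) = C ε + C ε := by
        rw [← C_add]; congr 1; ring
      have ee : C (2 * ε) - e = C ε - f := by rw [hC2, hedef]; ring
      rw [ee]; exact h2e
    have A1 := D.isQM.sq_mul_mem (e + 1) h2eQ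
    have A2 := D.isQM.sq_mul_mem (e - 1) heQ
    have T4 := D.isQM.smul_mem (c := 4 * ε) (by linarith) h2eQ
    have T5 := D.isQM.smul_mem (c := 2 - 2 * ε) (by linarith) (D.isQM.sq_mem e)
    have T2 := D.isQM.smul_mem (c := 2 * ε) (by linarith) heQ
    have S1 := D.isQM.add_mem (D.isQM.add_mem (D.isQM.add_mem A1 A2) T4) T5
    have S2 := D.isQM.smul_mem (c := 1 / 2) (by norm_num) S1
    have hc0 : (0:ℝ) ≤ δ - ε - 5 * ε ^ 2 := by nlinarith
    have total := D.isQM.add_mem (D.isQM.add_mem S2 T2) (D.isQM.C_mem hc0)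
    have h12 : (C (1/2 : ℝ) : Poly n) * 2 = 1 := by
      rw [show (2 : Poly n) = C (2:ℝ) from (map_ofNat C 2).symm, ← C_mul]
      norm_num
    have hid : C (1/2) * ((e + 1) ^ 2 * (C (2*ε) - e) + (e - 1) ^ 2 * e
          + C (4*ε) * (C (2*ε) - e) + C (2 - 2*ε) * e ^ 2)
        + C (2*ε) * e + C (δ - ε - 5 * ε ^ 2) = C δ - f ^ 2 := by
      simp only [hedef, C_sub, C_add, C_mul, C_pow, map_ofNat]
      linear_combination (C ε + 4 * (C ε)^2 - ((f : Poly n) + C ε)^2) * h12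
    rw [hid] at total
    exact D.al_le total
  have hge := D.al_nonneg (D.isQM.sq_mem f)
  have hle : D.al (f ^ 2) ≤ 0 := le_of_forall_eps fun ε hε => by
    simpa using hub ε hε
  linarith

theorem al_mul (f g : Poly n) : D.al (f * g) = D.al f * D.al g := by
  set a := D.al f with ha
  set b := D.al g with hb
  set f' := f - C a with hf'
  set g' := g - C b with hg'
  have haf : D.al f' = 0 := by
    have e : f' = f + C (-a) := by rw [hf', map_neg]; ring
    rw [e, D.al_add, D.al_C, ← ha]; ring
  have hbg : D.al g' = 0 := by
    have e : g' = g + C (-b) := by rw [hg', map_neg]; ring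
    rw [e, D.al_add, D.al_C, ← hb]; ring
  have h1 : D.al ((f' + g') ^ 2) = 0 := D.al_sq_zero (by rw [D.al_add, haf, hbg]; ring)
  have h2 : D.al ((f' - g') ^ 2) = 0 := D.al_sq_zero (by
    have e : f' - g' = f' + -g' := by ring
    rw [e, D.al_add, D.al_neg, haf, hbg]; ring)
  have h14 : (C (1/4 : ℝ) : Poly n) * 4 = 1 := by
    rw [show (4 : Poly n) = C (4:ℝ) from (map_ofNat C 4).symm, ← C_mul]
    norm_num
  have hid : f * g = C (1/4) * ((f' + g') ^ 2 - (f' - g') ^ 2)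
      + C b * f + C a * g + C (-(a * b)) := by
    simp only [hf', hg', C_mul, map_neg]
    linear_combination (-((f - C a) * (g - C b))) * h14
  rw [hid, D.al_add, D.al_add, D.al_add, D.al_smul, D.al_smul, D.al_smul, D.al_C]
  have h3 : D.al ((f' + g') ^ 2 - (f' - g') ^ 2) = 0 := by
    have e : (f' + g') ^ 2 - (f' - g') ^ 2 = (f' + g') ^ 2 + -((f' - g') ^ 2) := by ring
    rw [e, D.al_add, D.al_neg, h1, h2]; ring
  rw [h3, ← ha, ← hb]; ring

theorem al_eval (f : Poly n) : D.al f = eval (fun i => D.al (X i)) f := by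
  induction f using MvPolynomial.induction_on with
  | C a => rw [D.al_C, eval_C]
  | add p q hp hq => rw [D.al_add, map_add, hp, hq]
  | mul_X p i hp => rw [D.al_mul, map_mul, hp, eval_X]

end GoodQM

/-! ### The key approximation lemma -/

theorem approx_mem {S : Set (Poly n)} (hS : IsQM S) {s r : Poly n} (hs : IsSOS s)
    {θ θ₂ lam : ℝ} (hθ0 : 0 < θ) (hθ1 : θ < 1) (hθ₂ : 0 < θ₂) (hlam : 0 < lam)
    (F1 : s - C θ ∈ S) (F2 : 1 - s ∈ S) (F3 : s * r - C θ₂ ∈ S)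
    (F4 : C lam - r ∈ S) (F5 : C lam + r ∈ S) :
    ∀ ε : ℝ, 0 < ε → r + C ε ∈ S := by
  intro ε hε
  set u := (1 : Poly n) - s with hu
  set η := 1 - θ with hη
  have hη0 : 0 < η := by rw [hη]; linarith
  have hη1 : η < 1 := by rw [hη]; linarith
  have pow2 : ∀ e : ℕ, u ^ 2 ^ e ∈ S ∧ C (η ^ 2 ^ e) - u ^ 2 ^ e ∈ S := by
    intro e
    induction e with
    | zero =>
      constructor
      · simpa using F2
      · have ee : C (η ^ 2 ^ 0) - u ^ 2 ^ 0 = s - C θ := by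
          simp only [pow_zero, pow_one, hη, hu, C_sub, C_1]
          ring
        rw [ee]; exact F1
    | succ e ih =>
      obtain ⟨ih1, ih2⟩ := ih
      have hNpos : 0 < η ^ 2 ^ e := by positivity
      have hplus : C (η ^ 2 ^ e) + u ^ 2 ^ e ∈ S := by
        have hh := hS.add_mem (hS.add_mem ih2 ih1) ih1
        have ee : C (η ^ 2 ^ e) - u ^ 2 ^ e + u ^ 2 ^ e + u ^ 2 ^ e
            = C (η ^ 2 ^ e) + u ^ 2 ^ e := by ring
        rwa [ee] at hh
      have hsq := sq_bound hS hNpos ih2 hplus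
      have e1 : (η ^ 2 ^ e) ^ 2 = η ^ 2 ^ (e + 1) := by rw [← pow_mul, pow_succ]
      have e2 : (u ^ 2 ^ e) ^ 2 = u ^ 2 ^ (e + 1) := by rw [← pow_mul, pow_succ]
      rw [e1, e2] at hsq
      exact ⟨by rw [← e2]; exact hS.sq_mem _, hsq⟩
  obtain ⟨n₀, hn₀⟩ := exists_pow_lt_of_lt_one (x := ε / (3 * lam)) (by positivity) hη1
  set e := n₀ + 1 with hedef
  set m := 2 ^ e with hm
  have hn₀m : n₀ ≤ m := by
    rw [hm, hedef]
    calc n₀ ≤ 2 ^ n₀ := Nat.lt_two_pow_self.le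
    _ ≤ 2 ^ (n₀ + 1) := Nat.pow_le_pow_right (by norm_num) (by omega)
  have hηm : η ^ m ≤ ε / (3 * lam) :=
    le_trans (pow_le_pow_of_le_one hη0.le hη1.le hn₀m) hn₀.le
  set z := u ^ m with hz
  have hq2 : (u ^ 2 ^ n₀) ^ 2 = z := by
    rw [hz, hm, hedef, ← pow_mul, pow_succ]
  set G := ∑ i ∈ Finset.range m, u ^ i with hG
  have hW : s * G = 1 - z := by
    have hgeo := geom_sum_mul u m
    have hs' : s = 1 - u := by rw [hu]; ring
    rw [hs', hz, ← hG] at *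
    linear_combination -hgeo
  have hsG : IsSOS (G ^ 2 * s) := isSOS_sq_mul hs G
  have W1 : (G ^ 2 * s) * (s * r - C θ₂) ∈ S := hS.sos_mul_mem hsG F3
  have W2 : C θ₂ * (G ^ 2 * s) ∈ S := hS.smul_mem hθ₂.le (hS.sos_mem hsG)
  have W3 : (u ^ 2 ^ n₀) ^ 2 * (C lam + r) ∈ S := hS.sq_mul_mem _ F5
  rw [hq2] at W3
  have W3' := hS.add_mem W3 W3
  have W4 : z ^ 2 * (C lam - r) ∈ S := hS.sq_mul_mem z F4
  have hηm1 : η ^ m ≤ 1 := pow_le_one₀ hη0.le hη1.le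
  have hη2m : η ^ (2 * m) ≤ η ^ m := by
    rw [two_mul, pow_add]
    nlinarith [pow_nonneg hη0.le m]
  have hc0 : (0:ℝ) ≤ ε - 2 * lam * η ^ m - lam * η ^ (2 * m) := by
    have h3 : η ^ m * (3 * lam) ≤ ε := (le_div_iff₀ (by positivity)).mp hηm
    nlinarith [mul_le_mul_of_nonneg_left hη2m hlam.le]
  have W5 : (C (ε - 2 * lam * η ^ m - lam * η ^ (2 * m)) : Poly n) ∈ S := hS.C_mem hc0
  have W6 : C (2 * lam) * (C (η ^ m) - z) ∈ S := by
    have hh := hS.smul_mem (c := 2 * lam) (by positivity) (pow2 e).2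
    rwa [← hm, ← hz] at hh
  have W7 : C lam * (C (η ^ (2 * m)) - z ^ 2) ∈ S := by
    have hh := hS.smul_mem (c := lam) hlam.le (pow2 (e + 1)).2
    have hexp : 2 ^ (e + 1) = 2 * m := by rw [hm, pow_succ]; ring
    rw [hexp] at hh
    have ez : u ^ (2 * m) = z ^ 2 := by rw [hz, ← pow_mul]; ring_nf
    rwa [ez] at hh
  have hc2 : (C (2 * lam) : Poly n) = 2 * C lam := by rw [C_mul, map_ofNat]
  have hc1 : (C (ε - 2 * lam * η ^ m - lam * η ^ (2 * m)) : Poly n)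
      = C ε - 2 * C lam * C (η ^ m) - C lam * C (η ^ (2 * m)) := by
    simp only [C_sub, C_mul, map_ofNat]
  have hid : r + C ε = (G ^ 2 * s) * (s * r - C θ₂) + C θ₂ * (G ^ 2 * s)
      + (z * (C lam + r) + z * (C lam + r)) + z ^ 2 * (C lam - r)
      + C (ε - 2 * lam * η ^ m - lam * η ^ (2 * m))
      + C (2 * lam) * (C (η ^ m) - z) + C lam * (C (η ^ (2 * m)) - z ^ 2) := by
    rw [hc1, hc2]
    linear_combination (-(r * ((1 - z) + s * G))) * hW
  rw [hid]
  exact hS.add_mem (hS.add_mem (hS.add_mem (hS.add_mem (hS.add_mem (hS.add_mem W1 W2) W3') W4)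
    W5) W6) W7

/-! ### Continuity of evaluation -/

theorem continuous_eval (f : Poly n) : Continuous fun x : Fin n → ℝ => eval x f := by
  induction f using MvPolynomial.induction_on with
  | C a => simpa using continuous_const
  | add p q hp hq =>
    simp only [map_add]
    exact hp.add hq
  | mul_X p i hp =>
    simp only [map_mul, eval_X]
    exact hp.mul (continuous_apply i)

/-! ### The core lemma -/

theorem core {m1 m2 : ℕ} {h : Fin m1 → Poly n} {g : Fin m2 → Poly n}
    {K : Set (Fin n → ℝ)}
    (hK : K = {x | (∀ i, eval x (h i) = 0) ∧ (∀ j, 0 ≤ eval x (g j))})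
    (harch : ∃ R : ℝ, 0 < R ∧ (C R - ∑ i : Fin n, X i ^ 2) ∈ idealPlusQM h g)
    (r : Poly n) (hr : ∀ x ∈ K, 0 < eval x r) :
    ∀ ε : ℝ, 0 < ε → r + C ε ∈ idealPlusQM h g := by
  have hMqm : IsQM (idealPlusQM h g) := isQM_M
  by_cases himp : (-1 : Poly n) ∈ qmAdj (idealPlusQM h g) (-r)
  · -- `M - rΣ` is improper: explicit denominator clearing
    obtain ⟨a, haM, σ, hσ, heq⟩ := himp
    have hσr : σ * r - 1 ∈ idealPlusQM h g := by
      have e : σ * r - 1 = a := by linear_combination heq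
      rw [e]; exact haM
    obtain ⟨lam₀, hlam₀, hl1, hl2⟩ := bound_all hMqm harch r
    obtain ⟨mu₀, hmu₀, hm1, _⟩ := bound_all hMqm harch σ
    set lam := lam₀ + 2 with hlam
    set mu := mu₀ + 2 with hmu
    have hlampos : (0:ℝ) < lam := by rw [hlam]; linarith
    have hmupos : (0:ℝ) < mu := by rw [hmu]; linarith
    have hC2 : ((0:ℝ)) ≤ 2 := by norm_num
    have hL1 : C lam - r ∈ idealPlusQM h g := by
      have hh := hMqm.add_mem hl1 (hMqm.C_mem hC2)
      have e : C lam₀ - r + C 2 = C lam - r := by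
        rw [hlam, C_add]; ring
      rwa [e] at hh
    have hL2 : C lam + r ∈ idealPlusQM h g := by
      have hh := hMqm.add_mem hl2 (hMqm.C_mem hC2)
      have e : C lam₀ + r + C 2 = C lam + r := by
        rw [hlam, C_add]; ring
      rwa [e] at hh
    have hM1 : C mu - σ ∈ idealPlusQM h g := by
      have hh := hMqm.add_mem hm1 (hMqm.C_mem hC2)
      have e : C mu₀ - σ + C 2 = C mu - σ := by
        rw [hmu, C_add]; ring
      rwa [e] at hh
    have hls : C lam * σ - 1 ∈ idealPlusQM h g := by
      have h1 := hMqm.sos_mul_mem hσ hL1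
      have h2 := hMqm.add_mem h1 hσr
      have e : σ * (C lam - r) + (σ * r - 1) = C lam * σ - 1 := by ring
      rwa [e] at h2
    set s := C (1/mu) * σ with hs
    have hsSOS : IsSOS s := isSOS_const_mul hσ (by positivity)
    have hF1 : s - C (1/(lam*mu)) ∈ idealPlusQM h g := by
      have hh := hMqm.smul_mem (c := 1/(lam*mu)) (by positivity) hls
      have e : C (1/(lam*mu)) * (C lam * σ - 1) = s - C (1/(lam*mu)) := by
        rw [hs, mul_sub, mul_one, ← mul_assoc, ← C_mul,
          show 1/(lam*mu)*lam = 1/mu by field_simp]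
      rwa [e] at hh
    have hF2 : 1 - s ∈ idealPlusQM h g := by
      have hh := hMqm.smul_mem (c := 1/mu) (by positivity) hM1
      have e : C (1/mu) * (C mu - σ) = 1 - s := by
        rw [hs, mul_sub, ← C_mul, show 1/mu*mu = 1 by field_simp, C_1]
      rwa [e] at hh
    have hF3 : s * r - C (1/mu) ∈ idealPlusQM h g := by
      have hh := hMqm.smul_mem (c := 1/mu) (by positivity) hσr
      have e : C (1/mu) * (σ * r - 1) = s * r - C (1/mu) := by rw [hs]; ring
      rwa [e] at hh
    have hθ1 : 1/(lam*mu) < 1 := by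
      rw [div_lt_one (by positivity)]
      nlinarith
    exact approx_mem hMqm hsSOS (by positivity) hθ1 (by positivity) hlampos
      hF1 hF2 hF3 hL1 hL2
  · -- `M - rΣ` is proper: produce a point of `K` where `r ≤ 0`
    intro ε hε
    exfalso
    obtain ⟨Q, hBQ, hQqm, hQpr, hQmax⟩ := exists_maximal_qm (isQM_qmAdj hMqm (-r)) himp
    have hMQ : idealPlusQM h g ⊆ Q := (subset_qmAdj (-r)).trans hBQ
    have harchQ : ∃ R : ℝ, 0 < R ∧ (C R - ∑ i : Fin n, X i ^ 2) ∈ Q := by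
      obtain ⟨R, hR0, hRm⟩ := harch
      exact ⟨R, hR0, hMQ hRm⟩
    have hbnd := bound_all hQqm harchQ
    have hsemi := semi_of_maximal hQqm hQpr hbnd hQmax
    set D : GoodQM n := ⟨Q, hQqm, hQpr, hsemi, hbnd⟩ with hD
    set x : Fin n → ℝ := fun i => D.al (X i) with hx
    have halnn : ∀ f ∈ idealPlusQM h g, 0 ≤ D.al f := fun f hf => D.al_nonneg (hMQ hf)
    have hxK : x ∈ K := by
      rw [hK]
      refine ⟨fun i => ?_, fun j => ?_⟩
      · have h1 : 0 ≤ D.al (h i) := halnn _ (h_mem_M i)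
        have h2 : 0 ≤ D.al (-(h i)) := halnn _ (neg_h_mem_M i)
        rw [D.al_neg] at h2
        have h3 : D.al (h i) = 0 := le_antisymm (by linarith) h1
        rw [show eval x (h i) = D.al (h i) from (D.al_eval (h i)).symm]
        exact h3
      · have hh := halnn _ (g_mem_M j)
        rwa [D.al_eval (g j)] at hh
    have hneg : D.al r ≤ 0 := by
      have h2 : 0 ≤ D.al (-r) := D.al_nonneg (hBQ (mem_qmAdj_self hMqm (-r)))
      rw [D.al_neg] at h2
      linarith
    have hpos := hr x hxK
    rw [← D.al_eval r] at hpos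
    linarith

end PutinarAux

/-- **Putinar's Positivstellensatz**: if `⟨h⟩ + Q(g)` is archimedean and `p > 0` on
`K = {x : h_i(x) = 0, g_j(x) ≥ 0}`, then `p ∈ ⟨h⟩ + Q(g)`. -/
theorem putinar_positivstellensatz {n m1 m2 : ℕ}
    (h : Fin m1 → MvPolynomial (Fin n) ℝ) (g : Fin m2 → MvPolynomial (Fin n) ℝ)
    (K : Set (Fin n → ℝ))
    (hK : K = {x | (∀ i, eval x (h i) = 0) ∧ (∀ j, 0 ≤ eval x (g j))})
    (harch : ArchimedeanCond h g)
    (p : MvPolynomial (Fin n) ℝ)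
    (hp : ∀ x ∈ K, 0 < eval x p) :
    p ∈ idealPlusQM h g := by
  classical
  obtain ⟨R, hR, hRmem⟩ := harch
  have harch' : ∃ R : ℝ, 0 < R ∧ (C R - ∑ i : Fin n, X i ^ 2) ∈ idealPlusQM h g :=
    ⟨R, hR, hRmem⟩
  have hMqm : PutinarAux.IsQM (idealPlusQM h g) := PutinarAux.isQM_M
  set B : Set ℝ := {c | p - C c ∈ idealPlusQM h g} with hB
  obtain ⟨N, hN, _, hNp⟩ := PutinarAux.bound_all hMqm harch' p
  have hBne : (-N) ∈ B := by
    show p - C (-N) ∈ idealPlusQM h g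
    have e : C N + p = p - C (-N) := by rw [map_neg]; ring
    rwa [e] at hNp
  by_cases hpos : ∃ c ∈ B, 0 < c
  · obtain ⟨c, hcB, hc⟩ := hpos
    have hh := hMqm.add_mem hcB (hMqm.C_mem hc.le)
    have e : p - C c + C c = p := by ring
    rwa [e] at hh
  · push_neg at hpos
    have hBdd : BddAbove B := ⟨0, fun c hc => hpos c hc⟩
    set c0 := sSup B with hc0
    have hc0le : c0 ≤ 0 := csSup_le ⟨-N, hBne⟩ fun c hc => hpos c hc
    have hex : ∃ η : ℝ, 0 < η ∧ ∀ x ∈ K, 0 < eval x (p - C (c0 + η)) := by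
      by_cases hKne : K.Nonempty
      · have hKcl : IsClosed K := by
          rw [hK]
          have e : {x : Fin n → ℝ | (∀ i, eval x (h i) = 0) ∧ (∀ j, 0 ≤ eval x (g j))} =
              (⋂ i, {x : Fin n → ℝ | eval x (h i) = 0}) ∩
                ⋂ j, {x : Fin n → ℝ | 0 ≤ eval x (g j)} := by
            ext x; simp [Set.mem_iInter]
          rw [e]
          refine IsClosed.inter (isClosed_iInter fun i => ?_) (isClosed_iInter fun j => ?_)
          · exact isClosed_eq (PutinarAux.continuous_eval _) continuous_const
          · exact isClosed_le continuous_const (PutinarAux.continuous_eval _)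
        have hKbd : Bornology.IsBounded K := by
          have hsub : K ⊆ Metric.closedBall 0 (Real.sqrt R) := by
            intro x hxK
            have hx1 : ∀ i, eval x (h i) = 0 := (hK ▸ hxK).1
            have hx2 : ∀ j, 0 ≤ eval x (g j) := (hK ▸ hxK).2
            have hnn := PutinarAux.eval_nonneg_of_mem hx1 hx2 hRmem
            have heval : eval x (C R - ∑ i : Fin n, X i ^ 2) = R - ∑ i, (x i) ^ 2 := by
              simp
            rw [heval] at hnn
            rw [Metric.mem_closedBall, dist_pi_le_iff (Real.sqrt_nonneg R)]
            intro i
            have hsq : (x i) ^ 2 ≤ R := by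
              have hterm : ∀ j ∈ Finset.univ, (0:ℝ) ≤ (x j) ^ 2 := fun j _ => sq_nonneg _
              have := Finset.single_le_sum hterm (Finset.mem_univ i)
              linarith
            have : dist (x i) ((0 : Fin n → ℝ) i) = |x i| := by
              simp [Real.dist_eq]
            rw [this]
            calc |x i| = Real.sqrt ((x i) ^ 2) := (Real.sqrt_sq_eq_abs _).symm
            _ ≤ Real.sqrt R := Real.sqrt_le_sqrt hsq
          exact Metric.isBounded_closedBall.subset hsub
        have hKcp : IsCompact K := Metric.isCompact_of_isClosed_isBounded hKcl hKbd
        obtain ⟨x₀, hx₀K, hmin⟩ :=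
          hKcp.exists_isMinOn hKne (PutinarAux.continuous_eval p).continuousOn
        have hε₀ : 0 < eval x₀ p := hp x₀ hx₀K
        refine ⟨eval x₀ p / 2, by linarith, fun x hx => ?_⟩
        have hmx : eval x₀ p ≤ eval x p := isMinOn_iff.mp hmin x hx
        have he : eval x (p - C (c0 + eval x₀ p / 2))
            = eval x p - (c0 + eval x₀ p / 2) := by simp
        rw [he]
        linarith
      · exact ⟨1, one_pos, fun x hx => absurd ⟨x, hx⟩ hKne⟩
    obtain ⟨η, hη, hrpos⟩ := hex
    have hcore := PutinarAux.core hK harch' (p - C (c0 + η)) hrpos (η/2) (by linarith)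
    have hsplit : (C (c0 + η) : MvPolynomial (Fin n) ℝ) = C (c0 + η/2) + C (η/2) := by
      rw [← C_add]; congr 1; ring
    have e : p - C (c0 + η) + C (η/2) = p - C (c0 + η/2) := by rw [hsplit]; ring
    rw [e] at hcore
    have hmem : c0 + η/2 ∈ B := hcore
    have := le_csSup hBdd hmem
    linarith
end
end

section
/- (Elimination theory.) Fix n, r and positive degrees e_1,…,e_r. There exist finitely many polynomials G_1,…,G_t, with integer coefficients, in the coefficients of an r-tuple of homogeneous polynomials f_1,…,f_r in the variables x_0,…,x_n of degrees e_1,…,e_r, each G_j homogeneous in the coefficients of each f_i separately, with the following property: for every tuple of homogeneous polynomials f_1,…,f_r ∈ ℂ[x_0,…,x_n] with deg f_i = e_i, the system f_1 = ⋯ = f_r = 0 has a common zero z ∈ ℂ^{n+1} with z ≠ 0 if and only if G_1,…,G_t all vanish at the coefficients of (f_1,…,f_r). -/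
open MvPolynomial

noncomputable section

namespace ElimAux

lemma degree_add' {σ : Type*} (a b : σ →₀ ℕ) :
    Finsupp.degree (a + b) = Finsupp.degree a + Finsupp.degree b := by
  simp only [Finsupp.degree_eq_weight_one, map_add]

lemma degree_single' {σ : Type*} (j : σ) (N : ℕ) :
    Finsupp.degree (Finsupp.single j N) = N := by
  classical
  rcases Nat.eq_zero_or_pos N with h | h
  · simp [h]
  · rw [Finsupp.degree_apply, Finsupp.support_single_ne_zero _ h.ne',
      Finset.sum_singleton, Finsupp.single_eq_same]

lemma degree_eq_sum_univ {k : ℕ} (d : Fin k →₀ ℕ) :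
    Finsupp.degree d = ∑ j : Fin k, d j := by
  rw [Finsupp.degree_apply]
  exact Finset.sum_subset (Finset.subset_univ _) (fun x _ hx => Finsupp.notMem_support_iff.1 hx)

/-- surjectivity of a matrix-induced linear map over a field is detected by maximal minors -/
lemma surjective_mulVecLin_iff_exists_det_ne_zero
    {ρ κ K : Type*} [Fintype ρ] [Fintype κ] [DecidableEq ρ] [Field K]
    (M : Matrix ρ κ K) :
    Function.Surjective M.mulVecLin ↔ ∃ g : ρ → κ, (M.submatrix id g).det ≠ 0 := by
  classical
  constructor
  · intro hsurj
    have hrange : ∀ w : κ → K, M.mulVec w = ∑ c : κ, w c • (fun β => M β c) := by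
      intro w
      funext β
      simp only [Matrix.mulVec, dotProduct, Finset.sum_apply, Pi.smul_apply, smul_eq_mul]
      exact Finset.sum_congr rfl fun c _ => mul_comm _ _
    have hspan : Submodule.span K (Set.range fun c : κ => (fun β => M β c)) = ⊤ := by
      rw [eq_top_iff]
      rintro y -
      obtain ⟨w, hw⟩ := hsurj y
      rw [← hw]
      show M.mulVec w ∈ _
      rw [hrange]
      exact Submodule.sum_mem _ fun c _ =>
        Submodule.smul_mem _ _ (Submodule.subset_span ⟨c, rfl⟩)
    obtain ⟨s, hs_sub, hs_span, hs_li⟩ :=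
      exists_linearIndependent K (Set.range fun c : κ => (fun β => M β c))
    rw [hspan] at hs_span
    let b : Module.Basis s K (ρ → K) := Module.Basis.mk hs_li (by rw [Subtype.range_coe]; exact hs_span.ge)
    haveI : Fintype s := FiniteDimensional.fintypeBasisIndex b
    have hcard : Fintype.card ρ = Fintype.card s := by
      rw [← Module.finrank_eq_card_basis b, Module.finrank_fintype_fun_eq_card]
    let ε : ρ ≃ s := Fintype.equivOfCardEq hcard
    have hmem : ∀ x : s, (x : ρ → K) ∈ Set.range fun c : κ => (fun β => M β c) :=
      fun x => hs_sub x.2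
    choose c hc using hmem
    refine ⟨fun β => c (ε β), ?_⟩
    have hli : LinearIndependent K (fun β : ρ => (fun β' => M β' (c (ε β)))) := by
      have : (fun β : ρ => (fun β' => M β' (c (ε β)))) = (fun x : s => (x : ρ → K)) ∘ ε := by
        funext β
        exact hc (ε β)
      rw [this]
      exact hs_li.comp ε ε.injective
    have hU : IsUnit (M.submatrix id (fun β => c (ε β))) := by
      rw [← Matrix.linearIndependent_cols_iff_isUnit]
      convert hli using 1
      rfl
    intro hdet
    exact ((Matrix.isUnit_iff_isUnit_det _).1 hU).ne_zero hdet
  · rintro ⟨g, hg⟩ y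
    have hU : IsUnit (M.submatrix id g) :=
      (Matrix.isUnit_iff_isUnit_det _).2 (isUnit_iff_ne_zero.2 hg)
    obtain ⟨v, hv⟩ := Matrix.mulVec_surjective_iff_isUnit.2 hU y
    refine ⟨fun c => ∑ β : ρ, if g β = c then v β else 0, ?_⟩
    show M.mulVec _ = y
    rw [← hv]
    funext β'
    simp only [Matrix.mulVec, dotProduct, Matrix.submatrix_apply, id_eq]
    calc ∑ c, M β' c * ∑ β : ρ, (if g β = c then v β else 0)
        = ∑ c, ∑ β : ρ, (if g β = c then M β' c * v β else 0) := by
          refine Finset.sum_congr rfl fun c _ => ?_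
          rw [Finset.mul_sum]
          exact Finset.sum_congr rfl fun β _ => by split_ifs <;> simp
      _ = ∑ β : ρ, ∑ c, (if g β = c then M β' c * v β else 0) := Finset.sum_comm
      _ = ∑ β : ρ, M β' (g β) * v β := by
          refine Finset.sum_congr rfl fun β _ => ?_
          rw [Finset.sum_ite_eq Finset.univ (g β) (fun c => M β' c * v β),
            if_pos (Finset.mem_univ _)]

lemma homogeneousComponent_mul_homogeneous {σ : Type*} {f g : MvPolynomial σ ℂ} {e N : ℕ}
    (hf : f.IsHomogeneous e) (heN : e ≤ N) :
    homogeneousComponent N (g * f) = homogeneousComponent (N - e) g * f := by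
  classical
  ext d
  rw [coeff_homogeneousComponent, coeff_mul, coeff_mul]
  by_cases hd : Finsupp.degree d = N
  · rw [if_pos hd]
    refine Finset.sum_congr rfl fun uv huv => ?_
    rw [Finset.HasAntidiagonal.mem_antidiagonal] at huv
    rw [coeff_homogeneousComponent]
    by_cases hv : coeff uv.2 f = 0
    · simp [hv]
    · have hdeg2 : Finsupp.degree uv.2 = e := by
        by_contra hne
        exact hv (hf.coeff_eq_zero hne)
      have : Finsupp.degree uv.1 = N - e := by
        have := degree_add' uv.1 uv.2
        rw [huv, hd, hdeg2] at this
        omega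
      rw [if_pos this]
  · rw [if_neg hd]
    refine (Finset.sum_eq_zero fun uv huv => ?_).symm
    rw [Finset.HasAntidiagonal.mem_antidiagonal] at huv
    rw [coeff_homogeneousComponent]
    by_cases hv : coeff uv.2 f = 0
    · simp [hv]
    · have hdeg2 : Finsupp.degree uv.2 = e := by
        by_contra hne
        exact hv (hf.coeff_eq_zero hne)
      rw [if_neg, zero_mul]
      intro h1
      apply hd
      have := degree_add' uv.1 uv.2
      rw [huv, h1, hdeg2] at this
      omega

lemma homogeneousComponent_mul_homogeneous_lt {σ : Type*} {f g : MvPolynomial σ ℂ} {e N : ℕ}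
    (hf : f.IsHomogeneous e) (hN : N < e) :
    homogeneousComponent N (g * f) = 0 := by
  classical
  ext d
  rw [coeff_homogeneousComponent, coeff_zero]
  by_cases hd : Finsupp.degree d = N
  · rw [if_pos hd, coeff_mul]
    refine Finset.sum_eq_zero fun uv huv => ?_
    rw [Finset.HasAntidiagonal.mem_antidiagonal] at huv
    by_cases hv : coeff uv.2 f = 0
    · simp [hv]
    · exfalso
      have hdeg2 : Finsupp.degree uv.2 = e := by
        by_contra hne
        exact hv (hf.coeff_eq_zero hne)
      have := degree_add' uv.1 uv.2
      rw [huv, hd, hdeg2] at this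
      omega
  · rw [if_neg hd]

/-- The degree-`N` membership predicate. -/
def Pdeg (n : ℕ) {r : ℕ} (f : Fin r → MvPolynomial (Fin (n + 1)) ℂ) (N : ℕ) : Prop :=
  ∀ β : Fin (n + 1) →₀ ℕ, Finsupp.degree β = N →
    (monomial β 1 : MvPolynomial (Fin (n + 1)) ℂ) ∈ Ideal.span (Set.range f)

lemma Pdeg_succ {n r : ℕ} {f : Fin r → MvPolynomial (Fin (n + 1)) ℂ} {N : ℕ}
    (h : Pdeg n f N) : Pdeg n f (N + 1) := by
  intro β hβ
  have hβ0 : β ≠ 0 := by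
    intro h0
    rw [h0, map_zero] at hβ
    omega
  obtain ⟨j, hj⟩ := DFunLike.ne_iff.1 hβ0
  simp only [Finsupp.coe_zero, Pi.zero_apply] at hj
  have h1 : Finsupp.single j 1 ≤ β := by
    rw [Finsupp.single_le_iff]
    omega
  have hsplit : Finsupp.single j 1 + (β - Finsupp.single j 1) = β := add_tsub_cancel_of_le h1
  have hdeg : Finsupp.degree (β - Finsupp.single j 1) = N := by
    have := congrArg Finsupp.degree hsplit
    rw [degree_add', degree_single', hβ] at this
    omega
  have heq : (monomial β (1 : ℂ)) = X j * monomial (β - Finsupp.single j 1) 1 := by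
    rw [X, monomial_mul, one_mul, hsplit]
  rw [heq]
  exact Ideal.mul_mem_left _ _ (h _ hdeg)

lemma Pdeg_mono {n r : ℕ} {f : Fin r → MvPolynomial (Fin (n + 1)) ℂ} {N M : ℕ}
    (h : Pdeg n f N) (hNM : N ≤ M) : Pdeg n f M := by
  induction M, hNM using Nat.le_induction with
  | base => exact h
  | succ M hNM ih => exact Pdeg_succ ih

lemma existsNonzeroZero_iff {n r : ℕ} (f : Fin r → MvPolynomial (Fin (n + 1)) ℂ) :
    (∃ z : Fin (n + 1) → ℂ, z ≠ 0 ∧ ∀ i, eval z (f i) = 0) ↔ ¬ ∃ N, Pdeg n f N := by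
  constructor
  · rintro ⟨z, hz0, hz⟩ ⟨N, hN⟩
    obtain ⟨j, hj⟩ := Function.ne_iff.1 hz0
    simp only [Pi.zero_apply] at hj
    have h2 := hN _ (degree_single' j N)
    have hker : Ideal.span (Set.range f) ≤
        RingHom.ker (eval z : MvPolynomial (Fin (n + 1)) ℂ →+* ℂ) := by
      rw [Ideal.span_le]
      rintro _ ⟨i, rfl⟩
      exact hz i
    have h3 : eval z ((X j : MvPolynomial (Fin (n + 1)) ℂ) ^ N) = 0 := by
      rw [X_pow_eq_monomial]
      exact hker h2
    rw [map_pow, eval_X] at h3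
    exact pow_ne_zero N hj h3
  · intro h
    by_contra hcon
    push_neg at hcon
    apply h
    have hzl : MvPolynomial.zeroLocus ℂ (Ideal.span (Set.range f)) ⊆ {0} := by
      intro x hx
      simp only [Set.mem_singleton_iff]
      by_contra hx0
      obtain ⟨i, hi⟩ := hcon x hx0
      exact hi (hx (f i) (Ideal.subset_span ⟨i, rfl⟩))
    have hX : ∀ j, (X j : MvPolynomial (Fin (n + 1)) ℂ) ∈ (Ideal.span (Set.range f)).radical := by
      intro j
      rw [← vanishingIdeal_zeroLocus_eq_radical (K := ℂ), mem_vanishingIdeal_iff]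
      intro x hx
      have hx0 : x = 0 := hzl hx
      rw [hx0, aeval_X, Pi.zero_apply]
    choose k hk using fun j => Ideal.mem_radical_iff.1 (hX j)
    have hk' : ∀ j, (X j : MvPolynomial (Fin (n + 1)) ℂ) ^ (k j + 1) ∈
        Ideal.span (Set.range f) := by
      intro j
      rw [pow_succ]
      exact Ideal.mul_mem_right _ _ (hk j)
    refine ⟨∑ j : Fin (n + 1), (k j + 1), fun β hβ => ?_⟩
    have hex : ∃ j, k j + 1 ≤ β j := by
      by_contra h'
      push_neg at h'
      have h1 : Finsupp.degree β = ∑ j : Fin (n + 1), β j := degree_eq_sum_univ β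
      have h2 : ∑ j : Fin (n + 1), β j < ∑ j : Fin (n + 1), (k j + 1) := by
        apply Finset.sum_lt_sum_of_nonempty Finset.univ_nonempty
        intro j _
        exact h' j
      omega
    obtain ⟨j, hj⟩ := hex
    have h1 : Finsupp.single j (k j + 1) ≤ β := by
      rw [Finsupp.single_le_iff]
      exact hj
    have hsplit : Finsupp.single j (k j + 1) + (β - Finsupp.single j (k j + 1)) = β :=
      add_tsub_cancel_of_le h1
    have heq : (monomial β (1 : ℂ)) =
        X j ^ (k j + 1) * monomial (β - Finsupp.single j (k j + 1)) 1 := by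
      rw [X_pow_eq_monomial, monomial_mul, one_mul, hsplit]
    rw [heq]
    exact Ideal.mul_mem_right _ _ (hk' j)

lemma exists_finset_span_eq {A : Type*} [CommRing A] [IsNoetherianRing A] (s : Set A) :
    ∃ T : Finset A, ↑T ⊆ s ∧ Ideal.span (↑T : Set A) = Ideal.span s := by
  obtain ⟨F, hF⟩ := IsNoetherian.noetherian (Ideal.span s)
  have hmem : ∀ x ∈ F, ∃ T : Finset A, ↑T ⊆ s ∧ x ∈ Ideal.span (↑T : Set A) := by
    intro x hx
    have hx' : x ∈ Ideal.span s := by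
      rw [← hF]
      exact Ideal.subset_span hx
    exact Submodule.mem_span_finite_of_mem_span hx'
  choose t ht1 ht2 using hmem
  classical
  refine ⟨F.attach.biUnion (fun x => t x.1 x.2), ?_, le_antisymm ?_ ?_⟩
  · intro y hy
    simp only [Finset.coe_biUnion, Finset.mem_coe, Finset.mem_attach, Set.iUnion_true,
      Set.mem_iUnion] at hy
    obtain ⟨x, hy⟩ := hy
    exact ht1 _ _ hy
  · rw [Ideal.span_le]
    intro y hy
    simp only [Finset.coe_biUnion, Finset.mem_coe, Finset.mem_attach, Set.iUnion_true,
      Set.mem_iUnion] at hy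
    obtain ⟨x, hy⟩ := hy
    exact Ideal.subset_span (ht1 _ _ hy)
  · rw [← hF, Submodule.span_le]
    intro x hx
    refine Ideal.span_mono ?_ (ht2 _ hx)
    intro y hy
    simp only [Finset.coe_biUnion, Finset.mem_coe, Finset.mem_attach, Set.iUnion_true,
      Set.mem_iUnion]
    exact ⟨⟨x, hx⟩, hy⟩

lemma isWeightedHomogeneous_rename {σ τ : Type*} {ι : σ → τ} (hι : Function.Injective ι)
    {w : τ → ℕ} {p : MvPolynomial σ ℤ} {m : ℕ}
    (hp : p.IsWeightedHomogeneous (w ∘ ι) m) :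
    (rename ι p).IsWeightedHomogeneous w m := by
  classical
  intro d hd
  have hd' : d ∈ (rename ι p).support := mem_support_iff.2 hd
  rw [support_rename_of_injective hι] at hd'
  obtain ⟨d₀, hd₀, rfl⟩ := Finset.mem_image.1 hd'
  have h1 := hp (mem_support_iff.1 hd₀)
  rw [← h1, Finsupp.weight_apply, Finsupp.weight_apply]
  exact Finsupp.sum_mapDomain_index (by simp) (fun b m₁ m₂ => add_smul m₁ m₂ (w b))

/-- monomials of degree `N` in `n + 1` variables -/
abbrev Mon (n N : ℕ) := {d : Fin (n + 1) →₀ ℕ // Finsupp.degree d = N}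

instance MonFinite (n N : ℕ) : Finite (Mon n N) := by
  have h : {d : Fin (n + 1) →₀ ℕ | Finsupp.degree d ≤ N}.Finite := Finsupp.finite_of_degree_le N
  exact Set.Finite.to_subtype (h.subset fun d hd => le_of_eq hd)

noncomputable instance MonFintype (n N : ℕ) : Fintype (Mon n N) := Fintype.ofFinite _

/-- column index type -/
abbrev ColT (n r : ℕ) (e : Fin r → ℕ) (N : ℕ) := Σ i : Fin r, Mon n (N - e i)

/-- variable index type -/
abbrev VarT (n r : ℕ) (e : Fin r → ℕ) := Σ i : Fin r, Mon n (e i)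

/-- inclusion of the variable index type -/
def ιvar (n r : ℕ) (e : Fin r → ℕ) : VarT n r e → Fin r × (Fin (n + 1) →₀ ℕ) :=
  fun v => (v.1, v.2.val)

lemma ιvar_inj (n r : ℕ) (e : Fin r → ℕ) : Function.Injective (ιvar n r e) := by
  rintro ⟨i, d, hd⟩ ⟨i', d', hd'⟩ h
  simp only [ιvar, Prod.mk.injEq] at h
  obtain ⟨h1, h2⟩ := h
  subst h1
  simp only [Sigma.mk.inj_iff, heq_eq_eq, Subtype.mk.injEq]
  exact ⟨trivial, h2⟩

/-- the generic coefficient matrix in degree `N` -/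
def Mpoly (n r : ℕ) (e : Fin r → ℕ) (N : ℕ) :
    Matrix (Mon n N) (ColT n r e N) (MvPolynomial (VarT n r e) ℤ) := fun β c =>
  if h : c.2.val ≤ β.val ∧ e c.1 ≤ N then
    X ⟨c.1, ⟨β.val - c.2.val, by
      have h1 : (β.val - c.2.val) + c.2.val = β.val := tsub_add_cancel_of_le h.1
      have h2 := congrArg Finsupp.degree h1
      rw [degree_add'] at h2
      have h3 := c.2.prop
      have h4 := β.prop
      omega⟩⟩
  else 0

/-- the evaluation of the generic matrix at the coefficients of `f` -/
def Mc (n r : ℕ) (e : Fin r → ℕ) (f : Fin r → MvPolynomial (Fin (n + 1)) ℂ) (N : ℕ) :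
    Matrix (Mon n N) (ColT n r e N) ℂ :=
  (Mpoly n r e N).map (aeval fun v : VarT n r e => coeff v.2.val (f v.1))

/-- column vectors -/
def vcol (n r : ℕ) (e : Fin r → ℕ) (f : Fin r → MvPolynomial (Fin (n + 1)) ℂ) (N : ℕ) :
    ColT n r e N → MvPolynomial (Fin (n + 1)) ℂ :=
  fun c => monomial c.2.val 1 * f c.1

lemma Mc_entry (n r : ℕ) (e : Fin r → ℕ) (f : Fin r → MvPolynomial (Fin (n + 1)) ℂ)
    (hf : ∀ i, (f i).IsHomogeneous (e i)) (N : ℕ) (β : Mon n N) (c : ColT n r e N) :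
    Mc n r e f N β c = coeff β.val (vcol n r e f N c) := by
  classical
  rw [Mc, Matrix.map_apply, vcol, coeff_monomial_mul']
  rw [Mpoly]
  split_ifs with h h2 h2
  · rw [aeval_X, one_mul]
  · exfalso
    -- h : γ ≤ β ∧ e ≤ N is true, h2 : ¬ γ ≤ β
    exact h2 h.1
  · -- h false, h2 : γ ≤ β; so ¬ (e c.1 ≤ N)
    have hNe : ¬ e c.1 ≤ N := fun hh => h ⟨h2, hh⟩
    have hγ : c.2.val = 0 := by
      have h5 : Finsupp.degree c.2.val = 0 :=
        c.2.prop.trans (Nat.sub_eq_zero_of_le (le_of_not_ge hNe))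
      exact (Finsupp.degree_eq_zero_iff _).1 h5
    rw [map_zero, one_mul, hγ, tsub_zero]
    refine ((hf c.1).coeff_eq_zero ?_).symm
    rw [β.prop]
    omega
  · rw [map_zero]

lemma minor_isWeightedHomogeneous (n r : ℕ) (e : Fin r → ℕ) (N : ℕ)
    (g : Mon n N → ColT n r e N) (i : Fin r) :
    ∃ m : ℕ, (((Mpoly n r e N).submatrix id g).det).IsWeightedHomogeneous
      ((fun v : Fin r × (Fin (n + 1) →₀ ℕ) => if v.1 = i then 1 else 0) ∘ ιvar n r e) m := by
  classical
  set w : VarT n r e → ℕ :=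
    (fun v : Fin r × (Fin (n + 1) →₀ ℕ) => if v.1 = i then 1 else 0) ∘ ιvar n r e with hw
  refine ⟨∑ β : Mon n N, (if (g β).1 = i then 1 else 0), ?_⟩
  rw [← mem_weightedHomogeneousSubmodule, Matrix.det_apply]
  apply Submodule.sum_mem
  intro σp _
  rw [Units.smul_def]
  apply Submodule.smul_mem
  haveI : SetLike.GradedMonoid (weightedHomogeneousSubmodule ℤ w) :=
    MvPolynomial.WeightedHomogeneousSubmodule.gradedMonoid
  apply SetLike.prod_mem_graded (weightedHomogeneousSubmodule ℤ w)
    (fun β => if (g β).1 = i then 1 else 0)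
  intro β _
  rw [Matrix.submatrix_apply, id_eq, mem_weightedHomogeneousSubmodule, Mpoly]
  split_ifs with h hgi hgi
  · -- X variable with first index (g β).1 = i
    have := isWeightedHomogeneous_X ℤ w
      (⟨(g β).1, ⟨(σp β).val - (g β).2.val, by
        have h1 : ((σp β).val - (g β).2.val) + (g β).2.val = (σp β).val := tsub_add_cancel_of_le h.1
        have h2 := congrArg Finsupp.degree h1
        rw [degree_add'] at h2
        have h3 := (g β).2.prop
        have h4 := (σp β).prop
        omega⟩⟩ : VarT n r e)
    convert this using 1
    simp [hw, ιvar, hgi]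
  · have := isWeightedHomogeneous_X ℤ w
      (⟨(g β).1, ⟨(σp β).val - (g β).2.val, by
        have h1 : ((σp β).val - (g β).2.val) + (g β).2.val = (σp β).val := tsub_add_cancel_of_le h.1
        have h2 := congrArg Finsupp.degree h1
        rw [degree_add'] at h2
        have h3 := (g β).2.prop
        have h4 := (σp β).prop
        omega⟩⟩ : VarT n r e)
    convert this using 1
    simp [hw, ιvar, hgi]
  · exact isWeightedHomogeneous_zero _ _ _
  · exact isWeightedHomogeneous_zero _ _ _

lemma Pdeg_iff_span (n r : ℕ) (e : Fin r → ℕ) (f : Fin r → MvPolynomial (Fin (n + 1)) ℂ)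
    (hf : ∀ i, (f i).IsHomogeneous (e i)) (N : ℕ) (hN : ∀ i, e i ≤ N) :
    Pdeg n f N ↔ ∀ β : Mon n N,
      (monomial β.val 1 : MvPolynomial (Fin (n + 1)) ℂ) ∈
        Submodule.span ℂ (Set.range (vcol n r e f N)) := by
  constructor
  · intro h β
    have hβ := h β.val β.prop
    rw [Finsupp.mem_ideal_span_range_iff_exists_finsupp] at hβ
    obtain ⟨gg, hgg⟩ := hβ
    have key : (monomial β.val 1 : MvPolynomial (Fin (n + 1)) ℂ) =
        ∑ i : Fin r, homogeneousComponent (N - e i) (gg i) * f i := by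
      have h0 : (monomial β.val 1 : MvPolynomial (Fin (n + 1)) ℂ) =
          homogeneousComponent N (monomial β.val 1) := by
        rw [homogeneousComponent_of_mem
          ((mem_homogeneousSubmodule _ _).2 (isHomogeneous_monomial 1 β.prop)), if_pos rfl]
      rw [h0, ← hgg]
      rw [Finsupp.sum_fintype _ _ (by intro i; rw [zero_mul])]
      rw [map_sum]
      refine Finset.sum_congr rfl fun i _ => ?_
      exact homogeneousComponent_mul_homogeneous (hf i) (hN i)
    rw [key]
    apply Submodule.sum_mem
    intro i _
    set h := homogeneousComponent (N - e i) (gg i) with hh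
    have hhom : h.IsHomogeneous (N - e i) := homogeneousComponent_isHomogeneous _ _
    have hrep : h * f i = ∑ γ ∈ h.support, (coeff γ h) • (monomial γ 1 * f i) := by
      conv_lhs => rw [h.as_sum, Finset.sum_mul]
      refine Finset.sum_congr rfl fun γ _ => ?_
      rw [← smul_mul_assoc, smul_monomial, smul_eq_mul, mul_one]
    rw [hrep]
    apply Submodule.sum_mem
    intro γ hγ
    apply Submodule.smul_mem
    apply Submodule.subset_span
    have hγd : Finsupp.degree γ = N - e i := by
      by_contra hne
      exact (mem_support_iff.1 hγ) (hhom.coeff_eq_zero hne)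
    exact ⟨⟨i, ⟨γ, hγd⟩⟩, rfl⟩
  · intro h β hβ
    have hle : Submodule.span ℂ (Set.range (vcol n r e f N)) ≤
        Submodule.restrictScalars ℂ (Ideal.span (Set.range f)) := by
      rw [Submodule.span_le]
      rintro _ ⟨c, rfl⟩
      exact Ideal.mul_mem_left _ _ (Ideal.subset_span ⟨c.1, rfl⟩)
    exact hle (h ⟨β, hβ⟩)

lemma coeff_sum_smul (n : ℕ) {κ : Type*} [Fintype κ] (a : κ → ℂ)
    (v : κ → MvPolynomial (Fin (n + 1)) ℂ) (d : Fin (n + 1) →₀ ℕ) :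
    coeff d (∑ c, a c • v c) = ∑ c, a c * coeff d (v c) := by
  rw [← lcoeff_apply, map_sum]
  exact Finset.sum_congr rfl fun c _ => by rw [map_smul, smul_eq_mul, lcoeff_apply]

lemma span_iff_surjective (n r : ℕ) (e : Fin r → ℕ) (f : Fin r → MvPolynomial (Fin (n + 1)) ℂ)
    (hf : ∀ i, (f i).IsHomogeneous (e i)) (N : ℕ) (hN : ∀ i, e i ≤ N) :
    (∀ β : Mon n N, (monomial β.val 1 : MvPolynomial (Fin (n + 1)) ℂ) ∈
        Submodule.span ℂ (Set.range (vcol n r e f N))) ↔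
      Function.Surjective (Mc n r e f N).mulVecLin := by
  classical
  constructor
  · intro h
    have hsingle : ∀ β : Mon n N, Pi.single (M := fun _ : Mon n N => ℂ) β 1 ∈
        LinearMap.range (Mc n r e f N).mulVecLin := by
      intro β
      obtain ⟨a, ha⟩ := (Submodule.mem_span_range_iff_exists_fun ℂ).1 (h β)
      refine ⟨a, ?_⟩
      funext β'
      have h1 : (Mc n r e f N).mulVecLin a β' =
          ∑ c, a c * coeff β'.val (vcol n r e f N c) := by
        simp only [Matrix.mulVecLin_apply, Matrix.mulVec, dotProduct]
        exact Finset.sum_congr rfl fun c _ => by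
          rw [Mc_entry n r e f hf N β' c, mul_comm]
      have h2 : coeff β'.val (monomial β.val (1 : ℂ)) = Pi.single (M := fun _ : Mon n N => ℂ) β 1 β' := by
        rw [coeff_monomial, Pi.single_apply]
        by_cases hββ' : β = β'
        · rw [if_pos (congrArg Subtype.val hββ'), if_pos hββ'.symm]
        · rw [if_neg fun hv => hββ' (Subtype.ext hv), if_neg fun hv => hββ' hv.symm]
      rw [h1, ← h2, ← ha, coeff_sum_smul]
    intro y
    have hmem : y ∈ LinearMap.range (Mc n r e f N).mulVecLin := by
      have hy : y = ∑ β : Mon n N, y β • Pi.single (M := fun _ : Mon n N => ℂ) β 1 := by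
        funext j
        rw [Finset.sum_apply]
        simp only [Pi.smul_apply, Pi.single_apply, smul_eq_mul, mul_ite, mul_one, mul_zero]
        rw [Finset.sum_ite_eq Finset.univ j y, if_pos (Finset.mem_univ _)]
      rw [hy]
      exact Submodule.sum_mem _ fun β _ => Submodule.smul_mem _ _ (hsingle β)
    exact hmem
  · intro hs β
    obtain ⟨a, ha⟩ := hs (Pi.single (M := fun _ : Mon n N => ℂ) β 1)
    have key : (monomial β.val 1 : MvPolynomial (Fin (n + 1)) ℂ) =
        ∑ c, a c • vcol n r e f N c := by
      have hrhshom : (∑ c, a c • vcol n r e f N c).IsHomogeneous N := by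
        apply IsHomogeneous.sum
        intro c _
        rw [smul_eq_C_mul]
        have h1 : (vcol n r e f N c).IsHomogeneous ((N - e c.1) + e c.1) :=
          (isHomogeneous_monomial 1 c.2.prop).mul (hf c.1)
        rw [Nat.sub_add_cancel (hN c.1)] at h1
        exact h1.C_mul _
      ext d
      by_cases hd : Finsupp.degree d = N
      · have h3 : coeff d (∑ c, a c • vcol n r e f N c) =
            (Mc n r e f N).mulVecLin a ⟨d, hd⟩ := by
          rw [coeff_sum_smul]
          simp only [Matrix.mulVecLin_apply, Matrix.mulVec, dotProduct]
          refine Finset.sum_congr rfl fun c _ => ?_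
          rw [Mc_entry n r e f hf N ⟨d, hd⟩ c, mul_comm]
        rw [h3, ha, coeff_monomial, Pi.single_apply]
        by_cases hββ' : β.val = d
        · rw [if_pos hββ', if_pos (Subtype.ext hββ'.symm)]
        · rw [if_neg hββ', if_neg fun hv => hββ' (congrArg Subtype.val hv.symm)]
      · rw [(isHomogeneous_monomial 1 β.prop).coeff_eq_zero hd, hrhshom.coeff_eq_zero hd]
    rw [key]
    exact Submodule.sum_mem _ fun c _ =>
      Submodule.smul_mem _ _ (Submodule.subset_span ⟨c, rfl⟩)

end ElimAux

open ElimAux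

/-- **Elimination theory**: for homogeneous polynomials `f₁,…,f_r` in the
variables `x₀,…,x_n` of degrees `e₁,…,e_r`, there exist finitely many
polynomials `G₁,…,G_t` with integer coefficients in the coefficients of the
tuple, each homogeneous in the coefficients of each `f_i` separately, such that
the system `f₁ = ⋯ = f_r = 0` has a nonzero common zero in `ℂ^{n+1}` if and only
if all of `G₁,…,G_t` vanish at the coefficients of `(f₁,…,f_r)`. -/
theorem elimination_theory (n r : ℕ) (e : Fin r → ℕ) (he : ∀ i, 0 < e i) :
    ∃ (t : ℕ) (G : Fin t → MvPolynomial ((Fin r) × (Fin (n + 1) →₀ ℕ)) ℤ),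
      (∀ (j : Fin t) (i : Fin r), ∃ m : ℕ,
        (G j).IsWeightedHomogeneous
          (fun v : (Fin r) × (Fin (n + 1) →₀ ℕ) => if v.1 = i then 1 else 0) m) ∧
      ∀ f : Fin r → MvPolynomial (Fin (n + 1)) ℂ,
        (∀ i, (f i).IsHomogeneous (e i)) →
        ((∃ z : Fin (n + 1) → ℂ, z ≠ 0 ∧ ∀ i, eval z (f i) = 0) ↔
          ∀ j : Fin t, aeval (fun v : (Fin r) × (Fin (n + 1) →₀ ℕ) =>
            coeff v.2 (f v.1)) (G j) = 0) := by
  classical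
  obtain ⟨T, hTsub, hTspan⟩ := exists_finset_span_eq
    {p : MvPolynomial (VarT n r e) ℤ | ∃ N, (∀ i, e i ≤ N) ∧
      ∃ g : Mon n N → ColT n r e N, p = ((Mpoly n r e N).submatrix id g).det}
  refine ⟨T.card, fun j => rename (ιvar n r e) ((T.equivFin.symm j : T) : MvPolynomial _ ℤ),
    ?_, ?_⟩
  · intro j i
    obtain ⟨N, hN, g, hg⟩ := hTsub (T.equivFin.symm j).2
    obtain ⟨m, hm⟩ := minor_isWeightedHomogeneous n r e N g i
    refine ⟨m, ?_⟩
    show IsWeightedHomogeneous _ (rename (ιvar n r e) ((T.equivFin.symm j : T) : MvPolynomial _ ℤ)) m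
    rw [hg]
    exact isWeightedHomogeneous_rename (ιvar_inj n r e) hm
  · intro f hf
    set ψ : MvPolynomial (VarT n r e) ℤ →ₐ[ℤ] ℂ :=
      aeval (fun v : VarT n r e => coeff v.2.val (f v.1)) with hψ
    have hEl : ∀ N, (∀ i, e i ≤ N) → (Pdeg n f N ↔
        ∃ g : Mon n N → ColT n r e N, ((Mc n r e f N).submatrix id g).det ≠ 0) := by
      intro N hN
      rw [Pdeg_iff_span n r e f hf N hN, span_iff_surjective n r e f hf N hN,
        surjective_mulVecLin_iff_exists_det_ne_zero]
    have hdetmap : ∀ (N : ℕ) (g : Mon n N → ColT n r e N),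
        ψ (((Mpoly n r e N).submatrix id g).det) = ((Mc n r e f N).submatrix id g).det := by
      intro N g
      rw [AlgHom.map_det]
      rfl
    have hG : ∀ p : MvPolynomial (VarT n r e) ℤ,
        aeval (fun v : (Fin r) × (Fin (n + 1) →₀ ℕ) => coeff v.2 (f v.1))
          (rename (ιvar n r e) p) = ψ p := by
      intro p
      rw [aeval_rename]
      rfl
    have key : (∃ z : Fin (n + 1) → ℂ, z ≠ 0 ∧ ∀ i, eval z (f i) = 0) ↔
        (∀ p ∈ {p : MvPolynomial (VarT n r e) ℤ | ∃ N, (∀ i, e i ≤ N) ∧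
          ∃ g : Mon n N → ColT n r e N, p = ((Mpoly n r e N).submatrix id g).det},
          ψ p = 0) := by
      rw [existsNonzeroZero_iff]
      constructor
      · intro hno p hp
        obtain ⟨N, hN, g, rfl⟩ := hp
        by_contra hne
        apply hno
        refine ⟨N, (hEl N hN).2 ⟨g, ?_⟩⟩
        intro hdet0
        exact hne (by rw [hdetmap N g, hdet0])
      · intro hvan hex
        obtain ⟨N, hPN⟩ := hex
        set N' := max N (Finset.univ.sup e) with hN'def
        have hN' : ∀ i, e i ≤ N' := fun i =>
          le_trans (Finset.le_sup (Finset.mem_univ i)) (le_max_right _ _)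
        have hP' : Pdeg n f N' := Pdeg_mono hPN (le_max_left _ _)
        obtain ⟨g, hg⟩ := (hEl N' hN').1 hP'
        apply hg
        have h0 := hvan _ ⟨N', hN', g, rfl⟩
        rw [hdetmap N' g] at h0
        exact h0
    have hST : (∀ p ∈ {p : MvPolynomial (VarT n r e) ℤ | ∃ N, (∀ i, e i ≤ N) ∧
          ∃ g : Mon n N → ColT n r e N, p = ((Mpoly n r e N).submatrix id g).det},
          ψ p = 0) ↔ (∀ p ∈ T, ψ p = 0) := by
      constructor
      · intro h p hp
        exact h p (hTsub hp)
      · intro h p hp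
        have hp' : p ∈ Ideal.span ((T : Set (MvPolynomial (VarT n r e) ℤ))) := by
          rw [hTspan]
          exact Ideal.subset_span hp
        have hker : Ideal.span ((T : Set (MvPolynomial (VarT n r e) ℤ))) ≤
            RingHom.ker (ψ.toRingHom) := by
          rw [Ideal.span_le]
          intro q hq
          exact h q hq
        exact hker hp'
    rw [key, hST]
    constructor
    · intro h j
      rw [hG]
      exact h _ (T.equivFin.symm j).2
    · intro h p hp
      have h1 := h (T.equivFin ⟨p, hp⟩)
      simp only [Equiv.symm_apply_apply] at h1
      rw [hG] at h1
      exact h1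
end
end

section
/- Let f, h_1,…,h_{m1}, g_1,…,g_{m2} ∈ ℝ[x_1,…,x_n], g_0 = 1, and K = {x ∈ ℝⁿ : h_i(x) = 0 (i ≤ m1), g_j(x) ≥ 0 (j ≤ m2)}. Suppose γ ∈ ℝ and there exist polynomials φ_1,…,φ_{m1} and SOS polynomials σ_0, σ_1,…,σ_{m2} with f − γ = Σ_{i=1}^{m1} φ_i h_i + Σ_{j=0}^{m2} σ_j g_j. Then for every u ∈ K with f(u) = γ, the first order optimality condition holds at u with the multipliers λ_i = φ_i(u) and μ_j = σ_j(u): namely ∇f(u) = Σ_{i=1}^{m1} φ_i(u) ∇h_i(u) + Σ_{j=1}^{m2} σ_j(u) ∇g_j(u), with σ_j(u) ≥ 0 and σ_j(u) g_j(u) = 0 for every j. -/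
open MvPolynomial

noncomputable section

lemma sos_nonneg {n : ℕ} {p : MvPolynomial (Fin n) ℝ} (hp : IsSOS p) (u : Fin n → ℝ) :
    0 ≤ eval u p := by
  obtain ⟨k, q, rfl⟩ := hp
  simp only [map_sum, map_pow]
  exact Finset.sum_nonneg fun i _ => sq_nonneg _

lemma sos_pderiv_zero {n : ℕ} {p : MvPolynomial (Fin n) ℝ} (hp : IsSOS p) (u : Fin n → ℝ)
    (h0 : eval u p = 0) (k : Fin n) : eval u (pderiv k p) = 0 := by
  obtain ⟨m, q, rfl⟩ := hp
  simp only [map_sum, map_pow] at h0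
  have hz : ∀ i ∈ Finset.univ, eval u (q i) = 0 := by
    intro i _
    have := (Finset.sum_eq_zero_iff_of_nonneg (fun i _ => sq_nonneg (eval u (q i)))).1 h0 i
      (Finset.mem_univ i)
    exact pow_eq_zero_iff (by norm_num) |>.1 this
  simp only [map_sum]
  apply Finset.sum_eq_zero
  intro i _
  rw [sq, pderiv_mul]
  simp [hz i (Finset.mem_univ i)]

/-- If `f − γ = Σ φ_i h_i + σ₀ + Σ σ_j g_j` with each `σ_j` SOS, then at every
`u ∈ K` with `f(u) = γ`, the first order optimality condition holds with
multipliers `λ_i = φ_i(u)`, `μ_j = σ_j(u)`: namely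
`∇f(u) = Σ φ_i(u) ∇h_i(u) + Σ σ_j(u) ∇g_j(u)`, with `σ_j(u) ≥ 0` and
`σ_j(u) g_j(u) = 0` for every `j`. -/
theorem sos_certificate_implies_first_order_condition {n m1 m2 : ℕ}
    (f : MvPolynomial (Fin n) ℝ)
    (h : Fin m1 → MvPolynomial (Fin n) ℝ) (g : Fin m2 → MvPolynomial (Fin n) ℝ)
    (K : Set (Fin n → ℝ))
    (hK : K = {x | (∀ i, eval x (h i) = 0) ∧ (∀ j, 0 ≤ eval x (g j))})
    (γ : ℝ)
    (φ : Fin m1 → MvPolynomial (Fin n) ℝ)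
    (σ0 : MvPolynomial (Fin n) ℝ) (σ : Fin m2 → MvPolynomial (Fin n) ℝ)
    (hσ0 : IsSOS σ0) (hσ : ∀ j, IsSOS (σ j))
    (hcert : f - C γ = (∑ i, φ i * h i) + σ0 + ∑ j, σ j * g j)
    (u : Fin n → ℝ) (hu : u ∈ K) (hfu : eval u f = γ) :
    (∀ k : Fin n, eval u (pderiv k f)
        = (∑ i, eval u (φ i) * eval u (pderiv k (h i)))
          + ∑ j, eval u (σ j) * eval u (pderiv k (g j))) ∧
    (∀ j, 0 ≤ eval u (σ j)) ∧ (∀ j, eval u (σ j) * eval u (g j) = 0) := by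
  rw [hK] at hu
  obtain ⟨hh, hg⟩ := hu
  have E : (0:ℝ) = eval u σ0 + ∑ j, eval u (σ j) * eval u (g j) := by
    have := congrArg (eval u) hcert
    simpa [hfu, hh] using this
  have hs : 0 ≤ ∑ j, eval u (σ j) * eval u (g j) :=
    Finset.sum_nonneg fun j _ => mul_nonneg (sos_nonneg (hσ j) u) (hg j)
  have hσ0u : eval u σ0 = 0 := le_antisymm (by linarith) (sos_nonneg hσ0 u)
  have hsum0 : ∑ j, eval u (σ j) * eval u (g j) = 0 := by linarith
  have hcj : ∀ j, eval u (σ j) * eval u (g j) = 0 := fun j =>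
    (Finset.sum_eq_zero_iff_of_nonneg
      (fun j _ => mul_nonneg (sos_nonneg (hσ j) u) (hg j))).1 hsum0 j (Finset.mem_univ j)
  refine ⟨?_, fun j => sos_nonneg (hσ j) u, hcj⟩
  intro k
  have hpσ0 := sos_pderiv_zero hσ0 u hσ0u k
  have key : ∀ j, eval u (pderiv k (σ j)) * eval u (g j) = 0 := by
    intro j
    rcases mul_eq_zero.1 (hcj j) with hz | hz
    · rw [sos_pderiv_zero (hσ j) u hz k, zero_mul]
    · rw [hz, mul_zero]
  have D := congrArg (eval u) (congrArg (pderiv k) hcert)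
  simp only [map_sub, map_add, map_sum, pderiv_mul, pderiv_C, map_mul, eval_mul, eval_add,
    map_zero, sub_zero] at D
  rw [D, hpσ0, add_zero]
  congr 1
  · exact Finset.sum_congr rfl fun i _ => by rw [hh i, mul_zero, zero_add]
  · exact Finset.sum_congr rfl fun j _ => by rw [key j, zero_add]
end
end

section
/- Let h = (h_1,…,h_{m1}) and g = (g_1,…,g_{m2}) be real polynomials in x = (x_1,…,x_n), and let f ∈ ℝ[x]. Suppose there exist σ₁ ∈ Q(g), a positive integer ℓ, and an SOS polynomial σ₂ such that (f − σ₁)^{2ℓ} + σ₂ belongs to the ideal ⟨h⟩. Then there exists k₀ ∈ ℕ such that for every ε > 0, f + ε ∈ ⟨h⟩_{2k₀} + Q_{k₀}(g). -/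
open MvPolynomial

noncomputable section

/-- The truncated ideal `⟨h⟩_{2k}`. -/
def truncIdeal {n m1 : ℕ} (h : Fin m1 → MvPolynomial (Fin n) ℝ) (k : ℕ) :
    Set (MvPolynomial (Fin n) ℝ) :=
  { p | ∃ φ : Fin m1 → MvPolynomial (Fin n) ℝ,
      (∀ i, (φ i * h i).totalDegree ≤ 2 * k) ∧ p = ∑ i, φ i * h i }

/-- The truncated quadratic module `Q_k(g)` (with `g₀ = 1`). -/
def truncQM {n m2 : ℕ} (g : Fin m2 → MvPolynomial (Fin n) ℝ) (k : ℕ) :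
    Set (MvPolynomial (Fin n) ℝ) :=
  { p | ∃ (σ0 : MvPolynomial (Fin n) ℝ) (σ : Fin m2 → MvPolynomial (Fin n) ℝ),
      IsSOS σ0 ∧ (∀ j, IsSOS (σ j)) ∧
      σ0.totalDegree ≤ 2 * k ∧ (∀ j, (σ j * g j).totalDegree ≤ 2 * k) ∧
      p = σ0 + ∑ j, σ j * g j }

section AuxSOS

variable {n : ℕ}

lemma isSOS_add {p q : MvPolynomial (Fin n) ℝ} (hp : IsSOS p) (hq : IsSOS q) :
    IsSOS (p + q) := by
  obtain ⟨k1, u, hu⟩ := hp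
  obtain ⟨k2, v, hv⟩ := hq
  refine ⟨k1 + k2, Fin.append u v, ?_⟩
  rw [Fin.sum_univ_add]
  simp [Fin.append_left, Fin.append_right, hu, hv]

lemma isSOS_sq (r : MvPolynomial (Fin n) ℝ) : IsSOS (r ^ 2) :=
  ⟨1, fun _ => r, by simp⟩

lemma isSOS_sq_mul (s : MvPolynomial (Fin n) ℝ) {p : MvPolynomial (Fin n) ℝ}
    (hp : IsSOS p) : IsSOS (s ^ 2 * p) := by
  obtain ⟨k, u, hu⟩ := hp
  refine ⟨k, fun i => s * u i, ?_⟩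
  rw [hu, Finset.mul_sum]
  simp [mul_pow]

lemma isSOS_C_mul {c : ℝ} (hc : 0 ≤ c) {p : MvPolynomial (Fin n) ℝ}
    (hp : IsSOS p) : IsSOS (C c * p) := by
  have : (C c : MvPolynomial (Fin n) ℝ) = (C (Real.sqrt c)) ^ 2 := by
    rw [← C_pow, Real.sq_sqrt hc]
  rw [this]
  exact isSOS_sq_mul _ hp

lemma sq_expand (a b : ℝ) (r : MvPolynomial (Fin n) ℝ) :
    (C a + C b * r) ^ 2 = C (a ^ 2) + C (2 * (a * b)) * r + C (b ^ 2) * r ^ 2 := by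
  simp only [C_pow, C_mul, map_ofNat]
  ring

lemma key (m : ℕ) (hm : 1 ≤ m) (q : MvPolynomial (Fin n) ℝ) :
    ∀ ε : ℝ, 0 < ε →
    ∃ lam : ℝ, 0 < lam ∧ IsSOS (C ε + q + C lam * q ^ (2 ^ m)) := by
  induction m, hm using Nat.le_induction with
  | base =>
    intro ε hε
    refine ⟨1 / (4 * ε), by positivity, ?_⟩
    have hs : Real.sqrt ε ≠ 0 := by positivity
    have : C ε + q + C (1 / (4 * ε)) * q ^ (2 ^ 1) =
        (C (Real.sqrt ε) + C (1 / (2 * Real.sqrt ε)) * q) ^ 2 := by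
      rw [sq_expand]
      have h1 : Real.sqrt ε ^ 2 = ε := Real.sq_sqrt hε.le
      have h2 : 2 * (Real.sqrt ε * (1 / (2 * Real.sqrt ε))) = 1 := by
        field_simp
      have h3 : (1 / (2 * Real.sqrt ε)) ^ 2 = 1 / (4 * ε) := by
        rw [div_pow, mul_pow, h1]; norm_num
      rw [h1, h2, h3, map_one, one_mul]
      norm_num
    rw [this]
    exact isSOS_sq _
  | succ m hm ih =>
    intro ε hε
    obtain ⟨lam, hlam, hsos⟩ := ih (ε / 2) (by positivity)
    refine ⟨lam ^ 2 / (2 * ε), by positivity, ?_⟩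
    have hs : Real.sqrt (ε / 2) ≠ 0 := by positivity
    set a : ℝ := Real.sqrt (ε / 2)
    set b : ℝ := -(lam / (2 * a))
    have key_eq : C ε + q + C (lam ^ 2 / (2 * ε)) * q ^ (2 ^ (m + 1)) =
        (C (ε / 2) + q + C lam * q ^ (2 ^ m)) + (C a + C b * q ^ (2 ^ m)) ^ 2 := by
      rw [sq_expand]
      have h1 : a ^ 2 = ε / 2 := Real.sq_sqrt (by positivity)
      have h2 : 2 * (a * b) = -lam := by
        simp only [b]
        field_simp
      have h3 : b ^ 2 = lam ^ 2 / (2 * ε) := by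
        simp only [b]
        rw [neg_sq, div_pow, mul_pow, h1]
        rw [show (2:ℝ) ^ 2 * (ε / 2) = 2 * ε by ring]
      rw [h1, h2, h3]
      have hpow : q ^ (2 ^ (m + 1)) = (q ^ (2 ^ m)) ^ 2 := by
        rw [← pow_mul, ← pow_succ]
      rw [hpow, map_neg]
      have hC : (C ε : MvPolynomial (Fin n) ℝ) = C (ε / 2) + C (ε / 2) := by
        rw [← C_add]; norm_num
      rw [hC]
      ring
    rw [key_eq]
    exact isSOS_add hsos (isSOS_sq _)

end AuxSOS

/-- If there exist `σ₁ ∈ Q(g)`, `ℓ ≥ 1` and an SOS polynomial `σ₂` with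
`(f − σ₁)^{2ℓ} + σ₂ ∈ ⟨h⟩`, then there is `k₀` such that
`f + ε ∈ ⟨h⟩_{2k₀} + Q_{k₀}(g)` for every `ε > 0`. -/
theorem perturbed_membership_of_power_in_ideal {n m1 m2 : ℕ}
    (f : MvPolynomial (Fin n) ℝ)
    (h : Fin m1 → MvPolynomial (Fin n) ℝ) (g : Fin m2 → MvPolynomial (Fin n) ℝ)
    (σ1 : MvPolynomial (Fin n) ℝ) (hσ1 : σ1 ∈ QM g)
    (ℓ : ℕ) (hℓ : 0 < ℓ)
    (σ2 : MvPolynomial (Fin n) ℝ) (hσ2 : IsSOS σ2)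
    (hmem : (f - σ1) ^ (2 * ℓ) + σ2 ∈ Ideal.span (Set.range h)) :
    ∃ k0 : ℕ, ∀ ε : ℝ, 0 < ε →
      ∃ a ∈ truncIdeal h k0, ∃ b ∈ truncQM g k0, f + C ε = a + b := by
  obtain ⟨τ0, τ, hτ0, hτ, hσ1eq⟩ := hσ1
  set t : MvPolynomial (Fin n) ℝ := f - σ1 with ht
  -- boost the exponent to 2^ℓ
  have hle : ℓ ≤ 2 ^ (ℓ - 1) := by
    have := Nat.lt_two_pow_self (n := ℓ - 1)
    omega
  set e : ℕ := 2 ^ (ℓ - 1) - ℓ with he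
  have hexp : 2 ^ ℓ = 2 * ℓ + 2 * e := by
    have : 2 ^ ℓ = 2 * 2 ^ (ℓ - 1) := by
      rw [← pow_succ']
      congr 1
      omega
    omega
  set σ2' : MvPolynomial (Fin n) ℝ := (t ^ e) ^ 2 * σ2 with hσ2'
  have hσ2'sos : IsSOS σ2' := isSOS_sq_mul _ hσ2
  have hp' : t ^ (2 ^ ℓ) + σ2' ∈ Ideal.span (Set.range h) := by
    have : t ^ (2 ^ ℓ) + σ2' = t ^ (2 * e) * (t ^ (2 * ℓ) + σ2) := by
      have h1 : (2:ℕ) ^ ℓ = 2 * e + 2 * ℓ := by omega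
      have h2 : e * 2 = 2 * e := by ring
      rw [hσ2', mul_add, ← pow_add, ← pow_mul, h1, h2]
    rw [this]
    exact Ideal.mul_mem_left _ _ hmem
  rw [Ideal.span, Submodule.mem_span_range_iff_exists_fun] at hp'
  obtain ⟨φ, hφ⟩ := hp'
  simp only [smul_eq_mul] at hφ
  -- the degree bound
  set d1 : ℕ := Finset.univ.sup (fun i => (φ i * h i).totalDegree) with hd1
  set d5 : ℕ := Finset.univ.sup (fun j => (τ j * g j).totalDegree) with hd5
  set d4 : ℕ := 2 ^ ℓ * t.totalDegree with hd4
  set k0 : ℕ := d1 + τ0.totalDegree + σ2'.totalDegree + d4 + d5 with hk0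
  refine ⟨k0, fun ε hε => ?_⟩
  obtain ⟨lam, hlam, hθ⟩ := key ℓ hℓ t ε hε
  set θ : MvPolynomial (Fin n) ℝ := C ε + t + C lam * t ^ (2 ^ ℓ) with hθdef
  refine ⟨∑ i, (C (-lam) * φ i) * h i, ⟨fun i => C (-lam) * φ i, fun i => ?_, rfl⟩,
    (τ0 + θ + C lam * σ2') + ∑ j, τ j * g j,
    ⟨τ0 + θ + C lam * σ2', τ, ?_, hτ, ?_, fun j => ?_, rfl⟩, ?_⟩
  · -- ideal part degree bound
    calc (C (-lam) * φ i * h i).totalDegree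
        = ((-lam) • (φ i * h i)).totalDegree := by rw [smul_eq_C_mul, mul_assoc]
      _ ≤ (φ i * h i).totalDegree := totalDegree_smul_le _ _
      _ ≤ d1 := Finset.le_sup (f := fun i => (φ i * h i).totalDegree) (Finset.mem_univ i)
      _ ≤ 2 * k0 := by omega
  · -- σ0 is SOS
    exact isSOS_add (isSOS_add hτ0 hθ) (isSOS_C_mul hlam.le hσ2'sos)
  · -- σ0 degree bound
    have hθdeg : θ.totalDegree ≤ d4 := by
      refine le_trans (totalDegree_add _ _) ?_
      apply max_le
      · refine le_trans (totalDegree_add _ _) ?_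
        apply max_le
        · simp [totalDegree_C]
        · calc t.totalDegree = 1 * t.totalDegree := (one_mul _).symm
            _ ≤ d4 := by
              apply Nat.mul_le_mul_right
              exact Nat.one_le_two_pow
      · calc (C lam * t ^ (2 ^ ℓ)).totalDegree
            = (lam • (t ^ (2 ^ ℓ))).totalDegree := by rw [smul_eq_C_mul]
          _ ≤ (t ^ (2 ^ ℓ)).totalDegree := totalDegree_smul_le _ _
          _ ≤ d4 := totalDegree_pow _ _
    have h2 : (C lam * σ2').totalDegree ≤ σ2'.totalDegree := by
      rw [← smul_eq_C_mul]; exact totalDegree_smul_le _ _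
    calc (τ0 + θ + C lam * σ2').totalDegree
        ≤ max (max τ0.totalDegree θ.totalDegree) (C lam * σ2').totalDegree := by
          refine le_trans (totalDegree_add _ _) ?_
          exact max_le_max (totalDegree_add _ _) le_rfl
      _ ≤ 2 * k0 := by
          have hb1 : τ0.totalDegree ≤ 2 * k0 := by omega
          have hb2 : θ.totalDegree ≤ 2 * k0 := le_trans hθdeg (by omega)
          have hb3 : (C lam * σ2').totalDegree ≤ 2 * k0 := le_trans h2 (by omega)
          exact max_le (max_le hb1 hb2) hb3
  · -- σ j * g j degree bound
    calc (τ j * g j).totalDegree ≤ d5 := Finset.le_sup (f := fun j => (τ j * g j).totalDegree) (Finset.mem_univ j)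
      _ ≤ 2 * k0 := by omega
  · -- the identity
    have ha : ∑ i, (C (-lam) * φ i) * h i = C (-lam) * (t ^ (2 ^ ℓ) + σ2') := by
      rw [← hφ, Finset.mul_sum]
      exact Finset.sum_congr rfl fun i _ => mul_assoc _ _ _
    rw [ha, hθdef, map_neg]
    have : σ1 = τ0 + ∑ j, τ j * g j := hσ1eq
    rw [ht] at *
    ring_nf
    rw [this]
    ring
end
end

section
/- Let u ∈ K be a local minimizer of f over K = {x ∈ ℝⁿ : h_i(x) = 0 (i ≤ m1), g_j(x) ≥ 0 (j ≤ m2)}, where f, h_i, g_j ∈ ℝ[x_1,…,x_n]. Let λ ∈ ℝ^{m1}, μ ∈ ℝ^{m2} satisfy ∇f(u) = Σ_i λ_i ∇h_i(u) + Σ_j μ_j ∇g_j(u), μ_j g_j(u) = 0 and μ_j ≥ 0 for all j. Let J(u) = {j_1,…,j_r} be the active set {j : g_j(u) = 0}, let L(x) = f(x) − Σ_i λ_i h_i(x) − Σ_{j∈J(u)} μ_j g_j(x), let G(u) be the (m1+r)×n matrix whose rows are ∇h_1(u),…,∇h_{m1}(u), ∇g_{j_1}(u),…,∇g_{j_r}(u),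 and let H(u) be the (n+m1+r)×(n+m1+r) block matrix [[∇²L(u), G(u)ᵀ],[G(u), 0]]. If G(u) has full row rank m1+r, then the second order sufficiency condition (vᵀ∇²L(u)v > 0 for every nonzero v with G(u)v = 0) holds at u if and only if det H(u) ≠ 0. -/
open MvPolynomial Matrix Asymptotics Filter
open scoped Matrix Classical Topology

noncomputable section

/-- gradient as a continuous linear map -/
def gradCLM {n : ℕ} (p : MvPolynomial (Fin n) ℝ) (u : Fin n → ℝ) : (Fin n → ℝ) →L[ℝ] ℝ :=
  ∑ i, eval u (pderiv i p) • ContinuousLinearMap.proj i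

@[simp] theorem gradCLM_apply {n : ℕ} (p : MvPolynomial (Fin n) ℝ) (u e : Fin n → ℝ) :
    gradCLM p u e = ∑ i, eval u (pderiv i p) * e i := by
  simp [gradCLM]

theorem hasStrictFDerivAt_eval {n : ℕ} (p : MvPolynomial (Fin n) ℝ) (u : Fin n → ℝ) :
    HasStrictFDerivAt (fun x => eval x p) (gradCLM p u) u := by
  induction p using MvPolynomial.induction_on with
  | C a =>
      have : gradCLM (C a : MvPolynomial (Fin n) ℝ) u = 0 := by
        ext e; simp [gradCLM]
      rw [this]
      simpa using hasStrictFDerivAt_const (E := Fin n → ℝ) (𝕜 := ℝ) a u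
  | add p q hp hq =>
      have : gradCLM (p + q) u = gradCLM p u + gradCLM q u := by
        ext e; simp [gradCLM, Finset.sum_add_distrib, mul_add, add_mul]
      rw [this]
      simpa using hp.fun_add hq
  | mul_X p i hp =>
      have hx : HasStrictFDerivAt (fun x : Fin n → ℝ => x i)
          (ContinuousLinearMap.proj (R := ℝ) (φ := fun _ : Fin n => ℝ) i) u :=
        (ContinuousLinearMap.proj (R := ℝ) (φ := fun _ : Fin n => ℝ) i).hasStrictFDerivAt
      have hCLM : gradCLM (p * X i) u
          = (eval u) p • ContinuousLinearMap.proj (R := ℝ) (φ := fun _ : Fin n => ℝ) i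
            + u i • gradCLM p u := by
        ext e
        have hc : ∀ j, eval u (pderiv j (p * X i))
            = eval u (pderiv j p) * u i + (if j = i then eval u p else 0) := by
          intro j
          rcases eq_or_ne j i with rfl | hne
          · simp [pderiv_mul, pderiv_X, Pi.single_apply]; ring
          · simp [pderiv_mul, pderiv_X, Pi.single_apply, hne, Ne.symm hne]; ring
        show (∑ j, eval u (pderiv j (p * X i)) • ContinuousLinearMap.proj j) e
            = ((eval u) p • ContinuousLinearMap.proj (R := ℝ) (φ := fun _ : Fin n => ℝ) i
              + u i • gradCLM p u) e
        simp only [ContinuousLinearMap.coe_sum', Finset.sum_apply,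
        ContinuousLinearMap.smul_apply, ContinuousLinearMap.proj_apply,
        ContinuousLinearMap.add_apply, smul_eq_mul, hc, add_mul,
        Finset.sum_add_distrib, ite_mul, zero_mul, Finset.sum_ite_eq,
        Finset.mem_univ, if_true, gradCLM_apply, Finset.mul_sum]
        rw [Finset.sum_congr rfl (fun j _ => by ring : ∀ j ∈ Finset.univ,
          u i * (eval u (pderiv j p) * e j) = eval u (pderiv j p) * u i * e j),
          Finset.sum_ite_eq' Finset.univ i (fun x => eval u p * e x)]
        simp [add_comm]
      rw [hCLM]
      have hfun : (fun x : Fin n → ℝ => eval x (p * X i)) = fun y => eval y p * y i := by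
        funext x; simp
      rw [hfun]
      exact hp.mul hx

theorem taylor2 {n : ℕ} (p : MvPolynomial (Fin n) ℝ) (u : Fin n → ℝ) :
    (fun e : Fin n → ℝ => eval (u + e) p - eval u p - (∑ i, eval u (pderiv i p) * e i)
        - (1/2) * ∑ i, ∑ j, eval u (pderiv i (pderiv j p)) * e i * e j)
      =o[𝓝 0] fun e => ‖e‖ ^ 2 := by
  induction p using MvPolynomial.induction_on with
  | C a =>
      have : (fun e : Fin n → ℝ => eval (u + e) (C a) - eval u (C a)
          - (∑ i, eval u (pderiv i (C a)) * e i)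
          - (1/2) * ∑ i, ∑ j, eval u (pderiv i (pderiv j (C a))) * e i * e j)
          = fun _ => (0:ℝ) := by
        funext e; simp
      rw [this]
      exact isLittleO_zero _ _
  | add p q hp hq =>
      have := hp.add hq
      refine this.congr' (Filter.Eventually.of_forall fun e => ?_) (by rfl)
      simp only [map_add, Finset.sum_add_distrib, mul_add, add_mul, Finset.sum_add_distrib]
      ring
  | mul_X p i hp =>
      have hgrad : ∀ j, eval u (pderiv j (p * X i))
          = eval u (pderiv j p) * u i + (if j = i then eval u p else 0) := by
        intro j
        rcases eq_or_ne j i with rfl | hne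
        · simp [pderiv_mul, pderiv_X, Pi.single_apply]; ring
        · simp [pderiv_mul, pderiv_X, Pi.single_apply, hne, Ne.symm hne]; ring
      have hhess : ∀ k j, eval u (pderiv k (pderiv j (p * X i)))
          = eval u (pderiv k (pderiv j p)) * u i
            + (if k = i then eval u (pderiv j p) else 0)
            + (if j = i then eval u (pderiv k p) else 0) := by
        intro k j
        by_cases hk : k = i <;> by_cases hj : j = i <;>
          simp [pderiv_mul, pderiv_X, Pi.single_apply, hk, hj, eq_comm] <;> ring
      set a0 : ℝ := eval u p with ha0
      set l : (Fin n → ℝ) → ℝ := fun e => ∑ k, eval u (pderiv k p) * e k with hl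
      set q2 : (Fin n → ℝ) → ℝ :=
        fun e => (1/2) * ∑ k, ∑ j, eval u (pderiv k (pderiv j p)) * e k * e j with hq2
      set R : (Fin n → ℝ) → ℝ := fun e => eval (u + e) p - a0 - l e - q2 e with hR
      have hS1 : ∀ e : Fin n → ℝ,
          (∑ j, eval u (pderiv j (p * X i)) * e j) = u i * l e + a0 * e i := by
        intro e
        rw [Finset.sum_congr rfl fun j _ => by rw [hgrad j]]
        simp only [add_mul, Finset.sum_add_distrib, ite_mul, zero_mul,
          Finset.sum_ite_eq', Finset.mem_univ, if_true, hl, Finset.mul_sum]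
        congr 1
        exact Finset.sum_congr rfl fun j _ => by ring
      have hS2 : ∀ e : Fin n → ℝ,
          ((1:ℝ)/2) * (∑ k, ∑ j, eval u (pderiv k (pderiv j (p * X i))) * e k * e j)
            = u i * q2 e + e i * l e := by
        intro e
        have hrow : ∀ k, (∑ j, eval u (pderiv k (pderiv j (p * X i))) * e k * e j)
            = u i * (∑ j, eval u (pderiv k (pderiv j p)) * e k * e j)
              + (if k = i then ∑ j, eval u (pderiv j p) * e k * e j else 0)
              + eval u (pderiv k p) * e k * e i := by
          intro k
          rw [Finset.sum_congr rfl fun j _ => by rw [hhess k j]]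
          simp only [add_mul, Finset.sum_add_distrib, ite_mul, zero_mul,
            Finset.sum_ite_eq', Finset.mem_univ, if_true, Finset.mul_sum]
          congr 2
          · exact Finset.sum_congr rfl fun j _ => by ring
          · split
            · exact Finset.sum_congr rfl fun j _ => by ring
            · simp
        rw [Finset.sum_congr rfl fun k _ => hrow k]
        simp only [Finset.sum_add_distrib, Finset.sum_ite_eq', Finset.mem_univ, if_true]
        have e1 : (∑ k, u i * (∑ j, eval u (pderiv k (pderiv j p)) * e k * e j))
            = u i * ∑ k, ∑ j, eval u (pderiv k (pderiv j p)) * e k * e j := by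
          rw [Finset.mul_sum]
        have e2 : (∑ j, eval u (pderiv j p) * e i * e j)
            = e i * ∑ j, eval u (pderiv j p) * e j := by
          rw [Finset.mul_sum]; exact Finset.sum_congr rfl fun j _ => by ring
        have e3 : (∑ k, eval u (pderiv k p) * e k * e i)
            = e i * ∑ k, eval u (pderiv k p) * e k := by
          rw [Finset.mul_sum]; exact Finset.sum_congr rfl fun j _ => by ring
        rw [e1, e2, e3, hq2, hl]
        ring
      have key : ∀ e : Fin n → ℝ,
          eval (u + e) (p * X i) - eval u (p * X i)
            - (∑ j, eval u (pderiv j (p * X i)) * e j)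
            - (1/2) * (∑ k, ∑ j, eval u (pderiv k (pderiv j (p * X i))) * e k * e j)
          = u i * R e + e i * R e + e i * q2 e := by
        intro e
        rw [hS1, hS2, hR]
        simp only [_root_.map_mul, eval_X, Pi.add_apply]
        ring
      have hek : ∀ k, (fun e : Fin n → ℝ => e k) =O[𝓝 0] fun e => ‖e‖ :=
        fun k => isBigO_of_le _ fun e => by simpa using norm_le_pi_norm e k
      have hei1 : (fun e : Fin n → ℝ => e i) =o[𝓝 0] fun _ => (1:ℝ) := by
        rw [isLittleO_one_iff]
        simpa using (continuous_apply i).tendsto (0 : Fin n → ℝ)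
      have heiO1 : (fun e : Fin n → ℝ => e i) =O[𝓝 0] fun _ => (1:ℝ) := hei1.isBigO
      have hq2O : q2 =O[𝓝 0] fun e => ‖e‖ ^ 2 := by
        have : ∀ (c : ℝ) (k j : Fin n),
            (fun e : Fin n → ℝ => c * e k * e j) =O[𝓝 0] fun e => ‖e‖ ^ 2 := by
          intro c k j
          have := (((hek k).mul (hek j)).const_mul_left c)
          simpa [sq, mul_assoc] using this
        have hsum : (fun e : Fin n → ℝ =>
            ∑ k, ∑ j, eval u (pderiv k (pderiv j p)) * e k * e j)
            =O[𝓝 0] fun e => ‖e‖ ^ 2 := by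
          refine IsBigO.fun_sum fun k _ => IsBigO.fun_sum fun j _ => this _ k j
        simpa [hq2] using hsum.const_mul_left (1/2)
      have h1 : (fun e => u i * R e) =o[𝓝 0] fun e => ‖e‖ ^ 2 := hp.const_mul_left (u i)
      have h2 : (fun e : Fin n → ℝ => e i * R e) =o[𝓝 0] fun e => ‖e‖ ^ 2 := by
        simpa using heiO1.mul_isLittleO hp
      have h3 : (fun e : Fin n → ℝ => e i * q2 e) =o[𝓝 0] fun e => ‖e‖ ^ 2 := by
        simpa using hei1.mul_isBigO hq2O
      refine ((h1.add h2).add h3).congr' (Filter.Eventually.of_forall fun e => ?_) (by rfl)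
      exact (key e).symm

theorem pderiv_comm' {n : ℕ} (p : MvPolynomial (Fin n) ℝ) (i j : Fin n) :
    pderiv i (pderiv j p) = pderiv j (pderiv i p) := by
  induction p using MvPolynomial.induction_on with
  | C a => simp
  | add p q hp hq => simp [hp, hq]
  | mul_X p k hp =>
      by_cases hik : i = k <;> by_cases hjk : j = k
      · subst hik; subst hjk; rfl
      · subst hik
        simp [pderiv_mul, pderiv_X, Pi.single_apply, hjk, Ne.symm hjk, hp, add_comm]
      · subst hjk
        simp [pderiv_mul, pderiv_X, Pi.single_apply, hik, Ne.symm hik, hp, add_comm]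
      · simp [pderiv_mul, pderiv_X, Pi.single_apply, hik, hjk, Ne.symm hik, Ne.symm hjk, hp]

theorem gram_det_ne_zero {ι : Type*} [Fintype ι] [DecidableEq ι] {n : ℕ}
    (G : Matrix ι (Fin n) ℝ) (hfull : LinearIndependent ℝ (fun r => G r)) :
    (G * Gᵀ).det ≠ 0 := by
  intro hdet
  obtain ⟨y, hy0, hy⟩ := (Matrix.exists_mulVec_eq_zero_iff).2 hdet
  have h1 : y ⬝ᵥ ((G * Gᵀ) *ᵥ y) = 0 := by rw [hy, dotProduct_zero]
  rw [← Matrix.mulVec_mulVec, Matrix.dotProduct_mulVec, Matrix.mulVec_transpose] at h1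
  have : y ᵥ* G = 0 := dotProduct_self_eq_zero.1 h1
  exact hy0 (Matrix.vecMul_injective_iff.2 hfull (by simpa using this))

theorem mulVec_surj {ι : Type*} [Fintype ι] [DecidableEq ι] {n : ℕ}
    (G : Matrix ι (Fin n) ℝ) (hfull : LinearIndependent ℝ (fun r => G r)) :
    Function.Surjective (G.mulVec) := by
  intro z
  refine ⟨Gᵀ *ᵥ ((G * Gᵀ)⁻¹ *ᵥ z), ?_⟩
  rw [Matrix.mulVec_mulVec, Matrix.mulVec_mulVec,
    Matrix.mul_nonsing_inv _ (isUnit_iff_ne_zero.2 (gram_det_ne_zero G hfull)), Matrix.one_mulVec]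

theorem perp_ker_mem_range {ι : Type*} [Fintype ι] [DecidableEq ι] {n : ℕ}
    (G : Matrix ι (Fin n) ℝ) (hfull : LinearIndependent ℝ (fun r => G r))
    (x : Fin n → ℝ) (hx : ∀ z, G.mulVec z = 0 → x ⬝ᵥ z = 0) :
    ∃ y, x = Gᵀ *ᵥ y := by
  set y := (G * Gᵀ)⁻¹ *ᵥ (G *ᵥ x) with hy
  set z := x - Gᵀ *ᵥ y with hz
  have hGz : G *ᵥ z = 0 := by
    rw [hz, Matrix.mulVec_sub, Matrix.mulVec_mulVec, hy, Matrix.mulVec_mulVec,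
      Matrix.mul_nonsing_inv _
        (isUnit_iff_ne_zero.2 (gram_det_ne_zero G hfull)), Matrix.one_mulVec, sub_self]
  have hxz : x ⬝ᵥ z = 0 := hx z hGz
  have hyz : (Gᵀ *ᵥ y) ⬝ᵥ z = 0 := by
    rw [Matrix.mulVec_transpose, ← Matrix.dotProduct_mulVec, hGz, dotProduct_zero]
  have hzz : z ⬝ᵥ z = 0 := by
    have : z ⬝ᵥ z = x ⬝ᵥ z - (Gᵀ *ᵥ y) ⬝ᵥ z := by
      rw [hz, sub_dotProduct]
    rw [this, hxz, hyz, sub_zero]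
  have : z = 0 := dotProduct_self_eq_zero.1 hzz
  exact ⟨y, by rw [← sub_eq_zero]; exact this⟩

theorem mv_continuous_eval {n : ℕ} (p : MvPolynomial (Fin n) ℝ) :
    Continuous fun x : Fin n → ℝ => eval x p :=
  continuous_iff_continuousAt.2 fun x => (hasStrictFDerivAt_eval p x).continuousAt

/-- The gradient of a polynomial at a point. -/
def gradAt {n : ℕ} (p : MvPolynomial (Fin n) ℝ) (u : Fin n → ℝ) : Fin n → ℝ :=
  fun i => eval u (pderiv i p)

/-- The Hessian matrix of a polynomial at a point. -/
def hessAt {n : ℕ} (p : MvPolynomial (Fin n) ℝ) (u : Fin n → ℝ) :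
    Matrix (Fin n) (Fin n) ℝ :=
  Matrix.of fun i j => eval u (pderiv i (pderiv j p))

set_option maxHeartbeats 1000000 in
/-- Let `u` be a local minimizer of `f` over `K` and `λ, μ` Lagrange multipliers
satisfying the first order and complementarity conditions. With `L` the Lagrange
function, `G(u)` the Jacobian of the active constraints and
`H(u) = [[∇²L(u), G(u)ᵀ],[G(u), 0]]`: if `G(u)` has full row rank, then the
second order sufficiency condition holds at `u` if and only if `det H(u) ≠ 0`. -/
theorem sosc_iff_det_ne_zero {n m1 m2 : ℕ}
    (f : MvPolynomial (Fin n) ℝ)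
    (h : Fin m1 → MvPolynomial (Fin n) ℝ) (g : Fin m2 → MvPolynomial (Fin n) ℝ)
    (K : Set (Fin n → ℝ))
    (hK : K = {x | (∀ i, eval x (h i) = 0) ∧ (∀ j, 0 ≤ eval x (g j))})
    (u : Fin n → ℝ) (huK : u ∈ K)
    (hmin : ∃ δ : ℝ, 0 < δ ∧ ∀ x ∈ K, dist x u < δ → eval u f ≤ eval x f)
    (lam : Fin m1 → ℝ) (mu : Fin m2 → ℝ)
    (hfoc : ∀ k : Fin n, eval u (pderiv k f)
        = (∑ i, lam i * eval u (pderiv k (h i)))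
          + ∑ j, mu j * eval u (pderiv k (g j)))
    (hcomp : ∀ j, mu j * eval u (g j) = 0)
    (hmu : ∀ j, 0 ≤ mu j)
    -- the Lagrange function `L = f − Σ λ_i h_i − Σ_{j ∈ J(u)} μ_j g_j`
    (L : MvPolynomial (Fin n) ℝ)
    (hL : L = f - (∑ i, C (lam i) * h i)
        - ∑ j ∈ Finset.univ.filter (fun j : Fin m2 => eval u (g j) = 0),
            C (mu j) * g j)
    -- the Jacobian of the active constraints at `u`
    (G : Matrix (Fin m1 ⊕ {j : Fin m2 // eval u (g j) = 0}) (Fin n) ℝ)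
    (hG : G = Matrix.of (Sum.elim (fun i => gradAt (h i) u)
        (fun j => gradAt (g j.1) u)))
    (hfull : LinearIndependent ℝ (fun r => G r)) :
    (∀ v : Fin n → ℝ, v ≠ 0 → G.mulVec v = 0 →
        0 < v ⬝ᵥ (hessAt L u).mulVec v) ↔
      (Matrix.fromBlocks (hessAt L u) Gᵀ G 0).det ≠ 0 := by
  classical
  set A := hessAt L u with hA
  rw [hK] at huK
  obtain ⟨hu1, hu2⟩ := huK
  have hmu0 : ∀ j, eval u (g j) ≠ 0 → mu j = 0 := by
    intro j hj
    rcases mul_eq_zero.1 (hcomp j) with h0 | h0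
    · exact h0
    · exact absurd h0 hj
  have hAsym : ∀ v z : Fin n → ℝ, v ⬝ᵥ A *ᵥ z = z ⬝ᵥ A *ᵥ v := by
    intro v z
    have hAt : Aᵀ = A := by
      ext k j
      simp [hA, hessAt, Matrix.transpose_apply, pderiv_comm']
    rw [Matrix.dotProduct_mulVec, ← Matrix.mulVec_transpose, hAt, dotProduct_comm]
  have hgradL0 : ∀ k, eval u (pderiv k L) = 0 := by
    intro k
    have hsumeq : (∑ j ∈ Finset.univ.filter (fun j : Fin m2 => eval u (g j) = 0),
        mu j * eval u (pderiv k (g j))) = ∑ j, mu j * eval u (pderiv k (g j)) := by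
      apply Finset.sum_filter_of_ne
      intro j _ hne
      by_contra hj
      exact hne (by rw [hmu0 j hj, zero_mul])
    rw [hL]
    simp only [map_sub, map_sum, pderiv_C_mul, eval_sub, eval_sum, eval_mul, eval_C]
    rw [hfoc k, hsumeq]
    ring
  have hLf : ∀ x : Fin n → ℝ, (∀ i, eval x (h i) = 0) →
      (∀ j : Fin m2, eval u (g j) = 0 → eval x (g j) = 0) → eval x L = eval x f := by
    intro x hx1 hx2
    rw [hL]
    simp only [eval_sub, eval_sum, eval_mul, eval_C]
    rw [Finset.sum_eq_zero fun i _ => by rw [hx1 i, mul_zero],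
      Finset.sum_eq_zero fun j hj => by
        rw [hx2 j (Finset.mem_filter.1 hj).2, mul_zero]]
    ring
  have hLu : eval u L = eval u f := hLf u hu1 (fun j hj => hj)
  -- second order necessary condition
  have sonc : ∀ w : Fin n → ℝ, G *ᵥ w = 0 → 0 ≤ w ⬝ᵥ A *ᵥ w := by
    intro w hw
    set P : (Fin m1 ⊕ {j : Fin m2 // eval u (g j) = 0}) → MvPolynomial (Fin n) ℝ :=
      Sum.elim h (fun j => g j.1) with hP
    set c : (Fin n → ℝ) → (Fin m1 ⊕ {j : Fin m2 // eval u (g j) = 0}) → ℝ :=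
      fun x r => eval x (P r) with hcdef
    set c' : (Fin n → ℝ) →L[ℝ] ((Fin m1 ⊕ {j : Fin m2 // eval u (g j) = 0}) → ℝ) :=
      ContinuousLinearMap.pi (fun r => gradCLM (P r) u) with hc'def
    have hc'eq : ∀ e, c' e = G *ᵥ e := by
      intro e
      funext r
      have hGr : G r = gradAt (P r) u := by rw [hG]; cases r <;> rfl
      show gradCLM (P r) u e = _
      rw [gradCLM_apply]
      simp only [Matrix.mulVec, dotProduct, hGr, gradAt]
    have hder : HasStrictFDerivAt c c' u := by
      apply hasStrictFDerivAt_pi''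
      intro r
      rw [hc'def, ContinuousLinearMap.proj_pi]
      exact hasStrictFDerivAt_eval (P r) u
    have hrange : c'.range = ⊤ := by
      rw [LinearMap.range_eq_top]
      intro z
      obtain ⟨v, hv⟩ := mulVec_surj G hfull z
      refine ⟨v, ?_⟩
      show c' v = z
      rw [hc'eq v]; exact hv
    have hwker : w ∈ c'.ker := by
      rw [LinearMap.mem_ker]
      show c' w = 0
      rw [hc'eq w]; exact hw
    set w₀ : c'.ker := ⟨w, hwker⟩ with hw₀
    set x : ℝ → (Fin n → ℝ) :=
      fun t => hder.implicitFunction c c' hrange (c u) (t • w₀) with hxdef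
    have hcu : c u = 0 := by
      funext r
      cases r with
      | inl i => exact hu1 i
      | inr j => exact j.2
    have hx0 : x 0 = u := by
      rw [hxdef]
      simp only [zero_smul]
      exact hder.implicitFunction_apply_image hrange
    have hxd : HasStrictFDerivAt x
        ((c'.ker).subtypeL.comp (ContinuousLinearMap.toSpanSingleton ℝ w₀)) 0 := by
      have h1 := hder.to_implicitFunction hrange
      have h2 : HasStrictFDerivAt (fun t : ℝ => t • w₀)
          (ContinuousLinearMap.toSpanSingleton ℝ w₀) 0 :=
        (ContinuousLinearMap.toSpanSingleton ℝ w₀).hasStrictFDerivAt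
      have h1' : HasStrictFDerivAt (hder.implicitFunction c c' hrange (c u))
          (c'.ker).subtypeL ((fun t : ℝ => t • w₀) 0) := by
        simpa using h1
      exact h1'.comp 0 h2
    have hxlo : (fun t : ℝ => x t - u - t • w) =o[𝓝 (0:ℝ)] fun t => t := by
      have h3 := hxd.hasFDerivAt
      rw [hasFDerivAt_iff_isLittleO_nhds_zero] at h3
      have : (fun t : ℝ => x (0 + t) - x 0
          - ((c'.ker).subtypeL.comp (ContinuousLinearMap.toSpanSingleton ℝ w₀)) t)
          = fun t : ℝ => x t - u - t • w := by
        funext t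
        simp [hx0, ContinuousLinearMap.toSpanSingleton_apply, hw₀]
      rwa [this] at h3
    have hxcont : Filter.Tendsto x (𝓝 0) (𝓝 u) := by
      have := hxd.continuousAt
      rwa [ContinuousAt, hx0] at this
    have hfeas : ∀ᶠ t in 𝓝 (0:ℝ), c (x t) = 0 := by
      have hmap := hder.map_implicitFunction_eq hrange
      have htend : Filter.Tendsto
          (fun t : ℝ => ((c u, t • w₀) :
            ((Fin m1 ⊕ {j : Fin m2 // eval u (g j) = 0}) → ℝ) × c'.ker))
          (𝓝 0) (𝓝 (c u, 0)) := by
        refine Filter.Tendsto.prodMk_nhds tendsto_const_nhds ?_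
        have := (ContinuousLinearMap.toSpanSingleton ℝ w₀).continuous.tendsto 0
        have hcs : Continuous fun t : ℝ => t • w₀ := by fun_prop
        simpa using hcs.tendsto 0
      filter_upwards [htend.eventually hmap] with t ht
      rw [hxdef]
      exact ht.trans hcu
    have hgj : ∀ j : Fin m2, ∀ᶠ t in 𝓝 (0:ℝ), 0 ≤ eval (x t) (g j) := by
      intro j
      rcases eq_or_ne (eval u (g j)) 0 with hj0 | hj0
      · filter_upwards [hfeas] with t ht
        exact (congrFun ht (Sum.inr ⟨j, hj0⟩) : eval (x t) (g j) = 0).ge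
      · have hpos : 0 < eval u (g j) := lt_of_le_of_ne (hu2 j) (Ne.symm hj0)
        have hc2 : Filter.Tendsto (fun t => eval (x t) (g j)) (𝓝 0) (𝓝 (eval u (g j))) :=
          ((mv_continuous_eval (g j)).tendsto u).comp hxcont
        filter_upwards [hc2.eventually (eventually_gt_nhds hpos)] with t ht
        exact le_of_lt ht
    have hKx : ∀ᶠ t in 𝓝 (0:ℝ), x t ∈ K := by
      rw [hK]
      filter_upwards [hfeas, (Filter.eventually_all).2 hgj] with t h1 h2
      exact ⟨fun i => (congrFun h1 (Sum.inl i) : eval (x t) (h i) = 0), h2⟩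
    obtain ⟨δ, hδ, hmin'⟩ := hmin
    have hnear : ∀ᶠ t in 𝓝 (0:ℝ), dist (x t) u < δ := by
      filter_upwards [hxcont (Metric.ball_mem_nhds u hδ)] with t ht
      exact ht
    have hLmono : ∀ᶠ t in 𝓝 (0:ℝ), eval u L ≤ eval (x t) L := by
      filter_upwards [hKx, hnear, hfeas] with t h1 h2 h3
      have hfle := hmin' (x t) h1 h2
      have e1 : eval (x t) L = eval (x t) f :=
        hLf _ (fun i => (congrFun h3 (Sum.inl i) : eval (x t) (h i) = 0))
          (fun j hj => (congrFun h3 (Sum.inr ⟨j, hj⟩) : eval (x t) (g j) = 0))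
      rw [e1, hLu]
      exact hfle
    -- Taylor expansion of L at u
    have hQ : ∀ e : Fin n → ℝ,
        (∑ k, ∑ j, eval u (pderiv k (pderiv j L)) * e k * e j) = e ⬝ᵥ A *ᵥ e := by
      intro e
      simp only [dotProduct, Matrix.mulVec, hA, hessAt, Matrix.of_apply,
        Finset.mul_sum]
      refine Finset.sum_congr rfl fun k _ => Finset.sum_congr rfl fun j _ => by ring
    have hr : (fun e : Fin n → ℝ => eval (u + e) L - eval u L - (1/2) * (e ⬝ᵥ A *ᵥ e))
        =o[𝓝 0] fun e => ‖e‖ ^ 2 := by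
      refine (taylor2 L u).congr' (Filter.Eventually.of_forall fun e => ?_) (by rfl)
      dsimp only
      rw [hQ e, Finset.sum_eq_zero fun i _ => by rw [hgradL0 i, zero_mul]]
      ring
    set d : ℝ → (Fin n → ℝ) := fun t => x t - u with hd
    have hd0 : Filter.Tendsto d (𝓝 0) (𝓝 0) := by
      have := hxcont.sub (tendsto_const_nhds (x := u))
      simpa using this
    have hdO : d =O[𝓝 (0:ℝ)] fun t => t := by
      have h1 : (fun t : ℝ => t • w) =O[𝓝 (0:ℝ)] fun t => t := by
        refine Asymptotics.IsBigO.of_bound ‖w‖ (Filter.Eventually.of_forall fun t => ?_)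
        rw [norm_smul]
        simp [mul_comm]
      have := hxlo.isBigO.add h1
      refine this.congr' (Filter.Eventually.of_forall fun t => ?_) (by rfl)
      simp [hd]
    have hcomp1 : (fun t : ℝ => eval (u + d t) L - eval u L - (1/2) * (d t ⬝ᵥ A *ᵥ d t))
        =o[𝓝 (0:ℝ)] fun t => ‖d t‖ ^ 2 := hr.comp_tendsto hd0
    have hnorm2 : (fun t : ℝ => ‖d t‖ ^ 2) =O[𝓝 (0:ℝ)] fun t => t ^ 2 := by
      have := (hdO.norm_norm).pow 2
      refine this.congr' (by rfl) (Filter.Eventually.of_forall fun t => ?_)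
      simp [abs_pow, sq_abs]
    have hrem : (fun t : ℝ => eval (x t) L - eval u L - (1/2) * (d t ⬝ᵥ A *ᵥ d t))
        =o[𝓝 (0:ℝ)] fun t => t ^ 2 := by
      refine (hcomp1.trans_isBigO hnorm2).congr'
        (Filter.Eventually.of_forall fun t => ?_) (by rfl)
      simp [hd]
    have hremdiv : Filter.Tendsto
        (fun t : ℝ => (eval (x t) L - eval u L - (1/2) * (d t ⬝ᵥ A *ᵥ d t)) / t ^ 2)
        (𝓝 0) (𝓝 0) := hrem.tendsto_div_nhds_zero
    have hQc : Continuous fun v : Fin n → ℝ => v ⬝ᵥ A *ᵥ v := by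
      have hfe : (fun v : Fin n → ℝ => v ⬝ᵥ A *ᵥ v)
          = fun v => ∑ k, v k * ∑ j, A k j * v j := by
        funext v
        simp [dotProduct, Matrix.mulVec]
      rw [hfe]
      exact continuous_finset_sum _ fun k _ => (continuous_apply k).mul
        (continuous_finset_sum _ fun j _ => continuous_const.mul (continuous_apply j))
    have hdr : Filter.Tendsto (fun t : ℝ => t⁻¹ • d t) (𝓝[≠] 0) (𝓝 w) := by
      rw [tendsto_iff_norm_sub_tendsto_zero]
      have h4 : Filter.Tendsto (fun t : ℝ => ‖d t - t • w‖ / ‖t‖) (𝓝 0) (𝓝 0) :=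
        (hxlo.norm_norm).tendsto_div_nhds_zero
      refine Filter.Tendsto.congr' ?_ (h4.mono_left nhdsWithin_le_nhds)
      filter_upwards [self_mem_nhdsWithin] with t (ht : t ≠ 0)
      rw [show t⁻¹ • d t - w = t⁻¹ • (d t - t • w) by
        funext k
        simp only [Pi.smul_apply, Pi.sub_apply, smul_eq_mul]
        field_simp]
      rw [norm_smul]
      simp [norm_inv, div_eq_inv_mul]
    have hQdiv : Filter.Tendsto (fun t : ℝ => ((1/2) * (d t ⬝ᵥ A *ᵥ d t)) / t ^ 2)
        (𝓝[≠] 0) (𝓝 ((1/2) * (w ⬝ᵥ A *ᵥ w))) := by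
      have h5 := ((hQc.tendsto w).comp hdr).const_mul (1/2 : ℝ)
      refine Filter.Tendsto.congr' ?_ h5
      filter_upwards [self_mem_nhdsWithin] with t (ht : t ≠ 0)
      show (1/2) * ((t⁻¹ • d t) ⬝ᵥ A *ᵥ (t⁻¹ • d t)) = _
      rw [Matrix.mulVec_smul, smul_dotProduct, dotProduct_smul,
        smul_eq_mul, smul_eq_mul]
      field_simp
    have hsum : Filter.Tendsto (fun t : ℝ => (eval (x t) L - eval u L) / t ^ 2)
        (𝓝[≠] 0) (𝓝 ((1/2) * (w ⬝ᵥ A *ᵥ w))) := by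
      have h6 := (hremdiv.mono_left nhdsWithin_le_nhds).add hQdiv
      rw [zero_add] at h6
      refine Filter.Tendsto.congr (fun t => ?_) h6
      rw [← add_div]
      ring_nf
    have hev : ∀ᶠ t in 𝓝[≠] (0:ℝ), 0 ≤ (eval (x t) L - eval u L) / t ^ 2 := by
      filter_upwards [hLmono.filter_mono nhdsWithin_le_nhds] with t ht
      exact div_nonneg (by linarith) (sq_nonneg t)
    have h12 : 0 ≤ (1/2) * (w ⬝ᵥ A *ᵥ w) := ge_of_tendsto hsum hev
    linarith
  -- the equivalence
  constructor
  · intro hsosc hdet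
    obtain ⟨v', hv'0, hv'⟩ := Matrix.exists_mulVec_eq_zero_iff.2 hdet
    set v : Fin n → ℝ := fun i => v' (Sum.inl i) with hv
    set y : (Fin m1 ⊕ {j : Fin m2 // eval u (g j) = 0}) → ℝ := fun r => v' (Sum.inr r) with hy
    have hsplit : v' = Sum.elim v y := funext fun r => by cases r <;> rfl
    rw [hsplit, Matrix.fromBlocks_mulVec] at hv'
    have h1 : A *ᵥ v + Gᵀ *ᵥ y = 0 := by
      funext k
      simpa using congrFun hv' (Sum.inl k)
    have h2 : G *ᵥ v = 0 := by
      funext r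
      simpa [Matrix.zero_mulVec] using congrFun hv' (Sum.inr r)
    have hvAv : v ⬝ᵥ A *ᵥ v = 0 := by
      have h3 : v ⬝ᵥ (A *ᵥ v + Gᵀ *ᵥ y) = 0 := by rw [h1, dotProduct_zero]
      rw [dotProduct_add] at h3
      have hGy : v ⬝ᵥ Gᵀ *ᵥ y = 0 := by
        rw [Matrix.dotProduct_mulVec, Matrix.vecMul_transpose, h2, zero_dotProduct]
      linarith
    have hv0 : v = 0 := by
      by_contra hv0
      exact absurd hvAv (ne_of_gt (hsosc v hv0 h2))
    have hy0 : y = 0 := by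
      have h4 : Gᵀ *ᵥ y = 0 := by
        rw [hv0, Matrix.mulVec_zero, zero_add] at h1
        exact h1
      rw [Matrix.mulVec_transpose] at h4
      exact Matrix.vecMul_injective_iff.2 hfull (by simpa using h4)
    apply hv'0
    rw [hsplit, hv0, hy0]
    funext r
    cases r <;> rfl
  · intro hdet v hv0 hGv
    have h0 := sonc v hGv
    rcases h0.lt_or_eq with hlt | heq
    · exact hlt
    exfalso
    have hperp : ∀ z : Fin n → ℝ, G *ᵥ z = 0 → (A *ᵥ v) ⬝ᵥ z = 0 := by
      intro z hz
      have hq : ∀ s : ℝ, 0 ≤ 2 * s * (v ⬝ᵥ A *ᵥ z) + s ^ 2 * (z ⬝ᵥ A *ᵥ z) := by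
        intro s
        have hmem : G *ᵥ (v + s • z) = 0 := by
          rw [Matrix.mulVec_add, hGv, Matrix.mulVec_smul, hz, smul_zero, add_zero]
        have h5 := sonc _ hmem
        have hexp : (v + s • z) ⬝ᵥ A *ᵥ (v + s • z)
            = v ⬝ᵥ A *ᵥ v + 2 * s * (v ⬝ᵥ A *ᵥ z) + s ^ 2 * (z ⬝ᵥ A *ᵥ z) := by
          rw [Matrix.mulVec_add, Matrix.mulVec_smul, add_dotProduct,
            dotProduct_add, dotProduct_add, smul_dotProduct,
            dotProduct_smul, smul_dotProduct, dotProduct_smul,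
            hAsym z v]
          simp only [smul_eq_mul]
          ring
        rw [hexp, ← heq] at h5
        linarith
      have hgoal : (A *ᵥ v) ⬝ᵥ z = v ⬝ᵥ A *ᵥ z := by
        rw [dotProduct_comm, hAsym z v]
      rw [hgoal]
      set b : ℝ := v ⬝ᵥ A *ᵥ z with hbdef
      set cc : ℝ := z ⬝ᵥ A *ᵥ z with hccdef
      have hcc : 0 ≤ cc := sonc z hz
      by_contra hb
      have hb2 : 0 < b ^ 2 := lt_of_le_of_ne (sq_nonneg b) (Ne.symm (pow_ne_zero 2 hb))
      have hcc1 : 0 < cc + 1 := by linarith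
      set r : ℝ := 1 / (cc + 1) with hrdef
      have hrpos : 0 < r := by positivity
      have hr1 : r * (cc + 1) = 1 := by
        rw [hrdef]; field_simp
      have hq' := hq (-b * r)
      nlinarith [hq', mul_pos hb2 hrpos, mul_pos (mul_pos hb2 hrpos) hrpos, hr1, hrpos, hcc]
    obtain ⟨y, hyy⟩ := perp_ker_mem_range G hfull (A *ᵥ v) hperp
    apply hdet
    refine Matrix.exists_mulVec_eq_zero_iff.1 ⟨Sum.elim v (-y), ?_, ?_⟩
    · intro hzero
      apply hv0
      funext i
      exact congrFun hzero (Sum.inl i)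
    · rw [Matrix.fromBlocks_mulVec]
      funext r
      cases r with
      | inl k => simp [Matrix.mulVec_neg, hyy]
      | inr r => simp [hGv, Matrix.zero_mulVec]
end
end

section
/- Let A be a real symmetric n×n matrix and G a real m×n matrix. Suppose vᵀAv ≥ 0 for every v ∈ ℝⁿ with Gv = 0, and suppose the (n+m)×(n+m) block matrix H = [[A, Gᵀ],[G, 0]] is nonsingular. Then vᵀAv > 0 for every nonzero v ∈ ℝⁿ with Gv = 0. -/
open Matrix
open scoped Matrix

lemma exists_u {n m : ℕ} (G : Matrix (Fin m) (Fin n) ℝ) (w : Fin n → ℝ)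
    (h : ∀ x : Fin n → ℝ, G.mulVec x = 0 → w ⬝ᵥ x = 0) :
    ∃ u : Fin m → ℝ, Gᵀ.mulVec u = w := by
  set R : Submodule ℝ (EuclideanSpace ℝ (Fin n)) := LinearMap.range (Gᵀ.toEuclideanLin)
  have inner_eq : ∀ (y : EuclideanSpace ℝ (Fin n)) (u : Fin m → ℝ),
      (inner ℝ y (Gᵀ.toEuclideanLin (WithLp.toLp 2 u)) : ℝ) = G.mulVec (WithLp.ofLp y) ⬝ᵥ u := by
    intro y u
    simp only [PiLp.inner_apply, RCLike.inner_apply, conj_trivial, toEuclideanLin_apply]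
    rw [show ∑ x, (Gᵀ *ᵥ u) x * y.ofLp x
        = WithLp.ofLp y ⬝ᵥ Gᵀ.mulVec u by simp [dotProduct, mul_comm], dotProduct_mulVec, vecMul_transpose]
  have hR : (WithLp.toLp 2 w : EuclideanSpace ℝ (Fin n)) ∈ R := by
    rw [← Submodule.orthogonal_orthogonal R]
    intro y hy
    have hGy : G.mulVec (WithLp.ofLp y) = 0 := by
      have h1 : (inner ℝ y (Gᵀ.toEuclideanLin (WithLp.toLp 2 (G.mulVec (WithLp.ofLp y))))) = 0 := by
        rw [real_inner_comm]
        exact hy _ ⟨_, rfl⟩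
      rw [inner_eq] at h1
      exact (dotProduct_self_eq_zero).mp h1
    have h2 := h _ hGy
    rw [real_inner_comm]
    simp only [PiLp.inner_apply, RCLike.inner_apply, conj_trivial]
    exact (dotProduct_comm _ _).trans h2
  obtain ⟨u, hu⟩ := hR
  exact ⟨WithLp.ofLp u, by simpa [toEuclideanLin_apply] using congrArg WithLp.ofLp hu⟩

/-- If `A` is symmetric, `vᵀAv ≥ 0` for every `v` in the kernel of `G`, and the
block matrix `H = [[A, Gᵀ],[G, 0]]` is nonsingular, then `vᵀAv > 0` for every
nonzero `v` in the kernel of `G`. -/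
theorem posdef_on_kernel_of_block_matrix_nonsingular {n m : ℕ}
    (A : Matrix (Fin n) (Fin n) ℝ) (hA : A.IsSymm)
    (G : Matrix (Fin m) (Fin n) ℝ)
    (hnonneg : ∀ v : Fin n → ℝ, G.mulVec v = 0 → 0 ≤ v ⬝ᵥ A.mulVec v)
    (hdet : (Matrix.fromBlocks A Gᵀ G (0 : Matrix (Fin m) (Fin m) ℝ)).det ≠ 0) :
    ∀ v : Fin n → ℝ, v ≠ 0 → G.mulVec v = 0 → 0 < v ⬝ᵥ A.mulVec v := by
  intro v hv hGv
  rcases lt_or_eq_of_le (hnonneg v hGv) with h | h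
  · exact h
  exfalso
  have hq : v ⬝ᵥ A.mulVec v = 0 := h.symm
  have hsymm : ∀ x y : Fin n → ℝ, x ⬝ᵥ A.mulVec y = y ⬝ᵥ A.mulVec x := by
    intro x y
    rw [dotProduct_mulVec, ← mulVec_transpose, hA, dotProduct_comm]
  have horth : ∀ x : Fin n → ℝ, G.mulVec x = 0 → (A.mulVec v) ⬝ᵥ x = 0 := by
    intro x hx
    have hc0 : 0 ≤ x ⬝ᵥ A.mulVec x := hnonneg x hx
    have key : ∀ t : ℝ,
        0 ≤ 2 * t * (v ⬝ᵥ A.mulVec x) + t ^ 2 * (x ⬝ᵥ A.mulVec x) := by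
      intro t
      have hker : G.mulVec (v + t • x) = 0 := by
        rw [mulVec_add, mulVec_smul, hGv, hx, smul_zero, add_zero]
      have h1 := hnonneg (v + t • x) hker
      have hexp : (v + t • x) ⬝ᵥ A.mulVec (v + t • x)
          = 2 * t * (v ⬝ᵥ A.mulVec x) + t ^ 2 * (x ⬝ᵥ A.mulVec x) := by
        simp only [mulVec_add, mulVec_smul, dotProduct_add, add_dotProduct,
          dotProduct_smul, smul_dotProduct, smul_eq_mul]
        rw [hq, hsymm x v]
        ring
      linarith [hexp ▸ h1]
    set b := v ⬝ᵥ A.mulVec x with hb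
    set c := x ⬝ᵥ A.mulVec x with hc
    have hb0 : b = 0 := by
      by_contra hbne
      have hc1 : (0:ℝ) < c + 1 := by linarith
      have h3 := key (-b / (c + 1))
      have h4 : (c+1)^2 * (2 * (-b/(c+1)) * b + (-b/(c+1))^2 * c)
          = -2*b^2*(c+1) + b^2*c := by
        field_simp
      have h5 : 0 ≤ -2*b^2*(c+1) + b^2*c := by
        rw [← h4]
        positivity
      have hb2 : 0 < b ^ 2 := by positivity
      nlinarith
    rw [dotProduct_comm, ← hsymm v x]
    exact hb0
  obtain ⟨u, hu⟩ := exists_u G (A.mulVec v) horth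
  have hinj : Function.Injective (Matrix.fromBlocks A Gᵀ G
      (0 : Matrix (Fin m) (Fin m) ℝ)).mulVec :=
    Matrix.mulVec_injective_iff_isUnit.2
      ((Matrix.isUnit_iff_isUnit_det _).2 (isUnit_iff_ne_zero.2 hdet))
  have hz : (Matrix.fromBlocks A Gᵀ G (0 : Matrix (Fin m) (Fin m) ℝ)).mulVec
      (Sum.elim v (-u)) = 0 := by
    rw [fromBlocks_mulVec]
    ext (i | j) <;>
      simp [hGv, hu, mulVec_neg]
  have := hinj (hz.trans (mulVec_zero _).symm)
  apply hv
  funext i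
  exact congrFun this (Sum.inl i)
end

section
/- Let A be a real symmetric n×n matrix and G a real m×n matrix. If vᵀAv > 0 for every nonzero v ∈ ℝⁿ with Gv = 0, then there exists η > 0 such that the matrix A + η·GᵀG is positive definite. -/
open Matrix
open scoped Matrix

/-- If `A` is symmetric and `vᵀAv > 0` for every nonzero `v` with `Gv = 0`, then
`A + η·GᵀG` is positive definite for some `η > 0`. -/
theorem exists_eta_posdef_of_posdef_on_kernel {n m : ℕ}
    (A : Matrix (Fin n) (Fin n) ℝ) (hA : A.IsSymm)
    (G : Matrix (Fin m) (Fin n) ℝ)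
    (hpos : ∀ v : Fin n → ℝ, v ≠ 0 → G.mulVec v = 0 → 0 < v ⬝ᵥ A.mulVec v) :
    ∃ η : ℝ, 0 < η ∧ (A + η • (Gᵀ * G)).PosDef := by
  classical
  set f : (Fin n → ℝ) → ℝ := fun v => v ⬝ᵥ A.mulVec v with hf
  set g : (Fin n → ℝ) → ℝ := fun v => G.mulVec v ⬝ᵥ G.mulVec v with hg
  have hgnn : ∀ v, 0 ≤ g v := fun v => Finset.sum_nonneg fun i _ => mul_self_nonneg _
  have hfc : Continuous f := by
    simp only [hf, dotProduct, Matrix.mulVec]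
    fun_prop
  have hgc : Continuous g := by
    simp only [hg, dotProduct, Matrix.mulVec]
    fun_prop
  -- the key quadratic form identity
  have hquad : ∀ (η : ℝ) (v : Fin n → ℝ),
      v ⬝ᵥ (A + η • (Gᵀ * G)).mulVec v = f v + η * g v := by
    intro η v
    rw [Matrix.add_mulVec, dotProduct_add, Matrix.smul_mulVec,
      dotProduct_smul, ← Matrix.mulVec_mulVec, Matrix.dotProduct_mulVec v Gᵀ,
      Matrix.vecMul_transpose]
    rfl
  -- Hermitian part
  have hherm : ∀ η : ℝ, (A + η • (Gᵀ * G)).IsHermitian := by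
    intro η
    rw [Matrix.IsSymm] at hA
    rw [Matrix.IsHermitian, Matrix.conjTranspose_eq_transpose_of_trivial,
      Matrix.transpose_add, Matrix.transpose_smul, Matrix.transpose_mul,
      Matrix.transpose_transpose, hA]
  -- it suffices to find η positive on the unit sphere
  suffices h : ∃ η : ℝ, 0 < η ∧ ∀ u : Fin n → ℝ, ‖u‖ = 1 → 0 < f u + η * g u by
    obtain ⟨η, hη, hsph⟩ := h
    refine ⟨η, hη, Matrix.PosDef.of_dotProduct_mulVec_pos (hherm η) ?_⟩
    intro v hv
    have htv : (0:ℝ) < ‖v‖ := norm_pos_iff.mpr hv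
    set t : ℝ := ‖v‖ with ht
    set u : Fin n → ℝ := t⁻¹ • v with hu
    have hun : ‖u‖ = 1 := by
      rw [hu, norm_smul, norm_inv, norm_norm, ← ht, inv_mul_cancel₀ htv.ne']
    have hfu : f u = t⁻¹ * (t⁻¹ * f v) := by
      simp [hf, hu, smul_dotProduct, Matrix.mulVec_smul, dotProduct_smul,
        smul_eq_mul, mul_assoc]
    have hgu : g u = t⁻¹ * (t⁻¹ * g v) := by
      simp [hg, hu, smul_dotProduct, Matrix.mulVec_smul, dotProduct_smul,
        smul_eq_mul, mul_assoc]
    have hpos' := hsph u hun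
    rw [hfu, hgu] at hpos'
    have : 0 < t⁻¹ * t⁻¹ * (f v + η * g v) := by nlinarith [hpos']
    have hfin : 0 < f v + η * g v := by
      have hti : 0 < t⁻¹ * t⁻¹ := by positivity
      nlinarith [this, hti]
    simpa [hquad η v] using hfin
  -- the bad set on the sphere
  set S : Set (Fin n → ℝ) := Metric.sphere 0 1 with hS
  set K : Set (Fin n → ℝ) := {v ∈ S | f v ≤ 0} with hK
  have hScpt : IsCompact S := isCompact_sphere 0 1
  have hKcpt : IsCompact K := by
    apply hScpt.inter_right
    exact isClosed_le hfc continuous_const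
  by_cases hKe : K = ∅
  · refine ⟨1, one_pos, fun u hu => ?_⟩
    have huS : u ∈ S := by simp [hS, hu]
    have : f u > 0 := by
      by_contra hle
      have : u ∈ K := ⟨huS, le_of_not_gt hle⟩
      simp [hKe] at this
    nlinarith [hgnn u]
  · obtain ⟨v₀, hv₀⟩ := Set.nonempty_iff_ne_empty.mpr hKe
    -- min of g on K
    obtain ⟨w, hwK, hwmin⟩ := hKcpt.exists_isMinOn ⟨v₀, hv₀⟩ hgc.continuousOn
    set c : ℝ := g w with hc
    have hcpos : 0 < c := by
      rcases lt_or_eq_of_le (hgnn w) with h | h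
      · exact h
      · exfalso
        have hw0 : G.mulVec w = 0 := dotProduct_self_eq_zero.mp h.symm
        have hwne : w ≠ 0 := by
          intro h0
          have := hwK.1
          simp [hS, h0] at this
        exact absurd (hpos w hwne hw0) (not_lt.mpr hwK.2)
    -- min of f on S (S is nonempty since K ⊆ S is)
    obtain ⟨z, hzS, hzmin⟩ := hScpt.exists_isMinOn ⟨v₀, hv₀.1⟩ hfc.continuousOn
    set M : ℝ := f z with hM
    refine ⟨(1 + |M|) / c, by positivity, fun u hu => ?_⟩
    have huS : u ∈ S := by simp [hS, hu]
    by_cases hfu : 0 < f u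
    · have : 0 ≤ (1 + |M|) / c * g u :=
        mul_nonneg (by positivity) (hgnn u)
      nlinarith
    · have huK : u ∈ K := ⟨huS, le_of_not_gt hfu⟩
      have hgu : c ≤ g u := hwmin huK
      have hfM : M ≤ f u := hzmin huS
      have h1 : (1 + |M|) / c * c = 1 + |M| := div_mul_cancel₀ _ hcpos.ne'
      have h2 : (1 + |M|) / c * c ≤ (1 + |M|) / c * g u := by
        apply mul_le_mul_of_nonneg_left hgu
        positivity
      have h3 : -|M| ≤ M := neg_abs_le M
      nlinarith
end

section
/- Fix n, m1 ≤ n, m2, and positive degrees d_1,…,d_{m1}, d_1′,…,d_{m2}′. There exists a real polynomial Φ in the coefficients of tuples (h_1,…,h_{m1}, g_1,…,g_{m2}) with h_i ∈ ℝ[x]_{d_i} and g_j ∈ ℝ[x]_{d_j′}, where Φ is not the identically zero polynomial, such that whenever Φ(h, g) ≠ 0, the constraint qualification condition holds at every point of K = {x ∈ ℝⁿ : h_i(x) = 0 (i ≤ m1), g_j(x) ≥ 0 (j ≤ m2)}: that is, for every u ∈ K, the gradients ∇h_1(u),…,∇h_{m1}(u) together with ∇g_j(u) for the active indices j (those with g_j(u)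 = 0) are linearly independent. -/
open MvPolynomial

noncomputable section

set_option linter.unusedSectionVars false
set_option maxHeartbeats 3200000

/-- Evaluation of a polynomial `Φ` in the coefficients of the tuple `(h, g)`. -/
def evalCoeffs {n m1 m2 : ℕ}
    (Φ : MvPolynomial ((Fin m1 ⊕ Fin m2) × (Fin n →₀ ℕ)) ℝ)
    (h : Fin m1 → MvPolynomial (Fin n) ℝ) (g : Fin m2 → MvPolynomial (Fin n) ℝ) : ℝ :=
  eval (fun v => coeff v.2 (Sum.elim h g v.1)) Φ

namespace GenericCQ
open Finset


/-- monomials in `n` variables of total degree ≤ k, as a Finset -/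
def mon (n k : ℕ) : Finset (Fin n →₀ ℕ) :=
  ((Finset.univ : Finset (Fin n → Fin (k+1))).image
    (fun c => Finsupp.equivFunOnFinite.symm fun i => (c i : ℕ))).filter
    (fun α => (α.sum fun _ e => e) ≤ k)

lemma single_le_degree {n : ℕ} (α : Fin n →₀ ℕ) (i : Fin n) :
    α i ≤ α.sum fun _ e => e := by
  by_cases h : α i = 0
  · simp [h]
  · exact Finset.single_le_sum (f := fun j => α j) (fun _ _ => Nat.zero_le _)
      (Finsupp.mem_support_iff.2 h)

lemma mem_mon {n k : ℕ} {α : Fin n →₀ ℕ} :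
    α ∈ mon n k ↔ (α.sum fun _ e => e) ≤ k := by
  constructor
  · intro h; exact (Finset.mem_filter.1 h).2
  · intro h
    refine Finset.mem_filter.2 ⟨Finset.mem_image.2 ⟨fun i => ⟨α i, Nat.lt_succ_of_le ((single_le_degree α i).trans h)⟩, Finset.mem_univ _, ?_⟩, h⟩
    ext i; simp

lemma zero_mem_mon {n k : ℕ} : (0 : Fin n →₀ ℕ) ∈ mon n k := by
  simp [mem_mon]

lemma single_mem_mon {n k : ℕ} (hk : 1 ≤ k) (i : Fin n) :
    Finsupp.single i 1 ∈ mon n k := by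
  rw [mem_mon]
  have : ((Finsupp.single i 1 : Fin n →₀ ℕ).sum fun _ e => e) = 1 :=
    Finsupp.sum_single_index rfl
  rw [this]; exact hk

lemma support_subset_mon {n k : ℕ} {p : MvPolynomial (Fin n) ℝ}
    (hp : p.totalDegree ≤ k) : p.support ⊆ mon n k := by
  intro α hα
  exact mem_mon.2 ((MvPolynomial.le_totalDegree hα).trans hp)

lemma sum_mon_monomial_coeff {n k : ℕ} {p : MvPolynomial (Fin n) ℝ}
    (hp : p.totalDegree ≤ k) :
    ∑ α ∈ mon n k, monomial α (coeff α p) = p := by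
  refine ((Finset.sum_subset (support_subset_mon hp) fun α _ hα => ?_).symm).trans p.as_sum.symm
  rw [MvPolynomial.notMem_support_iff.1 hα, map_zero]

lemma eval_eq_sum_mon {n k : ℕ} (u : Fin n → ℝ) {p : MvPolynomial (Fin n) ℝ}
    (hp : p.totalDegree ≤ k) :
    eval u p = ∑ α ∈ mon n k, coeff α p * eval u (monomial α 1) := by
  conv_lhs => rw [← sum_mon_monomial_coeff hp]
  rw [map_sum]
  refine Finset.sum_congr rfl fun α _ => ?_
  have : (monomial α) (coeff α p) = C (coeff α p) * (monomial α) (1:ℝ) := by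
    rw [MvPolynomial.C_mul_monomial, mul_one]
  rw [this, map_mul, eval_C]

lemma eval_pderiv_eq_sum_mon {n k : ℕ} (u : Fin n → ℝ) (i : Fin n)
    {p : MvPolynomial (Fin n) ℝ} (hp : p.totalDegree ≤ k) :
    eval u (pderiv i p) = ∑ α ∈ mon n k, coeff α p * eval u (pderiv i (monomial α 1)) := by
  conv_lhs => rw [← sum_mon_monomial_coeff hp]
  rw [map_sum, map_sum]
  refine Finset.sum_congr rfl fun α _ => ?_
  have : (monomial α) (coeff α p) = C (coeff α p) * (monomial α) (1:ℝ) := by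
    rw [MvPolynomial.C_mul_monomial, mul_one]
  rw [this, pderiv_C_mul, map_mul, eval_C]

lemma eval_pderiv_monomial_zero {n : ℕ} (u : Fin n → ℝ) (i : Fin n) :
    eval u (pderiv i (monomial (0 : Fin n →₀ ℕ) (1:ℝ))) = 0 := by
  rw [pderiv_monomial]; simp

lemma eval_pderiv_monomial_single {n : ℕ} (u : Fin n → ℝ) (i i' : Fin n) :
    eval u (pderiv i (monomial (Finsupp.single i' 1) (1:ℝ)))
      = if i' = i then 1 else 0 := by
  rw [pderiv_monomial]
  by_cases h : i' = i
  · subst h; simp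
  · simp [Finsupp.single_apply, h]



lemma exists_eval_ne_zero {κ : Type*} {Φ : MvPolynomial κ ℝ} (h : Φ ≠ 0) :
    ∃ x : κ → ℝ, eval x Φ ≠ 0 := by
  by_contra hc
  push_neg at hc
  exact h (MvPolynomial.funext fun x => by rw [hc x, map_zero])

lemma exists_annihilator {ι κ : Type} [Fintype ι] [Fintype κ] [DecidableEq κ] [DecidableEq ι]
    (f : κ → MvPolynomial ι ℝ) (hlt : Fintype.card ι < Fintype.card κ) :
    ∃ Φ : MvPolynomial κ ℝ, Φ ≠ 0 ∧ aeval f Φ = 0 := by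
  by_contra hc
  push_neg at hc
  have hinj : Function.Injective (aeval (R := ℝ) f) := by
    refine (injective_iff_map_eq_zero _).2 fun Φ hΦ => ?_
    by_contra h0; exact hc Φ h0 hΦ
  set M := Fintype.card ι with hM
  set N := Fintype.card κ with hN
  set D1 := (Finset.univ.sup fun k : κ => (f k).totalDegree) + 1 with hD1
  set E := N * D1 with hE
  set t := E ^ M with ht
  set s1 := t * E with hs1
  set B : Finset (κ →₀ ℕ) := (Finset.univ : Finset (κ → Fin (t+1))).image
      (fun c => Finsupp.equivFunOnFinite.symm fun k => (c k : ℕ)) with hB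
  have hBcard : B.card = (t+1)^N := by
    rw [hB, Finset.card_image_of_injective _ ?_, Finset.card_univ]
    · simp [hN]
    · intro a b hab
      funext k
      exact Fin.val_injective (congrFun (Finsupp.equivFunOnFinite.symm.injective hab) k)
  set A : Finset (ι →₀ ℕ) := ((Finset.univ : Finset (ι → Fin (s1+1))).image
      (fun c => Finsupp.equivFunOnFinite.symm fun i => (c i : ℕ))) with hA
  have hAcard : A.card ≤ (s1+1)^M := by
    refine le_trans Finset.card_image_le ?_
    rw [Finset.card_univ]
    simp [hM]
  have hdeg : ∀ β ∈ B, (aeval f (monomial β (1:ℝ))).totalDegree ≤ s1 := by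
    intro β hβ
    rw [aeval_monomial, map_one, one_mul]
    refine le_trans (MvPolynomial.totalDegree_finset_prod _ _) ?_
    have hβk : ∀ k, β k ≤ t := by
      obtain ⟨c, _, rfl⟩ := Finset.mem_image.1 hβ
      intro k
      simpa using Fin.is_le (c k)
    calc ∑ k ∈ β.support, ((f k) ^ (β k)).totalDegree
        ≤ ∑ k ∈ β.support, t * D1 := by
          refine Finset.sum_le_sum fun k _ => ?_
          refine le_trans (MvPolynomial.totalDegree_pow _ _) ?_
          have h1 : (f k).totalDegree ≤ D1 := by
            rw [hD1]
            exact le_trans (Finset.le_sup (f := fun k : κ => (f k).totalDegree) (Finset.mem_univ k)) (Nat.le_succ _)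
          exact Nat.mul_le_mul (hβk k) h1
      _ ≤ N * (t * D1) := by
          refine le_trans (Finset.sum_le_card_nsmul _ _ _ fun k _ => le_rfl) ?_
          simp only [smul_eq_mul]
          exact Nat.mul_le_mul_right _ (le_trans (Finset.card_le_univ _) (le_of_eq hN.symm))
      _ = s1 := by rw [hs1, hE]; ring
  set w : Finset (MvPolynomial ι ℝ) := A.image fun α => monomial α 1 with hw
  have hmemw : ∀ β ∈ B, aeval f (monomial β (1:ℝ)) ∈ Submodule.span ℝ (w : Set (MvPolynomial ι ℝ)) := by
    intro β hβ
    set q := aeval f (monomial β (1:ℝ)) with hq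
    have hsupp : q.support ⊆ A := by
      intro α hα
      have h1 : ∀ i, α i ≤ s1 := by
        intro i
        calc α i ≤ α.sum fun _ e => e := by
              by_cases h : α i = 0
              · simp [h]
              · exact Finset.single_le_sum (f := fun j => α j) (fun _ _ => Nat.zero_le _)
                  (Finsupp.mem_support_iff.2 h)
          _ ≤ q.totalDegree := MvPolynomial.le_totalDegree hα
          _ ≤ s1 := hdeg β hβ
      refine Finset.mem_image.2 ⟨fun i => ⟨α i, Nat.lt_succ_of_le (h1 i)⟩, Finset.mem_univ _, ?_⟩
      ext i; simp
    rw [show q = ∑ α ∈ q.support, monomial α (coeff α q) from q.as_sum]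
    refine Submodule.sum_mem _ fun α hα => ?_
    have : (monomial α) (coeff α q) = (coeff α q) • (monomial α (1:ℝ)) := by
      simp [MvPolynomial.smul_monomial]
    rw [this]
    exact Submodule.smul_mem _ _ (Submodule.subset_span
      (Finset.mem_image.2 ⟨α, hsupp hα, rfl⟩))
  set W := Submodule.span ℝ (w : Set (MvPolynomial ι ℝ)) with hW
  have hli : LinearIndependent ℝ (fun β : {x // x ∈ B} => aeval f (monomial (β : κ →₀ ℕ) (1:ℝ))) := by
    have h1 : LinearIndependent ℝ (fun β : κ →₀ ℕ => (monomial β (1:ℝ) : MvPolynomial κ ℝ)) := by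
      have := (MvPolynomial.basisMonomials κ ℝ).linearIndependent
      rwa [coe_basisMonomials] at this
    have h2 := h1.comp (Subtype.val : {x // x ∈ B} → κ →₀ ℕ) Subtype.val_injective
    have h3 := h2.map' (aeval (R := ℝ) f).toLinearMap (LinearMap.ker_eq_bot.2 hinj)
    simpa [Function.comp_def] using h3
  have hliW : LinearIndependent ℝ
      (fun β : {x // x ∈ B} => (⟨aeval f (monomial (β : κ →₀ ℕ) (1:ℝ)), hmemw β.1 β.2⟩ : W)) := by
    refine LinearIndependent.of_comp W.subtype ?_
    simpa [Function.comp_def] using hli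
  haveI : FiniteDimensional ℝ W := FiniteDimensional.span_finset ℝ w
  have hcard1 : Fintype.card {x // x ∈ B} ≤ Module.finrank ℝ W :=
    hliW.fintype_card_le_finrank
  have hcard2 : Module.finrank ℝ W ≤ w.card := finrank_span_finset_le_card w
  have hwcard : w.card ≤ A.card := Finset.card_image_le
  have hmain : (t+1)^N ≤ (s1+1)^M := by
    calc (t+1)^N = B.card := hBcard.symm
      _ = Fintype.card {x // x ∈ B} := (Fintype.card_coe B).symm
      _ ≤ Module.finrank ℝ W := hcard1
      _ ≤ w.card := hcard2
      _ ≤ A.card := hwcard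
      _ ≤ (s1+1)^M := hAcard
  -- numeric contradiction
  have hNpos : 1 ≤ N := lt_of_le_of_lt (Nat.zero_le M) hlt
  have hEpos : 1 ≤ E := Nat.one_le_iff_ne_zero.2 (by positivity)
  have h1 : s1 + 1 ≤ (t+1) * E := by
    rw [hs1]; nlinarith
  have h2 : (s1+1)^M ≤ ((t+1)*E)^M := Nat.pow_le_pow_left h1 M
  have h3 : ((t+1)*E)^M = (t+1)^M * E^M := mul_pow _ _ _
  have h4 : (t+1)^M * E^M < (t+1)^M * (t+1) := by
    rw [← ht]
    exact mul_lt_mul_of_pos_left (Nat.lt_succ_self t) (Nat.pow_pos (Nat.succ_pos t))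
  have h5 : (t+1)^M * (t+1) = (t+1)^(M+1) := (pow_succ _ _).symm
  have h6 : (t+1)^(M+1) ≤ (t+1)^N := Nat.pow_le_pow_right (Nat.succ_pos t) hlt
  omega

variable (n : ℕ) {τ : Type} [Fintype τ] [DecidableEq τ] (D : τ → ℕ) (S : Finset τ) (s0 : τ)

def Vc : Finset (τ × (Fin n →₀ ℕ)) :=
  Finset.univ.biUnion fun s => (mon n (D s)).image fun α => (s, α)

lemma mem_Vc {v : τ × (Fin n →₀ ℕ)} : v ∈ Vc n D ↔ v.2 ∈ mon n (D v.1) := by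
  constructor
  · intro h
    obtain ⟨s, -, h⟩ := Finset.mem_biUnion.1 h
    obtain ⟨α, hα, h2⟩ := Finset.mem_image.1 h
    obtain rfl := h2.symm
    exact hα
  · intro h
    exact Finset.mem_biUnion.2 ⟨v.1, Finset.mem_univ _, Finset.mem_image.2 ⟨v.2, h, rfl⟩⟩

def SingFS : Finset (Fin n →₀ ℕ) := Finset.univ.image fun i : Fin n => Finsupp.single i 1

def DetFS : Finset (τ × (Fin n →₀ ℕ)) :=
  S.image (fun s => (s, (0 : Fin n →₀ ℕ))) ∪
    Finset.univ.image fun i : Fin n => (s0, Finsupp.single i 1)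

lemma mem_DetFS {v : τ × (Fin n →₀ ℕ)} :
    v ∈ DetFS n S s0 ↔
      ((v.1 ∈ S ∧ v.2 = 0) ∨ (v.1 = s0 ∧ ∃ i, v.2 = Finsupp.single i 1)) := by
  obtain ⟨s, α⟩ := v
  simp only [DetFS, Finset.mem_union, Finset.mem_image, Finset.mem_univ, true_and,
    Prod.mk.injEq]
  aesop

abbrev Par : Type := {v // v ∈ Vc n D \ DetFS n S s0} ⊕ (Fin n ⊕ {s // s ∈ S.erase s0})

def embU : MvPolynomial (Fin n) ℝ →ₐ[ℝ] MvPolynomial (Par n D S s0) ℝ :=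
  rename fun i : Fin n => (Sum.inr (Sum.inl i) : Par n D S s0)

lemma mem_free₁ {α : Fin n →₀ ℕ} (hα : α ∈ mon n (D s0) \ insert 0 (SingFS n)) :
    (s0, α) ∈ Vc n D \ DetFS n S s0 := by
  obtain ⟨h1, h2⟩ := Finset.mem_sdiff.1 hα
  refine Finset.mem_sdiff.2 ⟨(mem_Vc n D).2 h1, fun hd => h2 ?_⟩
  rcases (mem_DetFS n S s0).1 hd with ⟨-, h0⟩ | ⟨-, i, hi⟩
  · exact Finset.mem_insert.2 (Or.inl h0)
  · exact Finset.mem_insert.2 (Or.inr (Finset.mem_image.2 ⟨i, Finset.mem_univ _, hi.symm⟩))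

lemma mem_free₂ {s : τ} {α : Fin n →₀ ℕ} (hs : s ∈ S.erase s0)
    (hα : α ∈ (mon n (D s)).erase 0) :
    (s, α) ∈ Vc n D \ DetFS n S s0 := by
  refine Finset.mem_sdiff.2 ⟨(mem_Vc n D).2 (Finset.mem_of_mem_erase hα), fun hd => ?_⟩
  rcases (mem_DetFS n S s0).1 hd with ⟨-, h0⟩ | ⟨h1, -⟩
  · exact (Finset.ne_of_mem_erase hα) h0
  · exact (Finset.ne_of_mem_erase hs) h1

def Bpoly (i : Fin n) : MvPolynomial (Par n D S s0) ℝ :=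
  -( (∑ a ∈ (mon n (D s0) \ insert 0 (SingFS n)).attach,
        X (Sum.inl ⟨(s0, a.1), mem_free₁ n D S s0 a.2⟩) *
          embU n D S s0 (pderiv i (monomial a.1 1)))
   + ∑ b ∈ (S.erase s0).attach,
       X (Sum.inr (Sum.inr b)) *
         ∑ a ∈ ((mon n (D b.1)).erase 0).attach,
           X (Sum.inl ⟨(b.1, a.1), mem_free₂ n D S s0 b.2 a.2⟩) *
             embU n D S s0 (pderiv i (monomial a.1 1)) )

def coefNC (v : τ × (Fin n →₀ ℕ)) : MvPolynomial (Par n D S s0) ℝ :=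
  if h : v ∈ Vc n D \ DetFS n S s0 then X (Sum.inl ⟨v, h⟩)
  else if h2 : ∃ i : Fin n, v.2 = Finsupp.single i 1 then Bpoly n D S s0 h2.choose
  else 0

def Cpoly (s : τ) : MvPolynomial (Par n D S s0) ℝ :=
  -∑ α ∈ (mon n (D s)).erase 0, coefNC n D S s0 (s, α) * embU n D S s0 (monomial α 1)

def coefPoly (v : τ × (Fin n →₀ ℕ)) : MvPolynomial (Par n D S s0) ℝ :=
  if v.1 ∈ S ∧ v.2 = 0 then Cpoly n D S s0 v.1 else coefNC n D S s0 v

def xpt (p : τ → MvPolynomial (Fin n) ℝ) (u : Fin n → ℝ) (lam : τ → ℝ) :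
    Par n D S s0 → ℝ :=
  Sum.elim (fun a => coeff a.1.2 (p a.1.1)) (Sum.elim u fun b => lam b.1)

lemma eval_embU (p : τ → MvPolynomial (Fin n) ℝ) (u : Fin n → ℝ) (lam : τ → ℝ)
    (q : MvPolynomial (Fin n) ℝ) :
    eval (xpt n D S s0 p u lam) (embU n D S s0 q) = eval u q := by
  rw [embU, eval_rename]
  have : (xpt n D S s0 p u lam ∘ fun i : Fin n => (Sum.inr (Sum.inl i) : Par n D S s0)) = u :=
    funext fun i => rfl
  rw [this]


lemma eval_Bpoly (hD : ∀ s, 1 ≤ D s) (p : τ → MvPolynomial (Fin n) ℝ)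
    (hdeg : ∀ s, (p s).totalDegree ≤ D s) (u : Fin n → ℝ) (lam : τ → ℝ)
    (hs0 : s0 ∈ S) (hl0 : lam s0 = 1)
    (hgrad : ∀ i, ∑ s ∈ S, lam s * eval u (pderiv i (p s)) = 0) (i : Fin n) :
    eval (xpt n D S s0 p u lam) (Bpoly n D S s0 i)
      = coeff (Finsupp.single i 1) (p s0) := by
  set x := xpt n D S s0 p u lam with hx
  set Dv : (Fin n →₀ ℕ) → ℝ := fun α => eval u (pderiv i (monomial α 1)) with hDv
  have hevalB : eval x (Bpoly n D S s0 i)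
      = -( (∑ α ∈ mon n (D s0) \ insert 0 (SingFS n), coeff α (p s0) * Dv α)
         + ∑ b ∈ S.erase s0, lam b *
             ∑ α ∈ (mon n (D b)).erase 0, coeff α (p b) * Dv α ) := by
    rw [Bpoly, map_neg, map_add, map_sum, map_sum]
    congr 1
    congr 1
    · rw [← Finset.sum_attach (mon n (D s0) \ insert 0 (SingFS n))
        (fun α => coeff α (p s0) * Dv α)]
      refine Finset.sum_congr rfl fun a _ => ?_
      rw [map_mul, eval_X, eval_embU]
      rfl
    · rw [← Finset.sum_attach (S.erase s0)
        (fun b => lam b * ∑ α ∈ (mon n (D b)).erase 0, coeff α (p b) * Dv α)]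
      refine Finset.sum_congr rfl fun b _ => ?_
      rw [map_mul, eval_X, map_sum]
      congr 1
      rw [← Finset.sum_attach ((mon n (D b.1)).erase 0)
        (fun α => coeff α (p b.1) * Dv α)]
      refine Finset.sum_congr rfl fun a _ => ?_
      rw [map_mul, eval_X, eval_embU]
      rfl
  -- expansion of gradient sums
  have hG : ∀ s, eval u (pderiv i (p s)) = ∑ α ∈ mon n (D s), coeff α (p s) * Dv α :=
    fun s => eval_pderiv_eq_sum_mon u i (hdeg s)
  have hsplit0 : ∑ α ∈ mon n (D s0), coeff α (p s0) * Dv α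
      = coeff (Finsupp.single i 1) (p s0)
        + ∑ α ∈ mon n (D s0) \ insert 0 (SingFS n), coeff α (p s0) * Dv α := by
    rw [← Finset.sum_inter_add_sum_sdiff (mon n (D s0)) (insert 0 (SingFS n))
      (fun α => coeff α (p s0) * Dv α)]
    congr 1
    refine Finset.sum_eq_single_of_mem (Finsupp.single i 1) ?_ ?_ |>.trans ?_
    · exact Finset.mem_inter.2 ⟨single_mem_mon (hD s0) i,
        Finset.mem_insert.2 (Or.inr (Finset.mem_image.2 ⟨i, Finset.mem_univ _, rfl⟩))⟩
    · intro β hβ hne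
      rcases Finset.mem_insert.1 (Finset.mem_inter.1 hβ).2 with h0 | hsing
      · subst h0
        rw [hDv]
        simp only [eval_pderiv_monomial_zero]
        ring
      · obtain ⟨i', -, rfl⟩ := Finset.mem_image.1 hsing
        have hii : i' ≠ i := fun hc => hne (by rw [hc])
        rw [hDv]
        simp only [eval_pderiv_monomial_single, if_neg hii]
        ring
    · rw [hDv]
      simp [eval_pderiv_monomial_single]
  have hsplit : ∀ b ∈ S.erase s0, ∑ α ∈ mon n (D b), coeff α (p b) * Dv α
      = ∑ α ∈ (mon n (D b)).erase 0, coeff α (p b) * Dv α := by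
    intro b _
    refine (Finset.sum_erase _ ?_).symm
    rw [hDv]
    simp only [eval_pderiv_monomial_zero]
    ring
  have hgr := hgrad i
  rw [← Finset.add_sum_erase _ _ hs0] at hgr
  rw [hl0, one_mul, hG s0, hsplit0] at hgr
  have hgr2 : ∑ s ∈ S.erase s0, lam s * eval u (pderiv i (p s))
      = ∑ b ∈ S.erase s0, lam b * ∑ α ∈ (mon n (D b)).erase 0, coeff α (p b) * Dv α := by
    refine Finset.sum_congr rfl fun b hb => ?_
    rw [hG b, hsplit b hb]
  rw [hgr2] at hgr
  rw [hevalB]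
  linarith

set_option maxHeartbeats 2000000 in
lemma eval_coefPoly_eq (hD : ∀ s, 1 ≤ D s) (p : τ → MvPolynomial (Fin n) ℝ)
    (hdeg : ∀ s, (p s).totalDegree ≤ D s) (u : Fin n → ℝ) (lam : τ → ℝ)
    (hs0 : s0 ∈ S) (hl0 : lam s0 = 1)
    (hzero : ∀ s ∈ S, eval u (p s) = 0)
    (hgrad : ∀ i, ∑ s ∈ S, lam s * eval u (pderiv i (p s)) = 0) :
    ∀ v ∈ Vc n D, eval (xpt n D S s0 p u lam) (coefPoly n D S s0 v)
      = coeff v.2 (p v.1) := by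
  have hB := eval_Bpoly n D S s0 hD p hdeg u lam hs0 hl0 hgrad
  have hNC : ∀ s (α : Fin n →₀ ℕ), α ∈ mon n (D s) → (s, α) ∉ DetFS n S s0 ∨ α ≠ 0 →
      eval (xpt n D S s0 p u lam) (coefNC n D S s0 (s, α)) = coeff α (p s) := by
    intro s α hmon hcase
    by_cases hfree : (s, α) ∈ Vc n D \ DetFS n S s0
    · rw [coefNC, dif_pos hfree, eval_X]
      rfl
    · have hVc : (s, α) ∈ Vc n D := (mem_Vc n D).2 hmon
      have hDet : (s, α) ∈ DetFS n S s0 := by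
        by_contra hc
        exact hfree (Finset.mem_sdiff.2 ⟨hVc, hc⟩)
      have hne : α ≠ 0 := by
        rcases hcase with hc | hc
        · exact absurd hDet hc
        · exact hc
      rcases (mem_DetFS n S s0).1 hDet with ⟨-, h0⟩ | ⟨hs, i, hsing⟩
      · exact absurd h0 hne
      · have hs' : s = s0 := hs
        have hsing' : α = Finsupp.single i 1 := hsing
        rw [coefNC, dif_neg hfree]
        have h2 : ∃ i' : Fin n, ((s, α) : τ × (Fin n →₀ ℕ)).2 = Finsupp.single i' 1 := ⟨i, hsing⟩
        rw [dif_pos h2]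
        have hch : h2.choose = i := by
          have h3 := h2.choose_spec
          refine Finsupp.single_left_injective (b := (1:ℕ)) one_ne_zero ?_
          show Finsupp.single h2.choose 1 = Finsupp.single i 1
          rw [← h3]
          exact hsing
        rw [hch, hB i, hsing', hs']
  have hC : ∀ s ∈ S, eval (xpt n D S s0 p u lam) (Cpoly n D S s0 s) = coeff 0 (p s) := by
    intro s hs
    have h1 : eval (xpt n D S s0 p u lam) (Cpoly n D S s0 s)
        = -∑ α ∈ (mon n (D s)).erase 0, coeff α (p s) * eval u (monomial α 1) := by
      rw [Cpoly, map_neg, map_sum]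
      congr 1
      refine Finset.sum_congr rfl fun α hα => ?_
      rw [map_mul, eval_embU, hNC s α (Finset.mem_of_mem_erase hα)
        (Or.inr (Finset.ne_of_mem_erase hα))]
    have h2 := eval_eq_sum_mon u (hdeg s)
    rw [hzero s hs] at h2
    rw [← Finset.add_sum_erase (mon n (D s))
      (fun α => coeff α (p s) * eval u (monomial α 1)) (zero_mem_mon (n := n) (k := D s))] at h2
    have h3 : eval u (monomial (0 : Fin n →₀ ℕ) (1:ℝ)) = 1 := by
      simp
    rw [h3, mul_one] at h2
    rw [h1]
    linarith
  intro v hv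
  obtain ⟨s, α⟩ := v
  rw [coefPoly]
  split_ifs with hc
  · obtain ⟨hs, rfl⟩ := hc
    exact hC s hs
  · refine hNC s α ((mem_Vc n D).1 hv) ?_
    by_cases h0 : α = 0
    · subst h0
      refine Or.inl fun hdet => ?_
      rcases (mem_DetFS n S s0).1 hdet with ⟨hs, -⟩ | ⟨-, i, hi⟩
      · exact hc ⟨hs, rfl⟩
      · exact one_ne_zero (Finsupp.single_eq_zero.1 hi.symm)
    · exact Or.inr h0



lemma card_Par_lt (hD : ∀ s, 1 ≤ D s) (hs0 : s0 ∈ S) :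
    Fintype.card (Par n D S s0) < Fintype.card {v // v ∈ Vc n D} := by
  have hsub : DetFS n S s0 ⊆ Vc n D := by
    intro v hv
    rcases (mem_DetFS n S s0).1 hv with ⟨hs, h0⟩ | ⟨hs, i, hi⟩
    · refine (mem_Vc n D).2 ?_
      rw [h0]
      exact zero_mem_mon
    · refine (mem_Vc n D).2 ?_
      rw [hi]
      exact single_mem_mon (hD v.1) i
  have hdet_card : (DetFS n S s0).card = S.card + n := by
    rw [DetFS, Finset.card_union_of_disjoint, Finset.card_image_of_injective,
      Finset.card_image_of_injective, Finset.card_univ, Fintype.card_fin]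
    · intro a b hab
      have := congrArg Prod.snd hab
      exact Finsupp.single_left_injective (b := (1:ℕ)) one_ne_zero this
    · intro a b hab
      exact congrArg Prod.fst hab
    · rw [Finset.disjoint_left]
      rintro v hv1 hv2
      obtain ⟨s, hs, rfl⟩ := Finset.mem_image.1 hv1
      obtain ⟨i, -, hveq⟩ := Finset.mem_image.1 hv2
      have h0 : Finsupp.single i (1:ℕ) = 0 := congrArg Prod.snd hveq
      exact one_ne_zero (Finsupp.single_eq_zero.1 h0)
  have h1 : Fintype.card (Par n D S s0)
      = (Vc n D \ DetFS n S s0).card + (n + (S.card - 1)) := by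
    rw [Fintype.card_sum, Fintype.card_sum, Fintype.card_coe, Fintype.card_coe,
      Fintype.card_fin, Finset.card_erase_of_mem hs0]
  have h2 : (Vc n D \ DetFS n S s0).card = (Vc n D).card - (S.card + n) := by
    rw [Finset.card_sdiff_of_subset hsub, hdet_card]
  have h3 : S.card + n ≤ (Vc n D).card := hdet_card ▸ Finset.card_le_card hsub
  have h4 : 1 ≤ S.card := Finset.card_pos.2 ⟨s0, hs0⟩
  rw [Fintype.card_coe, h1, h2]
  omega

lemma chart_exists (hD : ∀ s, 1 ≤ D s) (hs0 : s0 ∈ S) :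
    ∃ Φ : MvPolynomial {v // v ∈ Vc n D} ℝ, Φ ≠ 0 ∧
      aeval (fun v : {v // v ∈ Vc n D} => coefPoly n D S s0 v.1) Φ = 0 :=
  exists_annihilator _ (card_Par_lt n D S s0 hD hs0)

lemma eval_comp_aeval {σ P : Type*} (ψ : σ → MvPolynomial P ℝ) (x : P → ℝ)
    (Φ : MvPolynomial σ ℝ) :
    eval x (aeval ψ Φ) = eval (fun v => eval x (ψ v)) Φ := by
  rw [aeval_def, MvPolynomial.algebraMap_eq, ← MvPolynomial.eval_assoc]
  rfl

lemma coeff_sum_monomial {n k : ℕ} (c : (Fin n →₀ ℕ) → ℝ) (β : Fin n →₀ ℕ) :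
    coeff β (∑ α ∈ mon n k, monomial α (c α)) = if β ∈ mon n k then c β else 0 := by
  rw [MvPolynomial.coeff_sum]
  rw [Finset.sum_congr rfl fun α _ => MvPolynomial.coeff_monomial β α (c α)]
  simp [Finset.sum_ite_eq]

end GenericCQ

open GenericCQ

/-- There is a nonzero polynomial `Φ` in the coefficients of `(h₁,…,h_{m1},
g₁,…,g_{m2})` (with the given degree bounds) such that whenever `Φ(h,g) ≠ 0`,
the constraint qualification condition holds at every point of `K`. -/
theorem generic_constraint_qualification
    (n m1 m2 : ℕ) (hm1 : m1 ≤ n)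
    (d : Fin m1 → ℕ) (d' : Fin m2 → ℕ)
    (hd : ∀ i, 0 < d i) (hd' : ∀ j, 0 < d' j) :
    ∃ Φ : MvPolynomial ((Fin m1 ⊕ Fin m2) × (Fin n →₀ ℕ)) ℝ,
      (∃ (h : Fin m1 → MvPolynomial (Fin n) ℝ) (g : Fin m2 → MvPolynomial (Fin n) ℝ),
        (∀ i, (h i).totalDegree ≤ d i) ∧ (∀ j, (g j).totalDegree ≤ d' j) ∧
        evalCoeffs Φ h g ≠ 0) ∧
      ∀ (h : Fin m1 → MvPolynomial (Fin n) ℝ) (g : Fin m2 → MvPolynomial (Fin n) ℝ),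
        (∀ i, (h i).totalDegree ≤ d i) → (∀ j, (g j).totalDegree ≤ d' j) →
        evalCoeffs Φ h g ≠ 0 →
        ∀ u : Fin n → ℝ, (∀ i, eval u (h i) = 0) → (∀ j, 0 ≤ eval u (g j)) →
          LinearIndependent ℝ
            (Sum.elim (fun i : Fin m1 => gradAt (h i) u)
              (fun j : {j : Fin m2 // eval u (g j) = 0} => gradAt (g j.1) u)) := by
  classical
  let D : Fin m1 ⊕ Fin m2 → ℕ := Sum.elim d d'
  have hD : ∀ s, 1 ≤ D s := by rintro (i | j); exacts [hd i, hd' j]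
  choose Φc hΦc0 hΦcann using fun (S : Finset (Fin m1 ⊕ Fin m2)) (s0 : {x // x ∈ S}) =>
    chart_exists n D S s0.1 hD s0.2
  set P : MvPolynomial {v // v ∈ Vc n D} ℝ :=
    ∏ S : Finset (Fin m1 ⊕ Fin m2), ∏ s0 ∈ S.attach, Φc S s0 with hP
  have hPne : P ≠ 0 := by
    rw [hP]
    refine Finset.prod_ne_zero_iff.2 fun S _ =>
      Finset.prod_ne_zero_iff.2 fun s0 _ => hΦc0 S s0
  refine ⟨rename Subtype.val P, ?_, ?_⟩
  · -- witness
    obtain ⟨y, hy⟩ := exists_eval_ne_zero hPne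
    set y' : (Fin m1 ⊕ Fin m2) × (Fin n →₀ ℕ) → ℝ :=
      fun v => if hv : v ∈ Vc n D then y ⟨v, hv⟩ else 0 with hy'
    refine ⟨fun i => ∑ α ∈ mon n (d i), monomial α (y' (Sum.inl i, α)),
            fun j => ∑ α ∈ mon n (d' j), monomial α (y' (Sum.inr j, α)), ?_, ?_, ?_⟩
    · intro i
      refine le_trans (MvPolynomial.totalDegree_finset_sum _ _)
        (Finset.sup_le fun α hα => le_trans (MvPolynomial.totalDegree_monomial_le _ _) ?_)
      exact mem_mon.1 hα
    · intro j
      refine le_trans (MvPolynomial.totalDegree_finset_sum _ _)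
        (Finset.sup_le fun α hα => le_trans (MvPolynomial.totalDegree_monomial_le _ _) ?_)
      exact mem_mon.1 hα
    · rw [evalCoeffs, eval_rename]
      have hcf : ((fun v : (Fin m1 ⊕ Fin m2) × (Fin n →₀ ℕ) =>
          coeff v.2 (Sum.elim (fun i => ∑ α ∈ mon n (d i), monomial α (y' (Sum.inl i, α)))
            (fun j => ∑ α ∈ mon n (d' j), monomial α (y' (Sum.inr j, α))) v.1)) ∘ Subtype.val)
          = y := by
        funext v
        obtain ⟨⟨s, β⟩, hv⟩ := v
        have hβ : β ∈ mon n (D s) := (mem_Vc n D).1 hv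
        rcases s with i | j
        · show coeff β (∑ α ∈ mon n (d i), monomial α (y' (Sum.inl i, α))) = _
          rw [coeff_sum_monomial]
          rw [if_pos (show β ∈ mon n (d i) from hβ)]
          show (if hv' : (Sum.inl i, β) ∈ Vc n D then y ⟨(Sum.inl i, β), hv'⟩ else 0) = _
          exact dif_pos hv
        · show coeff β (∑ α ∈ mon n (d' j), monomial α (y' (Sum.inr j, α))) = _
          rw [coeff_sum_monomial]
          rw [if_pos (show β ∈ mon n (d' j) from hβ)]
          show (if hv' : (Sum.inr j, β) ∈ Vc n D then y ⟨(Sum.inr j, β), hv'⟩ else 0) = _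
          exact dif_pos hv
      rw [hcf]
      exact hy
  · -- main implication
    intro h g hdegh hdegg hΦ u hequ hgequ
    by_contra hLI
    set p : Fin m1 ⊕ Fin m2 → MvPolynomial (Fin n) ℝ := Sum.elim h g with hp
    have hdegp : ∀ s, (p s).totalDegree ≤ D s := by rintro (i | j); exacts [hdegh i, hdegg j]
    obtain ⟨c, hcsum, i0, hi0⟩ := Fintype.not_linearIndependent_iff.1 hLI
    set lam0 : Fin m1 ⊕ Fin m2 → ℝ := Sum.elim (fun i => c (Sum.inl i))
      (fun j => if hj : eval u (g j) = 0 then c (Sum.inr ⟨j, hj⟩) else 0) with hlam0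
    set s1 : Fin m1 ⊕ Fin m2 := Sum.map id Subtype.val i0 with hs1def
    have hs1 : lam0 s1 ≠ 0 := by
      rcases i0 with i | j
      · exact hi0
      · show (if hj : eval u (g j.1) = 0 then c (Sum.inr ⟨j.1, hj⟩) else 0) ≠ 0
        rw [dif_pos j.2]
        have : (⟨j.1, j.2⟩ : {j : Fin m2 // eval u (g j) = 0}) = j := Subtype.ext rfl
        rw [this]
        exact hi0
    set lam : Fin m1 ⊕ Fin m2 → ℝ := fun s => (lam0 s1)⁻¹ * lam0 s with hlam
    set S : Finset (Fin m1 ⊕ Fin m2) := Finset.univ.filter (fun s => lam0 s ≠ 0) with hS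
    have hs0S : s1 ∈ S := Finset.mem_filter.2 ⟨Finset.mem_univ _, hs1⟩
    have hlam1 : lam s1 = 1 := inv_mul_cancel₀ hs1
    have hzero : ∀ s ∈ S, eval u (p s) = 0 := by
      rintro (i | j) hs
      · exact hequ i
      · have h1 : lam0 (Sum.inr j) ≠ 0 := (Finset.mem_filter.1 hs).2
        by_cases hj : eval u (g j) = 0
        · exact hj
        · exact absurd (dif_neg hj) h1
    have hgrad0 : ∀ i, ∑ s : Fin m1 ⊕ Fin m2, lam0 s * eval u (pderiv i (p s)) = 0 := by
      intro i
      have hc1 := congrFun hcsum i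
      rw [Finset.sum_apply] at hc1
      simp only [Pi.smul_apply, smul_eq_mul] at hc1
      rw [Fintype.sum_sum_type] at hc1 ⊢
      rw [Pi.zero_apply] at hc1
      have hinl : ∑ a : Fin m1, lam0 (Sum.inl a) * eval u (pderiv i (p (Sum.inl a)))
          = ∑ a : Fin m1, c (Sum.inl a) * Sum.elim (fun i' : Fin m1 => gradAt (h i') u)
              (fun j : {j : Fin m2 // eval u (g j) = 0} => gradAt (g j.1) u) (Sum.inl a) i :=
        Finset.sum_congr rfl fun a _ => rfl
      have hinr : ∑ a : Fin m2, lam0 (Sum.inr a) * eval u (pderiv i (p (Sum.inr a)))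
          = ∑ b : {j : Fin m2 // eval u (g j) = 0},
              c (Sum.inr b) * Sum.elim (fun i' : Fin m1 => gradAt (h i') u)
                (fun j : {j : Fin m2 // eval u (g j) = 0} => gradAt (g j.1) u) (Sum.inr b) i := by
        calc ∑ a : Fin m2, lam0 (Sum.inr a) * eval u (pderiv i (p (Sum.inr a)))
            = ∑ a ∈ Finset.univ.filter (fun j : Fin m2 => eval u (g j) = 0),
                lam0 (Sum.inr a) * eval u (pderiv i (p (Sum.inr a))) := by
              refine (Finset.sum_filter_of_ne fun a _ hne => ?_).symm
              by_contra hj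
              exact hne (by rw [show lam0 (Sum.inr a) = 0 from dif_neg hj, zero_mul])
          _ = ∑ b : {j : Fin m2 // eval u (g j) = 0},
                lam0 (Sum.inr b.1) * eval u (pderiv i (p (Sum.inr b.1))) :=
              Finset.sum_subtype _ (fun j => by simp) _
          _ = ∑ b : {j : Fin m2 // eval u (g j) = 0},
                c (Sum.inr b) * Sum.elim (fun i' : Fin m1 => gradAt (h i') u)
                  (fun j : {j : Fin m2 // eval u (g j) = 0} => gradAt (g j.1) u) (Sum.inr b) i := by
              refine Finset.sum_congr rfl fun b _ => ?_
              have h1 : lam0 (Sum.inr b.1) = c (Sum.inr b) := by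
                show (if hj : eval u (g b.1) = 0 then c (Sum.inr ⟨b.1, hj⟩) else 0) = _
                rw [dif_pos b.2]
              rw [h1]
              rfl
      rw [hinl, hinr]
      exact hc1
    have hgrad : ∀ i, ∑ s ∈ S, lam s * eval u (pderiv i (p s)) = 0 := by
      intro i
      rw [hS]
      refine (Finset.sum_filter_of_ne fun s _ hne => ?_).trans ?_
      · intro hz
        exact hne (show (lam0 s1)⁻¹ * lam0 s * eval u (pderiv i (p s)) = 0 by
          rw [hz, mul_zero, zero_mul])
      calc ∑ s : Fin m1 ⊕ Fin m2, lam s * eval u (pderiv i (p s))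
          = (lam0 s1)⁻¹ * ∑ s : Fin m1 ⊕ Fin m2, lam0 s * eval u (pderiv i (p s)) := by
            rw [Finset.mul_sum]
            exact Finset.sum_congr rfl fun s _ => mul_assoc _ _ _
        _ = 0 := by rw [hgrad0 i, mul_zero]
    have hkey := eval_coefPoly_eq n D S s1 hD p hdegp u lam hs0S hlam1 hzero hgrad
    have hfac : eval ((fun v : (Fin m1 ⊕ Fin m2) × (Fin n →₀ ℕ) =>
        coeff v.2 (p v.1)) ∘ Subtype.val) (Φc S ⟨s1, hs0S⟩) = 0 := by
      have h2 : eval (xpt n D S s1 p u lam)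
          (aeval (fun v : {v // v ∈ Vc n D} => coefPoly n D S s1 v.1)
            (Φc S ⟨s1, hs0S⟩)) = 0 := by
        rw [hΦcann S ⟨s1, hs0S⟩, map_zero]
      rw [eval_comp_aeval] at h2
      have h3 : ((fun v : (Fin m1 ⊕ Fin m2) × (Fin n →₀ ℕ) =>
          coeff v.2 (p v.1)) ∘ Subtype.val)
          = fun v : {v // v ∈ Vc n D} => eval (xpt n D S s1 p u lam) (coefPoly n D S s1 v.1) := by
        funext v
        exact (hkey v.1 v.2).symm
      rw [h3]
      exact h2
    apply hΦ
    rw [evalCoeffs, eval_rename, hP, map_prod]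
    refine Finset.prod_eq_zero (Finset.mem_univ S) ?_
    rw [map_prod]
    exact Finset.prod_eq_zero (Finset.mem_attach S ⟨s1, hs0S⟩) hfac
end
end
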